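/- arXiv:1601.01715 — 5 statements merged into one kernel-verified Lean document; each statement's English description precedes it below -/
import Mathlib

section
/- Let A, B be n×n positive semidefinite complex matrices and 0 ≤ α ≤ 1. Then the largest eigenvalue satisfies λ₁(A^{α/2} B^α A^{α/2}) ≤ λ₁(A^{1/2} B A^{1/2})^α. -/
set_option maxHeartbeats 1000000
set_option synthInstance.maxHeartbeats 1000000



open Matrix Finset
open scoped ComplexOrder

/-- Functional calculus on a Hermitian matrix (junk value `0` if not Hermitian). -/
noncomputable def cfcH {n : ℕ} (f : ℝ → ℝ) (A : Matrix (Fin n) (Fin n) ℂ) :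
    Matrix (Fin n) (Fin n) ℂ :=
  if hA : A.IsHermitian then hA.cfc f else 0

/-- Real power of a (Hermitian) matrix via functional calculus. -/
noncomputable def mpow {n : ℕ} (A : Matrix (Fin n) (Fin n) ℂ) (p : ℝ) :
    Matrix (Fin n) (Fin n) ℂ :=
  cfcH (fun x : ℝ => x ^ p) A

/-- Eigenvalues of a Hermitian matrix arranged in decreasing order (junk `0` otherwise). -/
noncomputable def eigsDesc {n : ℕ} (A : Matrix (Fin n) (Fin n) ℂ) : Fin n → ℝ :=
  if hA : A.IsHermitian then fun i => (hA.eigenvalues ∘ Tuple.sort hA.eigenvalues) i.rev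
  else 0

/-- Operator norm of a matrix, acting on Euclidean space. -/
noncomputable def opNorm {n : ℕ} (A : Matrix (Fin n) (Fin n) ℂ) : ℝ :=
  ‖Matrix.toEuclideanCLM (𝕜 := ℂ) (n := Fin n) A‖

/-- Weighted geometric mean `A #_α B` for invertible `A`. -/
noncomputable def gmean {n : ℕ} (α : ℝ) (A B : Matrix (Fin n) (Fin n) ℂ) :
    Matrix (Fin n) (Fin n) ℂ :=
  mpow A (1/2) * cfcH (fun x : ℝ => x ^ α) (mpow A (-(1/2)) * B * mpow A (-(1/2))) * mpow A (1/2)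


open scoped NNReal

namespace ArakiAux

open CFC

variable {A : Type*} [CStarAlgebra A] [PartialOrder A] [StarOrderedRing A]

lemma rpow_add_of_nonneg (a : A) {x y : ℝ} (hx : 0 ≤ x) (hy : 0 ≤ y)
    (ha : 0 ≤ a) : a ^ (x + y) = a ^ x * a ^ y := by
  simp only [CFC.rpow_def]
  rw [← cfc_mul _ _ a]
  refine cfc_congr fun z _ => ?_
  rcases eq_or_ne (x + y) 0 with h | h
  · obtain ⟨rfl, rfl⟩ : x = 0 ∧ y = 0 := ⟨by linarith, by linarith⟩
    simp
  · exact NNReal.rpow_add' (x := z) h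

lemma isUnit_rpow {a : A} (hau : IsUnit a) (r : ℝ) (ha : 0 ≤ a) : IsUnit (a ^ r) :=
  ⟨⟨a ^ r, a ^ (-r), rpow_mul_rpow_neg r (hau.isStrictlyPositive ha),
    rpow_neg_mul_rpow r (hau.isStrictlyPositive ha)⟩, rfl⟩

lemma norm_rpow_le [Nontrivial A] (a : A) (ha : 0 ≤ a) {r : ℝ} (h0 : 0 ≤ r) (h1 : r ≤ 1) :
    ‖a ^ r‖ ≤ max 1 ‖a‖ := by
  have key : ‖a ^ r‖₊ ≤ max 1 ‖a‖₊ := by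
    rw [CFC.rpow_def]
    refine nnnorm_cfc_nnreal_le fun t ht => ?_
    have ht1 : (t : ℝ) ∈ spectrum ℝ a := by
      simpa using spectrum.algebraMap_mem ℝ ht
    have ht' : (t : ℝ) ≤ (‖a‖₊ : ℝ) := by
      exact (Real.le_norm_self _).trans (spectrum.norm_le_norm_of_mem ht1)
    have htm : t ≤ max 1 ‖a‖₊ := le_max_of_le_right (by exact_mod_cast ht')
    calc t ^ r ≤ (max 1 ‖a‖₊) ^ r := NNReal.rpow_le_rpow htm h0
      _ ≤ (max 1 ‖a‖₊) ^ (1 : ℝ) :=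
          NNReal.rpow_le_rpow_of_exponent_le (le_max_left _ _) h1
      _ = max 1 ‖a‖₊ := NNReal.rpow_one _
  calc ‖a ^ r‖ = ((‖a ^ r‖₊ : ℝ≥0) : ℝ) := rfl
    _ ≤ ((max 1 ‖a‖₊ : ℝ≥0) : ℝ) := by exact_mod_cast key
    _ = max 1 ‖a‖ := by
        rw [NNReal.coe_max]
        norm_num

lemma norm_aba (s t : A) (hs : IsSelfAdjoint s) (ht : IsSelfAdjoint t) :
    ‖s * (t * t) * s‖ = ‖t * (s * s) * t‖ := by
  have h1 : s * (t * t) * s = star (t * s) * (t * s) := by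
    rw [StarMul.star_mul, hs.star_eq, ht.star_eq]
    noncomm_ring
  have h2 : t * (s * s) * t = (t * s) * star (t * s) := by
    rw [StarMul.star_mul, hs.star_eq, ht.star_eq]
    noncomm_ring
  rw [h1, h2, CStarRing.norm_star_mul_self, CStarRing.norm_self_mul_star]

lemma mem_spectrum_swap {a b : A} {r : ℝ} (hr : r ≠ 0) (h : r ∈ spectrum ℝ (a * b)) :
    r ∈ spectrum ℝ (b * a) := by
  have h' : r ∈ spectrum ℝ (a * b) \ {0} := ⟨h, by simpa using hr⟩
  rw [spectrum.nonzero_mul_comm] at h'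
  exact h'.1

lemma le_rpow_iff_norm {x y : A} (hx : 0 ≤ x) (hy : 0 ≤ y) (hyu : IsUnit y)
    {θ : ℝ} (hθ : 0 < θ) :
    x ^ θ ≤ y ^ θ ↔ ‖x ^ (θ/2) * y ^ (-(θ/2))‖ ≤ 1 := by
  have h0 : (0 : ℝ≥0) ∉ spectrum ℝ≥0 y := spectrum.zero_notMem ℝ≥0 hyu
  have hyθ : IsUnit (y ^ θ) := isUnit_rpow hyu θ hy
  have hx' : ((θ.toNNReal : ℝ)) = θ := Real.coe_toNNReal θ hθ.le
  have e1 : CFC.sqrt (x ^ θ) = x ^ (θ/2) := by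
    have h := CFC.sqrt_rpow_nnreal (a := x) (x := θ.toNNReal)
    rw [hx'] at h
    exact h
  have e2 : (y ^ θ) ^ (-(1/2) : ℝ) = y ^ (-(θ/2)) := by
    rw [CFC.rpow_rpow y θ _ hθ.ne' (hyu.isStrictlyPositive hy)]
    congr 1
    ring
  rw [le_iff_norm_sqrt_mul_rpow _ _ rpow_nonneg (hyθ.isStrictlyPositive rpow_nonneg), e1, e2]


lemma midpoint_bound [Nontrivial A] {x y : A} (hx : 0 ≤ x) (hy : 0 ≤ y) (hyu : IsUnit y)
    {θ η γ : ℝ} (hθ : 0 ≤ θ) (hη : 0 ≤ η) (hγ : θ + η = 2 * γ) :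
    ‖x ^ (γ/2) * y ^ (-(γ/2))‖ ^ 2
      ≤ ‖x ^ (θ/2) * y ^ (-(θ/2))‖ * ‖x ^ (η/2) * y ^ (-(η/2))‖ := by
  have h0 : (0 : ℝ≥0) ∉ spectrum ℝ≥0 y := spectrum.zero_notMem ℝ≥0 hyu
  have hγ0 : 0 ≤ γ := by linarith
  have sax : ∀ r : ℝ, star (x ^ r) = x ^ r := fun r =>
    (IsSelfAdjoint.of_nonneg rpow_nonneg).star_eq
  have say : ∀ r : ℝ, star (y ^ r) = y ^ r := fun r =>
    (IsSelfAdjoint.of_nonneg rpow_nonneg).star_eq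
  set u := x ^ (γ/2) * y ^ (-(γ/2)) with hu
  have hxx : x ^ (γ/2) * x ^ (γ/2) = x ^ γ := by
    rw [← rpow_add_of_nonneg x (by linarith) (by linarith) hx]
    congr 1; ring
  have hstar : star u * u = y ^ (-(γ/2)) * x ^ γ * y ^ (-(γ/2)) := by
    rw [hu, StarMul.star_mul, sax, say, ← hxx]
    noncomm_ring
  have hN : ‖u‖ ^ 2 = ‖y ^ (-(γ/2)) * x ^ γ * y ^ (-(γ/2))‖ := by
    rw [← hstar, CStarRing.norm_star_mul_self, sq]
  have hcnn : 0 ≤ y ^ (-(γ/2)) * x ^ γ * y ^ (-(γ/2)) :=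
    conjugate_nonneg_of_nonneg rpow_nonneg rpow_nonneg
  rcases eq_or_ne ‖y ^ (-(γ/2)) * x ^ γ * y ^ (-(γ/2))‖ 0 with hc0 | hc0
  · rw [hN, hc0]
    exact mul_nonneg (norm_nonneg _) (norm_nonneg _)
  · set N := ‖y ^ (-(γ/2)) * x ^ γ * y ^ (-(γ/2))‖ with hNdef
    have hmem : N ∈ spectrum ℝ (y ^ (-(γ/2)) * x ^ γ * y ^ (-(γ/2))) :=
      CStarAlgebra.norm_mem_spectrum_of_nonneg hcnn
    have hyy : y ^ (-(γ/2)) * y ^ (-(γ/2)) = y ^ (-γ) := by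
      rw [← CFC.rpow_add hyu]
      congr 1; ring
    have hyy2 : y ^ (-(η/2)) * y ^ (-(θ/2)) = y ^ (-γ) := by
      rw [← CFC.rpow_add hyu]
      congr 1; linarith
    have hmem2 : N ∈ spectrum ℝ (x ^ γ * y ^ (-γ)) := by
      have h' : N ∈ spectrum ℝ (y ^ (-(γ/2)) * (x ^ γ * y ^ (-(γ/2)))) := by
        rwa [← mul_assoc]
      have := mem_spectrum_swap hc0 h'
      rwa [mul_assoc, hyy] at this
    have hmem3 : N ∈ spectrum ℝ (y ^ (-(θ/2)) * (x ^ γ * y ^ (-(η/2)))) := by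
      rw [← hyy2, ← mul_assoc] at hmem2
      exact mem_spectrum_swap hc0 hmem2
    have hNle : N ≤ ‖y ^ (-(θ/2)) * (x ^ γ * y ^ (-(η/2)))‖ :=
      (Real.le_norm_self _).trans (spectrum.norm_le_norm_of_mem hmem3)
    have hxγ : x ^ γ = x ^ (θ/2) * x ^ (η/2) := by
      rw [← rpow_add_of_nonneg x (by linarith) (by linarith) hx]
      congr 1; linarith
    have hsplit : y ^ (-(θ/2)) * (x ^ γ * y ^ (-(η/2)))
        = (y ^ (-(θ/2)) * x ^ (θ/2)) * (x ^ (η/2) * y ^ (-(η/2))) := by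
      rw [hxγ]; noncomm_ring
    have hfirst : ‖y ^ (-(θ/2)) * x ^ (θ/2)‖ = ‖x ^ (θ/2) * y ^ (-(θ/2))‖ := by
      rw [← norm_star, StarMul.star_mul, sax, say]
    calc ‖u‖ ^ 2 = N := hN
      _ ≤ ‖y ^ (-(θ/2)) * (x ^ γ * y ^ (-(η/2)))‖ := hNle
      _ ≤ ‖y ^ (-(θ/2)) * x ^ (θ/2)‖ * ‖x ^ (η/2) * y ^ (-(η/2))‖ := by
          rw [hsplit]; exact norm_mul_le _ _
      _ = ‖x ^ (θ/2) * y ^ (-(θ/2))‖ * ‖x ^ (η/2) * y ^ (-(η/2))‖ := by rw [hfirst]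

theorem loewner_heinz [Nontrivial A] {x y : A} (hx : 0 ≤ x) (hy : 0 ≤ y) (hyu : IsUnit y)
    (hxy : x ≤ y) {α : ℝ} (h0 : 0 ≤ α) (h1 : α ≤ 1) : x ^ α ≤ y ^ α := by
  rcases eq_or_lt_of_le h0 with rfl | h0'
  · rw [CFC.rpow_zero x hx, CFC.rpow_zero y hy]
  have hy0 : (0 : ℝ≥0) ∉ spectrum ℝ≥0 y := spectrum.zero_notMem ℝ≥0 hyu
  set m : ℝ → ℝ := fun θ => ‖x ^ (θ/2) * y ^ (-(θ/2))‖ with hm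
  have hm0 : m 0 = 1 := by
    show ‖x ^ ((0:ℝ)/2) * y ^ (-((0:ℝ)/2))‖ = 1
    norm_num
    rw [CFC.rpow_zero x hx, CFC.rpow_zero y hy, one_mul, norm_one]
  have hm1 : m 1 ≤ 1 := by
    have h := (le_rpow_iff_norm hx hy hyu one_pos).mp
      (by rwa [CFC.rpow_one x hx, CFC.rpow_one y hy])
    exact h
  set C : ℝ := (max 1 ‖x‖) * (max 1 ‖y ^ (-1 : ℝ)‖) with hC
  have hC1 : 1 ≤ C := by
    have h1' : (1:ℝ) ≤ max 1 ‖x‖ := le_max_left _ _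
    have h2' : (1:ℝ) ≤ max 1 ‖y ^ (-1 : ℝ)‖ := le_max_left _ _
    nlinarith
  have hCpos : (0:ℝ) < C := lt_of_lt_of_le one_pos hC1
  have hCdef : ∀ θ : ℝ, 0 ≤ θ → θ ≤ 1 → m θ ≤ C := by
    intro θ hθ0 hθ1
    have hb1 : ‖x ^ (θ/2)‖ ≤ max 1 ‖x‖ :=
      norm_rpow_le x hx (by linarith) (by linarith)
    have he : y ^ (-(θ/2)) = (y ^ (-1 : ℝ)) ^ (θ/2) := by
      rw [CFC.rpow_rpow y (-1) (θ/2) (by norm_num) (hyu.isStrictlyPositive hy)]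
      congr 1; ring
    have hb2 : ‖y ^ (-(θ/2))‖ ≤ max 1 ‖y ^ (-1 : ℝ)‖ := by
      rw [he]
      exact norm_rpow_le _ rpow_nonneg (by linarith) (by linarith)
    calc m θ ≤ ‖x ^ (θ/2)‖ * ‖y ^ (-(θ/2))‖ := norm_mul_le _ _
      _ ≤ C := mul_le_mul hb1 hb2 (norm_nonneg _) (le_trans zero_le_one (le_max_left _ _))
  have key : ∀ k : ℕ, ∀ θ : ℝ, 0 ≤ θ → θ ≤ 1 → m θ ≤ C ^ ((1/2 : ℝ) ^ k : ℝ) := by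
    intro k
    induction k with
    | zero =>
      intro θ hθ0 hθ1
      rw [pow_zero, Real.rpow_one]
      exact hCdef θ hθ0 hθ1
    | succ k ih =>
      intro θ hθ0 hθ1
      have hCrnn : (0:ℝ) ≤ C ^ ((1/2 : ℝ) ^ k : ℝ) := Real.rpow_nonneg hCpos.le _
      have main : m θ ^ 2 ≤ C ^ ((1/2 : ℝ) ^ k : ℝ) := by
        rcases le_or_gt θ (1/2) with hhalf | hhalf
        · have hmid := midpoint_bound hx hy hyu (le_refl (0:ℝ)) (by linarith : (0:ℝ) ≤ 2*θ)
            (by ring : (0:ℝ) + 2*θ = 2 * θ)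
          have hmid' : m θ ^ 2 ≤ m 0 * m (2*θ) := hmid
          rw [hm0, one_mul] at hmid'
          exact hmid'.trans (ih (2*θ) (by linarith) (by linarith))
        · have hmid := midpoint_bound hx hy hyu (by linarith : (0:ℝ) ≤ 2*θ - 1) zero_le_one
            (by ring : (2*θ - 1) + 1 = 2 * θ)
          have hmid' : m θ ^ 2 ≤ m (2*θ - 1) * m 1 := hmid
          calc m θ ^ 2 ≤ m (2*θ - 1) * m 1 := hmid'
            _ ≤ (C ^ ((1/2 : ℝ) ^ k : ℝ)) * 1 :=
                mul_le_mul (ih (2*θ-1) (by linarith) (by linarith)) hm1 (norm_nonneg _) hCrnn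
            _ = C ^ ((1/2 : ℝ) ^ k : ℝ) := mul_one _
      have hmθ : 0 ≤ m θ := norm_nonneg _
      have hrepr : m θ = (m θ ^ 2) ^ ((1:ℝ)/2) := by
        rw [← Real.rpow_natCast (m θ) 2, ← Real.rpow_mul hmθ]
        norm_num
      rw [hrepr]
      calc (m θ ^ 2) ^ ((1:ℝ)/2) ≤ (C ^ ((1/2 : ℝ) ^ k : ℝ)) ^ ((1:ℝ)/2) :=
            Real.rpow_le_rpow (sq_nonneg _) main (by norm_num)
        _ = C ^ ((1/2 : ℝ) ^ (k+1) : ℝ) := by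
            rw [← Real.rpow_mul hCpos.le, pow_succ]
  have hlim : Filter.Tendsto (fun k : ℕ => C ^ ((1/2 : ℝ) ^ k : ℝ)) Filter.atTop (nhds 1) := by
    have h2 : Filter.Tendsto (fun k : ℕ => ((1/2:ℝ)) ^ k) Filter.atTop (nhds 0) :=
      tendsto_pow_atTop_nhds_zero_of_lt_one (by norm_num) (by norm_num)
    have hc : ContinuousAt (fun t : ℝ => C ^ t) 0 :=
      Real.continuousAt_const_rpow hCpos.ne'
    have := hc.tendsto.comp h2
    simpa [Real.rpow_zero, Function.comp_def] using this
  have hmα : m α ≤ 1 :=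
    ge_of_tendsto hlim (Filter.Eventually.of_forall fun k => key k α h0 h1)
  exact (le_rpow_iff_norm hx hy hyu h0').mpr hmα


lemma algebraMap_sa (r : ℝ) : star (algebraMap ℝ A r) = algebraMap ℝ A r := by
  rw [← algebraMap_star_comm, star_trivial]

lemma conj_algebraMap_sqrt (r : ℝ) (hr : 0 ≤ r) (w : A) :
    algebraMap ℝ A (Real.sqrt r) * w * algebraMap ℝ A (Real.sqrt r) = r • w := by
  calc algebraMap ℝ A (Real.sqrt r) * w * algebraMap ℝ A (Real.sqrt r)
      = w * algebraMap ℝ A (Real.sqrt r) * algebraMap ℝ A (Real.sqrt r) := by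
        rw [Algebra.commutes]
    _ = w * algebraMap ℝ A (Real.sqrt r * Real.sqrt r) := by rw [mul_assoc, ← _root_.map_mul]
    _ = w * algebraMap ℝ A r := by rw [Real.mul_self_sqrt hr]
    _ = r • w := by rw [← Algebra.commutes, ← Algebra.smul_def]

lemma smul_le_smul_cstar {u v : A} (h : u ≤ v) {r : ℝ} (hr : 0 ≤ r) : r • u ≤ r • v := by
  have key := star_left_conjugate_le_conjugate h (algebraMap ℝ A (Real.sqrt r))
  rw [algebraMap_sa, conj_algebraMap_sqrt r hr, conj_algebraMap_sqrt r hr] at key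
  exact key

lemma algebraMap_nonneg' {r : ℝ} (hr : 0 ≤ r) : (0:A) ≤ algebraMap ℝ A r := by
  calc (0:A) ≤ star (algebraMap ℝ A (Real.sqrt r)) * algebraMap ℝ A (Real.sqrt r) :=
        star_mul_self_nonneg _
    _ = algebraMap ℝ A r := by
        rw [algebraMap_sa, ← _root_.map_mul, Real.mul_self_sqrt hr]

lemma rpow_real_smul (r : ℝ≥0) (b : A) (hb : 0 ≤ b) (α : ℝ) (hα : 0 < α) :
    ((r : ℝ) • b) ^ α = ((r ^ α : ℝ≥0) : ℝ) • b ^ α := by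
  have h1 : (r : ℝ) • b = r • b := (NNReal.smul_def r b).symm
  have h2 : ((r ^ α : ℝ≥0) : ℝ) • (b ^ α) = (r ^ α : ℝ≥0) • (b ^ α) :=
    (NNReal.smul_def _ _).symm
  rw [h1, h2]
  simp only [CFC.rpow_def]
  have hcont : ContinuousOn (fun t : ℝ≥0 => t ^ α) ((r • ·) '' spectrum ℝ≥0 b) :=
    (NNReal.continuous_rpow_const hα.le).continuousOn
  have hcs := cfc_comp_smul r (fun t : ℝ≥0 => t ^ α) b hcont hb
  rw [← hcs]
  have hsm := cfc_smul (R := ℝ≥0) (r ^ α : ℝ≥0) (fun t : ℝ≥0 => t ^ α) b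
    ((NNReal.continuous_rpow_const hα.le).continuousOn)
  rw [← hsm]
  refine cfc_congr fun t _ => ?_
  simp only [smul_eq_mul]
  exact NNReal.mul_rpow

lemma araki_unit [Nontrivial A] (a b : A) (ha : 0 ≤ a) (hb : 0 ≤ b) (hau : IsUnit a)
    {α : ℝ} (h0 : 0 < α) (h1 : α ≤ 1) :
    ‖a ^ (α/2) * b ^ α * a ^ (α/2)‖ ≤ ‖a ^ (1/2 : ℝ) * b * a ^ (1/2 : ℝ)‖ ^ α := by
  have ha0 : (0 : ℝ≥0) ∉ spectrum ℝ≥0 a := spectrum.zero_notMem ℝ≥0 hau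
  have sax : ∀ r : ℝ, star (a ^ r) = a ^ r := fun r =>
    (IsSelfAdjoint.of_nonneg rpow_nonneg).star_eq
  have hinv1 : a ^ (-(1/2) : ℝ) * a ^ ((1/2) : ℝ) = 1 := rpow_neg_mul_rpow _ (hau.isStrictlyPositive ha)
  have hinv2 : a ^ ((1/2) : ℝ) * a ^ (-(1/2) : ℝ) = 1 := rpow_mul_rpow_neg _ (hau.isStrictlyPositive ha)
  set z := a ^ (1/2 : ℝ) * b * a ^ (1/2 : ℝ) with hz
  have hznn : 0 ≤ z := by
    rw [hz]
    nth_rewrite 1 [← sax (1/2)]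
    exact star_left_conjugate_nonneg hb _
  have hconj : a ^ (-(1/2) : ℝ) * z * a ^ (-(1/2) : ℝ) = b := by
    rw [hz]
    calc a ^ (-(1/2):ℝ) * (a ^ ((1/2):ℝ) * b * a ^ ((1/2):ℝ)) * a ^ (-(1/2):ℝ)
        = (a ^ (-(1/2):ℝ) * a ^ ((1/2):ℝ)) * b * (a ^ ((1/2):ℝ) * a ^ (-(1/2):ℝ)) := by
          noncomm_ring
      _ = b := by rw [hinv1, hinv2, one_mul, mul_one]
  rcases eq_or_ne ‖z‖ 0 with hK0 | hK0
  · have hz0 : z = 0 := norm_eq_zero.mp hK0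
    have hb0 : b = 0 := by rw [← hconj, hz0, mul_zero, zero_mul]
    have h00 : (0:A) ^ α = 0 := CFC.zero_rpow h0.ne'
    rw [hb0, h00, mul_zero, zero_mul, norm_zero, hK0, Real.zero_rpow h0.ne']

  · have hKpos : 0 < ‖z‖ := (norm_nonneg z).lt_of_ne' hK0
    set κ : ℝ≥0 := ‖z‖₊ with hκ
    have hκco : (κ : ℝ) = ‖z‖ := rfl
    have hκpos : 0 < κ := by
      rw [← NNReal.coe_pos, hκco]; exact hKpos
    have hzle : z ≤ algebraMap ℝ A ‖z‖ :=
      (CStarAlgebra.norm_le_iff_le_algebraMap z (norm_nonneg z) hznn).mp le_rfl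
    have haa : a ^ (-(1/2):ℝ) * a ^ (-(1/2):ℝ) = a ^ (-1 : ℝ) := by
      rw [← CFC.rpow_add hau]; congr 1; ring
    have hble : b ≤ ‖z‖ • a ^ (-1 : ℝ) := by
      have h' := star_left_conjugate_le_conjugate hzle (a ^ (-(1/2) : ℝ))
      rw [sax, hconj] at h'
      calc b ≤ a ^ (-(1/2):ℝ) * algebraMap ℝ A ‖z‖ * a ^ (-(1/2):ℝ) := h'
        _ = ‖z‖ • a ^ (-1 : ℝ) := by
            rw [mul_assoc, Algebra.commutes, ← mul_assoc, haa, ← Algebra.commutes,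
              ← Algebra.smul_def]
    have hb1le : ((κ⁻¹ : ℝ≥0) : ℝ) • b ≤ a ^ (-1 : ℝ) := by
      have h' := smul_le_smul_cstar hble (by positivity : (0:ℝ) ≤ ((κ⁻¹ : ℝ≥0) : ℝ))
      have hone : ((κ⁻¹ : ℝ≥0) : ℝ) * ‖z‖ = 1 := by
        rw [NNReal.coe_inv, hκco]
        field_simp
      rwa [smul_smul, hone, one_smul] at h'
    have hb1nn : 0 ≤ ((κ⁻¹ : ℝ≥0) : ℝ) • b := by
      have h'' := smul_le_smul_cstar hb (by positivity : (0:ℝ) ≤ ((κ⁻¹ : ℝ≥0) : ℝ))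
      simpa using h''
    have hyunit : IsUnit (a ^ (-1 : ℝ)) := isUnit_rpow hau (-1) ha
    have hLH := loewner_heinz hb1nn rpow_nonneg hyunit hb1le h0.le h1
    have hrr : (a ^ (-1 : ℝ)) ^ α = a ^ (-α) := by
      rw [CFC.rpow_rpow a (-1) α (by norm_num) (hau.isStrictlyPositive ha)]
      congr 1; ring
    have hsm : (((κ⁻¹ : ℝ≥0) : ℝ) • b) ^ α = ((κ⁻¹ ^ α : ℝ≥0) : ℝ) • b ^ α :=
      rpow_real_smul κ⁻¹ b hb α h0
    rw [hsm, hrr] at hLH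
    have hconj2 := star_left_conjugate_le_conjugate hLH (a ^ (α/2))
    rw [sax] at hconj2
    have hRHS : a ^ (α/2) * a ^ (-α) * a ^ (α/2) = 1 := by
      rw [← CFC.rpow_add hau, ← CFC.rpow_add hau]
      have hexp : α/2 + -α + α/2 = 0 := by ring
      rw [hexp]
      exact CFC.rpow_zero a ha
    have hmid : a ^ (α/2) * (((κ⁻¹ ^ α : ℝ≥0) : ℝ) • b ^ α) * a ^ (α/2)
        = ((κ⁻¹ ^ α : ℝ≥0) : ℝ) • (a ^ (α/2) * b ^ α * a ^ (α/2)) := by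
      rw [mul_smul_comm, smul_mul_assoc]
    rw [hmid, hRHS] at hconj2
    have hwnn0 : 0 ≤ a ^ (α/2) * b ^ α * a ^ (α/2) := by
      nth_rewrite 1 [← sax (α/2)]
      exact star_left_conjugate_nonneg rpow_nonneg _
    have hwnn : 0 ≤ ((κ⁻¹ ^ α : ℝ≥0) : ℝ) • (a ^ (α/2) * b ^ α * a ^ (α/2)) := by
      have h3 := smul_le_smul_cstar hwnn0 (by positivity : (0:ℝ) ≤ ((κ⁻¹ ^ α : ℝ≥0) : ℝ))
      simpa using h3
    have hnorm := (CStarAlgebra.norm_le_one_iff_of_nonneg _ hwnn).mpr hconj2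
    rw [norm_smul] at hnorm
    have hcoef : ((κ⁻¹ ^ α : ℝ≥0) : ℝ) = (‖z‖ ^ α)⁻¹ := by
      rw [NNReal.coe_rpow, NNReal.coe_inv, hκco, Real.inv_rpow (norm_nonneg z)]
    rw [hcoef, Real.norm_eq_abs, _root_.abs_of_nonneg (by positivity)] at hnorm
    have hKα : 0 < ‖z‖ ^ α := Real.rpow_pos_of_pos hKpos α
    calc ‖a ^ (α/2) * b ^ α * a ^ (α/2)‖
        = ‖z‖ ^ α * ((‖z‖ ^ α)⁻¹ * ‖a ^ (α/2) * b ^ α * a ^ (α/2)‖) := by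
          field_simp
      _ ≤ ‖z‖ ^ α * 1 := mul_le_mul_of_nonneg_left hnorm hKα.le
      _ = ‖z‖ ^ α := mul_one _


lemma rpow_half_mul_self {a : A} (ha : 0 ≤ a) {r : ℝ} (hr : 0 ≤ r) :
    a ^ (r/2) * a ^ (r/2) = a ^ r := by
  rw [← rpow_add_of_nonneg a (by linarith) (by linarith) ha]
  congr 1; ring

lemma norm_conj_swap (p q : A) (hp : 0 ≤ p) (hq : 0 ≤ q) (r s : ℝ) (hr : 0 ≤ r) (hs : 0 ≤ s) :
    ‖p ^ (r/2) * q ^ s * p ^ (r/2)‖ = ‖q ^ (s/2) * p ^ r * q ^ (s/2)‖ := by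
  rw [← rpow_half_mul_self hq hs, ← rpow_half_mul_self hp hr]
  exact norm_aba _ _ (.of_nonneg rpow_nonneg) (.of_nonneg rpow_nonneg)

theorem araki_norm [Nontrivial A] (a b : A) (ha : 0 ≤ a) (hb : 0 ≤ b)
    {α : ℝ} (h0 : 0 ≤ α) (h1 : α ≤ 1) :
    ‖a ^ (α/2) * b ^ α * a ^ (α/2)‖ ≤ ‖a ^ (1/2 : ℝ) * b * a ^ (1/2 : ℝ)‖ ^ α := by
  rcases eq_or_lt_of_le h0 with rfl | hα
  · have e0 : (0:ℝ)/2 = 0 := by norm_num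
    rw [e0, CFC.rpow_zero a ha, CFC.rpow_zero b hb, Real.rpow_zero, one_mul, mul_one, norm_one]
  have sax : ∀ c : A, ∀ r : ℝ, star (c ^ r) = c ^ r := fun c r =>
    (IsSelfAdjoint.of_nonneg rpow_nonneg).star_eq
  set K := ‖a ^ (1/2 : ℝ) * b * a ^ (1/2 : ℝ)‖ with hK
  have swK : K = ‖b ^ (1/2 : ℝ) * a * b ^ (1/2 : ℝ)‖ := by
    have h := norm_conj_swap a b ha hb 1 1 zero_le_one zero_le_one
    rwa [CFC.rpow_one b hb, CFC.rpow_one a ha] at h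
  have lemA : ∀ ε : ℝ, 0 < ε → ‖a ^ (α/2) * b ^ α * a ^ (α/2)‖ ≤ (K + ε * ‖b‖) ^ α := by
    intro ε hε
    set c := algebraMap ℝ A ε with hc
    have hcnn : (0:A) ≤ c := algebraMap_nonneg' hε.le
    set aε := a + c with haε
    have haεnn : 0 ≤ aε := add_nonneg ha hcnn
    have hcu : IsUnit c := (algebraMap ℝ A).isUnit_map (isUnit_iff_ne_zero.mpr hε.ne')
    have hunit : IsUnit aε := CStarAlgebra.isUnit_of_le c (le_add_of_nonneg_left ha) (hcu.isStrictlyPositive hcnn)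
    have hle : a ≤ aε := le_add_of_nonneg_right hcnn
    have ppow : a ^ α ≤ aε ^ α := loewner_heinz ha haεnn hunit hle h0 h1
    have sw1 : ‖a ^ (α/2) * b ^ α * a ^ (α/2)‖ = ‖b ^ (α/2) * a ^ α * b ^ (α/2)‖ :=
      norm_conj_swap a b ha hb α α h0 h0
    have st1 : b ^ (α/2) * a ^ α * b ^ (α/2) ≤ b ^ (α/2) * aε ^ α * b ^ (α/2) := by
      have h' := star_left_conjugate_le_conjugate ppow (b ^ (α/2))
      rwa [sax] at h'
    have hnn1 : 0 ≤ b ^ (α/2) * a ^ α * b ^ (α/2) := by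
      nth_rewrite 1 [← sax b (α/2)]
      exact star_left_conjugate_nonneg rpow_nonneg _
    have sw2 : ‖b ^ (α/2) * aε ^ α * b ^ (α/2)‖ = ‖aε ^ (α/2) * b ^ α * aε ^ (α/2)‖ :=
      norm_conj_swap b aε hb haεnn α α h0 h0
    have step2 : ‖aε ^ (α/2) * b ^ α * aε ^ (α/2)‖
        ≤ ‖aε ^ (1/2 : ℝ) * b * aε ^ (1/2 : ℝ)‖ ^ α :=
      araki_unit aε b haεnn hb hunit hα h1
    have sw3 : ‖aε ^ (1/2 : ℝ) * b * aε ^ (1/2 : ℝ)‖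
        = ‖b ^ (1/2 : ℝ) * aε * b ^ (1/2 : ℝ)‖ := by
      have h := norm_conj_swap aε b haεnn hb 1 1 zero_le_one zero_le_one
      rwa [CFC.rpow_one b hb, CFC.rpow_one aε haεnn] at h
    have expand : b ^ (1/2 : ℝ) * aε * b ^ (1/2 : ℝ)
        = b ^ (1/2 : ℝ) * a * b ^ (1/2 : ℝ) + ε • b := by
      rw [haε, mul_add, add_mul]
      congr 1
      rw [hc, mul_assoc, Algebra.commutes, ← mul_assoc, rpow_half_mul_self hb (zero_le_one' ℝ),
        CFC.rpow_one b hb, ← Algebra.commutes, ← Algebra.smul_def]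
    have hnorm3 : ‖b ^ (1/2 : ℝ) * aε * b ^ (1/2 : ℝ)‖ ≤ K + ε * ‖b‖ := by
      rw [expand, swK]
      refine (norm_add_le _ _).trans ?_
      rw [norm_smul, Real.norm_eq_abs, abs_of_pos hε]
    calc ‖a ^ (α/2) * b ^ α * a ^ (α/2)‖
        = ‖b ^ (α/2) * a ^ α * b ^ (α/2)‖ := sw1
      _ ≤ ‖b ^ (α/2) * aε ^ α * b ^ (α/2)‖ :=
          CStarAlgebra.norm_le_norm_of_nonneg_of_le hnn1 st1
      _ = ‖aε ^ (α/2) * b ^ α * aε ^ (α/2)‖ := sw2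
      _ ≤ ‖aε ^ (1/2 : ℝ) * b * aε ^ (1/2 : ℝ)‖ ^ α := step2
      _ = ‖b ^ (1/2 : ℝ) * aε * b ^ (1/2 : ℝ)‖ ^ α := by rw [sw3]
      _ ≤ (K + ε * ‖b‖) ^ α := Real.rpow_le_rpow (norm_nonneg _) hnorm3 h0
  have htend : Filter.Tendsto (fun ε : ℝ => (K + ε * ‖b‖) ^ α) (nhdsWithin 0 (Set.Ioi 0))
      (nhds (K ^ α)) := by
    have h₁ : Filter.Tendsto (fun ε : ℝ => K + ε * ‖b‖) (nhdsWithin 0 (Set.Ioi 0)) (nhds K) := by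
      have h₂ : Filter.Tendsto (fun ε : ℝ => K + ε * ‖b‖) (nhds 0) (nhds K) := by
        have := ((continuous_const (y := K)).add
          (continuous_id.mul (continuous_const (y := ‖b‖)))).tendsto 0
        have h3 : Filter.Tendsto (fun ε : ℝ => K + ε * ‖b‖) (nhds 0) (nhds (K + 0 * ‖b‖)) := this
        rwa [zero_mul, add_zero] at h3
      exact h₂.mono_left nhdsWithin_le_nhds
    exact ((Real.continuousAt_rpow_const K α (Or.inr h0)).tendsto).comp h₁
  exact ge_of_tendsto htend (eventually_nhdsWithin_of_forall fun ε hε => lemA ε hε)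

end ArakiAux

section MatrixBridge

open ArakiAux

variable {n : ℕ}

local notation "Φ" => Matrix.toEuclideanCLM (𝕜 := ℂ) (n := Fin n)

lemma nontrivial_clm (hn : 0 < n) :
    Nontrivial (EuclideanSpace ℂ (Fin n) →L[ℂ] EuclideanSpace ℂ (Fin n)) := by
  haveI : Nonempty (Fin n) := ⟨⟨0, hn⟩⟩
  obtain ⟨v, hv⟩ := exists_ne (0 : EuclideanSpace ℂ (Fin n))
  refine ⟨0, 1, fun h => hv ?_⟩
  have := DFunLike.congr_fun h v
  simpa using this.symm

lemma continuous_phi :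
    Continuous (Φ : Matrix (Fin n) (Fin n) ℂ → _) := by
  let f : Matrix (Fin n) (Fin n) ℂ →ₗ[ℂ]
      (EuclideanSpace ℂ (Fin n) →L[ℂ] EuclideanSpace ℂ (Fin n)) :=
    { toFun := fun M => Φ M
      map_add' := fun u v => map_add _ u v
      map_smul' := fun c u => map_smul _ c u }
  exact LinearMap.continuous_of_finiteDimensional f

lemma phi_selfAdjoint {M : Matrix (Fin n) (Fin n) ℂ} (hM : M.IsHermitian) :
    IsSelfAdjoint (Φ M) := by
  show star (Φ M) = Φ M
  rw [← map_star]
  exact congrArg _ hM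

lemma map_cfcH (M : Matrix (Fin n) (Fin n) ℂ) (hM : M.IsHermitian) (f : ℝ → ℝ) :
    Φ (cfcH f M) = cfc f (Φ M) := by
  rw [cfcH, dif_pos hM, ← hM.cfc_eq]
  exact StarAlgHomClass.map_cfc (S := ℂ) Φ f M
    (Matrix.finite_real_spectrum.continuousOn f)
    continuous_phi hM (phi_selfAdjoint hM)

lemma spectrum_phi (M : Matrix (Fin n) (Fin n) ℂ) :
    spectrum ℝ (Φ M) = spectrum ℝ M := by
  rw [← spectrum.preimage_algebraMap (S := ℂ) (a := Φ M),
    ← spectrum.preimage_algebraMap (S := ℂ) (a := M),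
    AlgEquiv.spectrum_eq Φ M]

lemma psd_iff_nonneg (M : Matrix (Fin n) (Fin n) ℂ) :
    M.PosSemidef ↔ 0 ≤ Φ M := by
  rw [nonneg_iff_isSelfAdjoint_and_quasispectrumRestricts, quasispectrumRestricts_iff_spectrumRestricts,
    SpectrumRestricts.nnreal_iff]
  constructor
  · intro h
    refine ⟨phi_selfAdjoint h.1, fun t ht => ?_⟩
    rw [spectrum_phi, h.1.spectrum_real_eq_range_eigenvalues] at ht
    obtain ⟨i, rfl⟩ := ht
    exact h.eigenvalues_nonneg i
  · rintro ⟨h1, h2⟩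
    have hM : M.IsHermitian := by
      have hst : star M = M := by
        have h1' : star (Φ M) = Φ M := h1
        rw [← map_star] at h1'
        exact (EmbeddingLike.apply_eq_iff_eq Φ).mp h1'
      exact hst
    refine hM.posSemidef_iff_eigenvalues_nonneg.mpr fun i => ?_
    refine h2 _ ?_
    rw [spectrum_phi, hM.spectrum_real_eq_range_eigenvalues]
    exact Set.mem_range_self i

lemma map_mpow (M : Matrix (Fin n) (Fin n) ℂ) (hM : M.PosSemidef) (p : ℝ) :
    Φ (mpow M p) = (Φ M) ^ p := by
  rw [mpow, map_cfcH M hM.1]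
  have hnn : 0 ≤ Φ M := (psd_iff_nonneg M).mp hM
  rw [CFC.rpow_def, cfc_nnreal_eq_real _ _ hnn]
  refine (cfc_congr fun t ht => ?_).symm
  have ht0 : 0 ≤ t := spectrum_nonneg_of_nonneg hnn ht
  rw [NNReal.coe_rpow, Real.coe_toNNReal t ht0]

lemma eigsDesc_top_eq_norm (hn : 0 < n) (M : Matrix (Fin n) (Fin n) ℂ) (hM : M.PosSemidef) :
    eigsDesc M ⟨0, hn⟩ = ‖Φ M‖ := by
  haveI := nontrivial_clm hn
  rw [eigsDesc, dif_pos hM.1]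
  have hspec : spectrum ℝ (Φ M) = Set.range hM.1.eigenvalues := by
    rw [spectrum_phi]
    exact hM.1.spectrum_real_eq_range_eigenvalues
  apply le_antisymm
  · have hmem : (hM.1.eigenvalues ∘ Tuple.sort hM.1.eigenvalues) (Fin.rev ⟨0, hn⟩)
        ∈ spectrum ℝ (Φ M) := by
      rw [hspec]
      exact Set.mem_range_self _
    exact (Real.le_norm_self _).trans (spectrum.norm_le_norm_of_mem hmem)
  · have hnn : 0 ≤ Φ M := (psd_iff_nonneg M).mp hM
    obtain ⟨i, hi⟩ : ‖Φ M‖ ∈ Set.range hM.1.eigenvalues := by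
      rw [← hspec]
      exact CStarAlgebra.norm_mem_spectrum_of_nonneg hnn
    rw [← hi]
    have hrepr : hM.1.eigenvalues i = (hM.1.eigenvalues ∘ Tuple.sort hM.1.eigenvalues)
        ((Tuple.sort hM.1.eigenvalues)⁻¹ i) := by
      simp [Function.comp_apply]
    rw [hrepr]
    refine Tuple.monotone_sort hM.1.eigenvalues ?_
    rw [Fin.le_def]
    have : (Fin.rev (⟨0, hn⟩ : Fin n)).val = n - 1 := by
      simp [Fin.rev]
    rw [this]
    exact Nat.le_pred_of_lt (((Tuple.sort hM.1.eigenvalues)⁻¹ i).isLt)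

end MatrixBridge

/-- Araki's log-majorization, top eigenvalue case:
`λ₁(A^{α/2} B^α A^{α/2}) ≤ λ₁(A^{1/2} B A^{1/2})^α` for `0 ≤ α ≤ 1`. -/
theorem araki_top_eigenvalue {n : ℕ} (hn : 0 < n)
    (A B : Matrix (Fin n) (Fin n) ℂ) (hA : A.PosSemidef) (hB : B.PosSemidef)
    (α : ℝ) (hα0 : 0 ≤ α) (hα1 : α ≤ 1) :
    eigsDesc (mpow A (α/2) * mpow B α * mpow A (α/2)) ⟨0, hn⟩ ≤
      (eigsDesc (mpow A (1/2) * B * mpow A (1/2)) ⟨0, hn⟩) ^ α := by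
  haveI := nontrivial_clm hn
  have hx : 0 ≤ Matrix.toEuclideanCLM (𝕜 := ℂ) (n := Fin n) A := (psd_iff_nonneg A).mp hA
  have hy : 0 ≤ Matrix.toEuclideanCLM (𝕜 := ℂ) (n := Fin n) B := (psd_iff_nonneg B).mp hB
  have hsa : ∀ r : ℝ,
      star ((Matrix.toEuclideanCLM (𝕜 := ℂ) (n := Fin n) A) ^ r)
        = (Matrix.toEuclideanCLM (𝕜 := ℂ) (n := Fin n) A) ^ r := fun r =>
    IsSelfAdjoint.star_eq (IsSelfAdjoint.of_nonneg
      (CFC.rpow_nonneg (a := Matrix.toEuclideanCLM (𝕜 := ℂ) (n := Fin n) A) (y := r)))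
  have hM₁ : (mpow A (α/2) * mpow B α * mpow A (α/2)).PosSemidef := by
    rw [psd_iff_nonneg, _root_.map_mul, _root_.map_mul, map_mpow A hA, map_mpow B hB]
    nth_rewrite 1 [← hsa (α/2)]
    exact star_left_conjugate_nonneg CFC.rpow_nonneg _
  have hM₂ : (mpow A (1/2) * B * mpow A (1/2)).PosSemidef := by
    rw [psd_iff_nonneg, _root_.map_mul, _root_.map_mul, map_mpow A hA]
    nth_rewrite 1 [← hsa (1/2)]
    exact star_left_conjugate_nonneg hy _
  rw [eigsDesc_top_eq_norm hn _ hM₁, eigsDesc_top_eq_norm hn _ hM₂,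
    _root_.map_mul, _root_.map_mul, map_mpow A hA, map_mpow B hB,
    _root_.map_mul, _root_.map_mul, map_mpow A hA]
  exact ArakiAux.araki_norm _ _ hx hy hα0 hα1
end

section
/- Let Φ : M_n → M_l and Ψ : M_m → M_l be positive linear maps with Φ(I_n)^{1/2} Ψ(I_m) Φ(I_n)^{1/2} ≤ I_l. If A ∈ M_n⁺ and B ∈ M_m⁺ satisfy Φ(A)^{1/2} Ψ(B) Φ(A)^{1/2} ≤ I_l, then for every 0 ≤ α ≤ 1, Φ(A^α)^{1/2} Ψ(B^α) Φ(A^α)^{1/2} ≤ I_l. -/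
open Matrix Finset
open scoped ComplexOrder

set_option maxHeartbeats 1600000

namespace PowerContraction

abbrev MM (k : ℕ) := Matrix (Fin k) (Fin k) ℂ

structure IsRep {k : ℕ} (U : MM k) (d : Fin k → ℝ) (A : MM k) : Prop where
  hUU : U * Uᴴ = 1
  hUU' : Uᴴ * U = 1
  eq : A = U * Matrix.diagonal (fun i => (d i : ℂ)) * Uᴴ

variable {k : ℕ} {U A B : MM k} {d e : Fin k → ℝ}

lemma diag_herm (v : Fin k → ℝ) :
    (Matrix.diagonal (fun i => (v i : ℂ))).IsHermitian := by
  rw [Matrix.IsHermitian, Matrix.diagonal_conjTranspose]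
  congr 1
  funext i
  simp [Pi.star_def]

lemma diag_const (c : ℂ) :
    Matrix.diagonal (fun _ : Fin k => c) = c • (1 : MM k) := by
  ext i j
  by_cases h : i = j <;> simp [Matrix.diagonal_apply, Matrix.one_apply, h]

lemma IsRep.isHermitian (h : IsRep U d A) : A.IsHermitian := by
  rw [h.eq, Matrix.IsHermitian, Matrix.conjTranspose_mul, Matrix.conjTranspose_mul,
    Matrix.conjTranspose_conjTranspose, (diag_herm d), Matrix.mul_assoc]

lemma IsRep.posSemidef (h : IsRep U d A) (hd : ∀ i, 0 ≤ d i) : A.PosSemidef := by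
  rw [h.eq]
  refine Matrix.PosSemidef.mul_mul_conjTranspose_same ?_ U
  exact Matrix.posSemidef_diagonal_iff.mpr fun i => Complex.zero_le_real.mpr (hd i)

lemma IsRep.posDef (h : IsRep U d A) (hd : ∀ i, 0 < d i) : A.PosDef := by
  have hdiag : (Matrix.diagonal (fun i => (d i : ℂ))).PosDef :=
    Matrix.posDef_diagonal_iff.mpr fun i => Complex.zero_lt_real.mpr (hd i)
  refine .of_dotProduct_mulVec_pos h.isHermitian ?_
  intro x hx
  have hx' : Uᴴ *ᵥ x ≠ 0 := by
    intro hc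
    apply hx
    have := congrArg (fun v => U *ᵥ v) hc
    simpa [Matrix.mulVec_mulVec, h.hUU] using this
  have := hdiag.dotProduct_mulVec_pos hx'
  rw [h.eq]
  simpa [Matrix.mulVec_mulVec, Matrix.dotProduct_mulVec, Matrix.star_mulVec,
    Matrix.mul_assoc, Matrix.vecMul_vecMul] using this

lemma IsRep.mul (h1 : IsRep U d A) (h2 : IsRep U e B) :
    IsRep U (fun i => d i * e i) (A * B) := by
  refine ⟨h1.hUU, h1.hUU', ?_⟩
  rw [h1.eq, h2.eq]
  have h3 : Uᴴ * (U * (Matrix.diagonal (fun i => (e i : ℂ)) * Uᴴ))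
      = Matrix.diagonal (fun i => (e i : ℂ)) * Uᴴ := by
    rw [← Matrix.mul_assoc, h1.hUU', Matrix.one_mul]
  simp only [Matrix.mul_assoc, h3]
  rw [← Matrix.mul_assoc (Matrix.diagonal _), Matrix.diagonal_mul_diagonal]
  have : (fun i => ((d i * e i : ℝ) : ℂ)) = fun i => (d i : ℂ) * (e i : ℂ) := by
    funext i; push_cast; rfl
  rw [this]

lemma isRep_one (h : IsRep U d A) : IsRep U (fun _ => (1:ℝ)) (1 : MM k) := by
  refine ⟨h.hUU, h.hUU', ?_⟩
  simp [h.hUU]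

lemma isRep_smul_one (h : IsRep U d A) (c : ℝ) :
    IsRep U (fun _ => c) ((c : ℂ) • (1 : MM k)) := by
  refine ⟨h.hUU, h.hUU', ?_⟩
  rw [diag_const]
  rw [Matrix.mul_smul, Matrix.smul_mul, Matrix.mul_one, h.hUU]

lemma IsRep.add (h1 : IsRep U d A) (h2 : IsRep U e B) :
    IsRep U (fun i => d i + e i) (A + B) := by
  refine ⟨h1.hUU, h1.hUU', ?_⟩
  have : Matrix.diagonal (fun i => ((d i + e i : ℝ) : ℂ))
      = Matrix.diagonal (fun i => (d i : ℂ)) + Matrix.diagonal (fun i => (e i : ℂ)) := by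
    rw [Matrix.diagonal_add]; congr 1; funext i; push_cast; rfl
  rw [h1.eq, h2.eq, this, Matrix.mul_add, Matrix.add_mul]

lemma IsRep.inv (h : IsRep U d A) (hd : ∀ i, d i ≠ 0) :
    IsRep U (fun i => (d i)⁻¹) A⁻¹ := by
  refine ⟨h.hUU, h.hUU', ?_⟩
  apply Matrix.inv_eq_left_inv
  rw [h.eq]
  have h3 : Uᴴ * (U * (Matrix.diagonal (fun i => (d i : ℂ)) * Uᴴ))
      = Matrix.diagonal (fun i => (d i : ℂ)) * Uᴴ := by
    rw [← Matrix.mul_assoc, h.hUU', Matrix.one_mul]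
  simp only [Matrix.mul_assoc, h3]
  rw [← Matrix.mul_assoc (Matrix.diagonal _), Matrix.diagonal_mul_diagonal]
  have : (fun i => (((d i)⁻¹ : ℝ) : ℂ) * ((d i : ℝ) : ℂ)) = fun _ => (1:ℂ) := by
    funext i
    push_cast
    rw [inv_mul_cancel₀ (Complex.ofReal_ne_zero.mpr (hd i))]
  rw [show (Matrix.diagonal fun i => (((d i)⁻¹ : ℝ) : ℂ) * ((d i : ℝ) : ℂ)) = (1 : MM k) by
    rw [this]; exact Matrix.diagonal_one]
  rw [Matrix.one_mul]; exact h.hUU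

lemma IsRep.trace_eq (h : IsRep U d A) : A.trace = ((∑ i, d i : ℝ) : ℂ) := by
  rw [h.eq, Matrix.trace_mul_cycle, h.hUU', Matrix.one_mul, Matrix.trace_diagonal]
  push_cast
  rfl

lemma aeval_conj (U V D : MM k) (hUV : U * V = 1) (hVU : V * U = 1) (p : Polynomial ℝ) :
    Polynomial.aeval (U * D * V) p = U * Polynomial.aeval D p * V := by
  have hpow : ∀ n : ℕ, (U * D * V) ^ n = U * D ^ n * V := by
    intro n
    induction n with
    | zero => simpa using hUV.symm
    | succ n ih =>
      rw [pow_succ, pow_succ, ih]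
      have h2 : V * (U * (D * V)) = D * V := by
        rw [← Matrix.mul_assoc, hVU, Matrix.one_mul]
      simp only [Matrix.mul_assoc, h2]
  induction p using Polynomial.induction_on' with
  | add p q hp hq => rw [map_add, map_add, hp, hq, Matrix.mul_add, Matrix.add_mul]
  | monomial n a =>
    rw [Polynomial.aeval_monomial, Polynomial.aeval_monomial, hpow]
    simp only [← Matrix.mul_assoc]
    rw [Algebra.commutes]

lemma aeval_diagonal (v : Fin k → ℝ) (p : Polynomial ℝ) :
    Polynomial.aeval (Matrix.diagonal (fun i => (v i : ℂ)) : MM k) p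
      = Matrix.diagonal (fun i => ((p.eval (v i) : ℝ) : ℂ)) := by
  induction p using Polynomial.induction_on' with
  | add p q hp hq =>
    rw [map_add, hp, hq, Matrix.diagonal_add]
    refine (Matrix.diagonal_eq_diagonal_iff).mpr fun i => ?_
    rw [Polynomial.eval_add]
    push_cast
    rfl
  | monomial n a =>
    rw [Polynomial.aeval_monomial, Matrix.diagonal_pow, Matrix.algebraMap_eq_diagonal,
      Matrix.diagonal_mul_diagonal]
    refine (Matrix.diagonal_eq_diagonal_iff).mpr fun i => ?_
    rw [Polynomial.eval_monomial]
    simp only [Pi.algebraMap_apply, Complex.coe_algebraMap, Pi.pow_apply]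
    push_cast
    ring



variable {k : ℕ} {U A B : MM k} {d e : Fin k → ℝ}

lemma isRep_self (hA : A.IsHermitian) :
    IsRep (hA.eigenvectorUnitary : MM k) hA.eigenvalues A := by
  refine ⟨?_, ?_, ?_⟩
  · rw [← Matrix.star_eq_conjTranspose]
    exact Unitary.mul_star_self_of_mem (SetLike.coe_mem _)
  · rw [← Matrix.star_eq_conjTranspose]
    exact Unitary.star_mul_self_of_mem (SetLike.coe_mem _)
  · conv_lhs => rw [hA.spectral_theorem]
    rw [← Matrix.star_eq_conjTranspose]
    rfl

/-- functional calculus computed through ANY unitary diagonalization -/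
theorem IsRep.cfcH_rep (h : IsRep U d A) (f : ℝ → ℝ) :
    IsRep U (fun i => f (d i)) (cfcH f A) := by
  refine ⟨h.hUU, h.hUU', ?_⟩
  have hherm := h.isHermitian
  rw [cfcH, dif_pos hherm]
  set W : MM k := (hherm.eigenvectorUnitary : MM k) with hW
  have hrepA := isRep_self hherm
  set ev := hherm.eigenvalues with hev
  classical
  set s : Finset ℝ := (Finset.univ.image d) ∪ (Finset.univ.image ev) with hs
  set p := Lagrange.interpolate s id f with hpdef
  have hp : ∀ x ∈ s, p.eval x = f x := by
    intro x hx
    exact Lagrange.eval_interpolate_at_node f (Set.injOn_id _) hx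
  have key : ∀ (V : MM k) (c : Fin k → ℝ), IsRep V c A → (∀ i, c i ∈ s) →
      Polynomial.aeval A p = V * Matrix.diagonal (fun i => ((f (c i) : ℝ) : ℂ)) * Vᴴ := by
    intro V c hrep hc
    conv_lhs => rw [hrep.eq]
    rw [aeval_conj _ _ _ hrep.hUU hrep.hUU', aeval_diagonal]
    congr 1
    refine congrArg (V * ·) ?_
    refine (Matrix.diagonal_eq_diagonal_iff).mpr fun i => ?_
    rw [hp _ (hc i)]
  have h1 := key U d h (fun i => by
    simp [hs])
  have h2 := key W ev hrepA (fun i => by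
    simp [hs])
  have h3 : hherm.cfc f
      = W * Matrix.diagonal (fun i => ((f (ev i) : ℝ) : ℂ)) * Wᴴ := by
    rw [Matrix.IsHermitian.cfc, ← Matrix.star_eq_conjTranspose]
    rfl
  rw [h3, ← h2, h1]

lemma psd_rep (hA : A.PosSemidef) :
    ∃ (U : MM k) (d : Fin k → ℝ), IsRep U d A ∧ ∀ i, 0 ≤ d i :=
  ⟨_, _, isRep_self hA.1, hA.eigenvalues_nonneg⟩

lemma posdef_rep (hA : A.PosDef) :
    ∃ (U : MM k) (d : Fin k → ℝ), IsRep U d A ∧ ∀ i, 0 < d i :=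
  ⟨_, _, isRep_self hA.1, hA.eigenvalues_pos⟩

lemma IsRep.mpow_rep (h : IsRep U d A) (p : ℝ) :
    IsRep U (fun i => d i ^ p) (mpow A p) := by
  unfold mpow
  exact h.cfcH_rep (fun x => x ^ p)



variable {M N X Y : MM k}

/-- Loewner order -/
def lee {k : ℕ} (X Y : MM k) : Prop := (Y - X).PosSemidef

lemma lee_refl (X : MM k) : lee X X := by simp [lee, Matrix.PosSemidef.zero]

lemma lee_trans (h1 : lee X Y) (h2 : lee Y M) : lee X M := by
  have := h1.add h2
  rw [lee]
  convert this using 1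
  abel

lemma lee_add (h1 : lee X Y) (h2 : lee M N) : lee (X + M) (Y + N) := by
  have := h1.add h2
  rw [lee]
  convert this using 1
  abel

lemma lee_conj (h : lee X Y) (M : MM k) : lee (M * X * Mᴴ) (M * Y * Mᴴ) := by
  have := h.mul_mul_conjTranspose_same M
  rw [lee]
  convert this using 1
  rw [Matrix.mul_sub, Matrix.sub_mul]

lemma psd_smul {c : ℝ} (hc : 0 ≤ c) (h : M.PosSemidef) : ((c:ℂ) • M).PosSemidef := by
  refine .of_dotProduct_mulVec_nonneg ?_ ?_
  · rw [Matrix.IsHermitian, Matrix.conjTranspose_smul, Complex.star_def, Complex.conj_ofReal, h.1]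
  · intro x
    rw [Matrix.smul_mulVec, dotProduct_smul]
    exact mul_nonneg (Complex.zero_le_real.mpr hc) (h.dotProduct_mulVec_nonneg x)

lemma lee_smul {c : ℝ} (hc : 0 ≤ c) (h : lee X Y) : lee ((c:ℂ) • X) ((c:ℂ) • Y) := by
  have := psd_smul hc h
  rw [lee]
  convert this using 1
  rw [smul_sub]

lemma herm_conj (hY : Y.IsHermitian) (hS : M.IsHermitian) : (M * Y * M).IsHermitian := by
  rw [Matrix.IsHermitian, Matrix.conjTranspose_mul, Matrix.conjTranspose_mul, hY, hS,
    Matrix.mul_assoc]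

/-- quadratic form value is self-adjoint for Hermitian matrices -/
lemma qf_star (hM : M.IsHermitian) (x : Fin k → ℂ) :
    star (star x ⬝ᵥ (M *ᵥ x)) = star x ⬝ᵥ (M *ᵥ x) := by
  calc star (star x ⬝ᵥ (M *ᵥ x)) = star (M *ᵥ x) ⬝ᵥ star (star x) := by
        rw [Matrix.star_dotProduct_star]
    _ = (star x ᵥ* Mᴴ) ⬝ᵥ x := by rw [Matrix.star_mulVec, star_star]
    _ = star x ⬝ᵥ (M *ᵥ x) := by rw [hM, ← Matrix.dotProduct_mulVec]

lemma psd_of_herm_re (hM : M.IsHermitian) (h : ∀ x, 0 ≤ (star x ⬝ᵥ (M *ᵥ x)).re) :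
    M.PosSemidef := by
  refine .of_dotProduct_mulVec_nonneg hM fun x => ?_
  have him : (star x ⬝ᵥ (M *ᵥ x)).im = 0 := by
    have := qf_star hM x
    rw [Complex.star_def] at this
    exact Complex.conj_eq_iff_im.mp this
  rw [Complex.le_def]
  exact ⟨by simpa using h x, by simpa using him.symm⟩

lemma qf_re_le (h : lee M N) (u : Fin k → ℂ) :
    (star u ⬝ᵥ (M *ᵥ u)).re ≤ (star u ⬝ᵥ (N *ᵥ u)).re := by
  have h2 := h.dotProduct_mulVec_nonneg u
  rw [Matrix.sub_mulVec, dotProduct_sub] at h2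
  have := (Complex.le_def.mp h2).1
  simpa using this

lemma lee_of_herm_re (hM : M.IsHermitian) (hN : N.IsHermitian)
    (h : ∀ u, (star u ⬝ᵥ (M *ᵥ u)).re ≤ (star u ⬝ᵥ (N *ᵥ u)).re) : lee M N := by
  refine psd_of_herm_re (hN.sub hM) fun x => ?_
  rw [Matrix.sub_mulVec, dotProduct_sub]
  simpa using sub_nonneg.mpr (h x)

/-- real squared norm of a complex vector -/
noncomputable def nsq (u : Fin k → ℂ) : ℝ := (star u ⬝ᵥ u).re

lemma nsq_nonneg (u : Fin k → ℂ) : 0 ≤ nsq u := by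
  unfold nsq
  rw [dotProduct]
  rw [Complex.re_sum]
  refine Finset.sum_nonneg fun i _ => ?_
  rw [Pi.star_apply, Complex.star_def, ← Complex.normSq_eq_conj_mul_self, Complex.ofReal_re]
  exact Complex.normSq_nonneg _

noncomputable def toE (v : Fin k → ℂ) : EuclideanSpace ℂ (Fin k) := (WithLp.equiv 2 _).symm v

lemma inner_toE (v w : Fin k → ℂ) : (inner ℂ (toE v) (toE w) : ℂ) = star v ⬝ᵥ w := by
  simp [toE, PiLp.inner_apply, RCLike.inner_apply, dotProduct, Pi.star_apply, mul_comm]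

lemma nsq_eq_norm (u : Fin k → ℂ) : nsq u = ‖toE u‖ ^ 2 := by
  have : (inner ℂ (toE u) (toE u) : ℂ) = (‖toE u‖ : ℂ) ^ 2 := inner_self_eq_norm_sq_to_K _
  rw [inner_toE] at this
  unfold nsq
  rw [this, ← Complex.ofReal_pow, Complex.ofReal_re]

lemma qf_conj_self (N : MM k) (u : Fin k → ℂ) :
    star u ⬝ᵥ ((Nᴴ * N) *ᵥ u) = star (N *ᵥ u) ⬝ᵥ (N *ᵥ u) := by
  rw [← Matrix.mulVec_mulVec, Matrix.dotProduct_mulVec, ← Matrix.star_mulVec]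



-- NEW material starts here
lemma IsRep.ext_funval (h1 : IsRep U d A) (h2 : IsRep U e B) (h : ∀ i, d i = e i) : A = B := by
  rw [h1.eq, h2.eq]
  congr 1
  refine congrArg (U * ·) ?_
  exact Matrix.diagonal_eq_diagonal_iff.mpr fun i => by rw [h i]

lemma sqrt_psd (hX : X.PosSemidef) : (mpow X (1/2)).PosSemidef := by
  obtain ⟨U, d, hrep, hd⟩ := psd_rep hX
  exact (hrep.mpow_rep _).posSemidef fun i => Real.rpow_nonneg (hd i) _

lemma sqrt_mul_self' (hX : X.PosSemidef) : mpow X (1/2) * mpow X (1/2) = X := by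
  obtain ⟨U, d, hrep, hd⟩ := psd_rep hX
  refine IsRep.ext_funval ((hrep.mpow_rep _).mul (hrep.mpow_rep _)) hrep fun i => ?_
  rw [← Real.rpow_add' (hd i) (by norm_num)]
  norm_num

lemma qf_smul_one_re (c : ℝ) (v : Fin k → ℂ) :
    (star v ⬝ᵥ ((((c:ℂ) • (1 : MM k))) *ᵥ v)).re = c * nsq v := by
  rw [Matrix.smul_mulVec, Matrix.one_mulVec, dotProduct_smul]
  simp [nsq, Complex.mul_re, Complex.ofReal_re, Complex.ofReal_im]

/-- the flip lemma: `X^{1/2} Y X^{1/2} ≤ c ↔ Y^{1/2} X Y^{1/2} ≤ c` -/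
lemma flip (hX : X.PosSemidef) (hY : Y.PosSemidef) {c : ℝ} (hc : 0 ≤ c)
    (h : lee (mpow X (1/2) * Y * mpow X (1/2)) ((c:ℂ) • 1)) :
    lee (mpow Y (1/2) * X * mpow Y (1/2)) ((c:ℂ) • 1) := by
  set Sx := mpow X (1/2) with hSxdef
  set Sy := mpow Y (1/2) with hSydef
  have hSx : Sx.PosSemidef := sqrt_psd hX
  have hSy : Sy.PosSemidef := sqrt_psd hY
  have hSxx : Sx * Sx = X := sqrt_mul_self' hX
  have hSyy : Sy * Sy = Y := sqrt_mul_self' hY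
  set Mt := Sx * Sy with hMdef
  have hMH : Mtᴴ = Sy * Sx := by rw [hMdef, Matrix.conjTranspose_mul, hSx.1, hSy.1]
  have hXqf : Sx * Y * Sx = (Mtᴴ)ᴴ * Mtᴴ := by
    rw [Matrix.conjTranspose_conjTranspose, hMH, hMdef, ← hSyy]
    simp only [Matrix.mul_assoc]
  have hYqf : Sy * X * Sy = Mtᴴ * Mt := by
    rw [hMH, hMdef, ← hSxx]
    simp only [Matrix.mul_assoc]
  have hqf : ∀ v, nsq (Mtᴴ *ᵥ v) ≤ c * nsq v := by
    intro v
    have h1 := qf_re_le h v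
    rw [qf_smul_one_re] at h1
    calc nsq (Mtᴴ *ᵥ v) = (star v ⬝ᵥ ((Sx * Y * Sx) *ᵥ v)).re := by
          rw [hXqf, qf_conj_self]; rfl
      _ ≤ c * nsq v := h1
  have key : ∀ u, nsq (Mt *ᵥ u) ≤ c * nsq u := by
    intro u
    set a := ‖toE (Mt *ᵥ u)‖ with hadef
    set b := ‖toE u‖ with hbdef
    have ha0 : 0 ≤ a := norm_nonneg _
    have hb0 : 0 ≤ b := norm_nonneg _
    have ha2 : nsq (Mt *ᵥ u) = a ^ 2 := nsq_eq_norm _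
    have hb2 : nsq u = b ^ 2 := nsq_eq_norm _
    have e3 : a ^ 2 = (inner ℂ (toE u) (toE (Mtᴴ *ᵥ (Mt *ᵥ u))) : ℂ).re := by
      rw [inner_toE, Matrix.mulVec_mulVec, qf_conj_self]
      exact ha2.symm
    have e5 : ‖toE (Mtᴴ *ᵥ (Mt *ᵥ u))‖ ≤ Real.sqrt c * a := by
      have h5 := hqf (Mt *ᵥ u)
      rw [ha2] at h5
      have h6 : ‖toE (Mtᴴ *ᵥ (Mt *ᵥ u))‖ ^ 2 ≤ (Real.sqrt c * a) ^ 2 := by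
        rw [← nsq_eq_norm, mul_pow, Real.sq_sqrt hc]
        exact h5
      have h7 := Real.sqrt_le_sqrt h6
      rwa [Real.sqrt_sq (norm_nonneg _), Real.sqrt_sq (by positivity)] at h7
    have e4 : a ^ 2 ≤ b * (Real.sqrt c * a) := by
      rw [e3]
      calc (inner ℂ (toE u) (toE (Mtᴴ *ᵥ (Mt *ᵥ u))) : ℂ).re
          ≤ ‖(inner ℂ (toE u) (toE (Mtᴴ *ᵥ (Mt *ᵥ u))) : ℂ)‖ := Complex.re_le_norm _
        _ ≤ ‖toE u‖ * ‖toE (Mtᴴ *ᵥ (Mt *ᵥ u))‖ := norm_inner_le_norm _ _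
        _ ≤ b * (Real.sqrt c * a) := by
            exact mul_le_mul_of_nonneg_left e5 hb0
    -- from a² ≤ b √c a conclude a² ≤ c b²
    have : a ≤ Real.sqrt c * b := by
      rcases eq_or_lt_of_le ha0 with h0 | h0
      · rw [← h0]; positivity
      · have := (mul_le_mul_iff_left₀ h0).mp (by nlinarith [e4] : a * a ≤ (Real.sqrt c * b) * a)
        linarith
    calc nsq (Mt *ᵥ u) = a ^ 2 := ha2
      _ ≤ (Real.sqrt c * b) ^ 2 := by nlinarith
      _ = c * b ^ 2 := by rw [mul_pow, Real.sq_sqrt hc]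
      _ = c * nsq u := by rw [hb2]
  -- conclude
  have hherm1 : (Sy * X * Sy).IsHermitian := herm_conj hX.1 hSy.1
  have hherm2 : (((c:ℂ)) • (1 : MM k)).IsHermitian := by
    rw [Matrix.IsHermitian, Matrix.conjTranspose_smul, Complex.star_def, Complex.conj_ofReal,
      Matrix.conjTranspose_one]
  refine lee_of_herm_re hherm1 hherm2 fun u => ?_
  rw [qf_smul_one_re]
  calc (star u ⬝ᵥ ((Sy * X * Sy) *ᵥ u)).re = nsq (Mt *ᵥ u) := by
        rw [hYqf, qf_conj_self]; rfl

    _ ≤ c * nsq u := key u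



/-! ### mpow arithmetic -/

lemma mpow_psd (hX : X.PosSemidef) (p : ℝ) : (mpow X p).PosSemidef := by
  obtain ⟨U, d, hrep, hd⟩ := psd_rep hX
  exact (hrep.mpow_rep _).posSemidef fun i => Real.rpow_nonneg (hd i) _

lemma mpow_posdef (hX : X.PosDef) (p : ℝ) : (mpow X p).PosDef := by
  obtain ⟨U, d, hrep, hd⟩ := posdef_rep hX
  exact (hrep.mpow_rep _).posDef fun i => Real.rpow_pos_of_pos (hd i) _

lemma mpow_herm (hX : X.PosSemidef) (p : ℝ) : (mpow X p).IsHermitian := (mpow_psd hX p).1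

lemma mpow_add (hX : X.PosDef) (p q : ℝ) : mpow X p * mpow X q = mpow X (p + q) := by
  obtain ⟨U, d, hrep, hd⟩ := posdef_rep hX
  refine IsRep.ext_funval ((hrep.mpow_rep p).mul (hrep.mpow_rep q)) (hrep.mpow_rep (p+q))
    fun i => ?_
  rw [← Real.rpow_add (hd i)]

lemma mpow_zero (hX : X.PosSemidef) : mpow X 0 = 1 := by
  obtain ⟨U, d, hrep, hd⟩ := psd_rep hX
  refine IsRep.ext_funval (hrep.mpow_rep 0) (isRep_one hrep) fun i => Real.rpow_zero _

lemma mpow_one' (hX : X.PosSemidef) : mpow X 1 = X := by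
  obtain ⟨U, d, hrep, hd⟩ := psd_rep hX
  exact IsRep.ext_funval (hrep.mpow_rep 1) hrep fun i => Real.rpow_one _

lemma mpow_neg_one (hX : X.PosDef) : mpow X (-1) = X⁻¹ := by
  obtain ⟨U, d, hrep, hd⟩ := posdef_rep hX
  refine IsRep.ext_funval (hrep.mpow_rep (-1)) (hrep.inv fun i => ne_of_gt (hd i))
    fun i => Real.rpow_neg_one _

lemma mpow_half_inv_half (hX : X.PosDef) : mpow X (1/2) * mpow X (-(1/2)) = 1 := by
  rw [mpow_add hX]
  norm_num
  exact mpow_zero hX.posSemidef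

lemma mpow_inv_half_half (hX : X.PosDef) : mpow X (-(1/2)) * mpow X (1/2) = 1 := by
  rw [mpow_add hX]
  norm_num
  exact mpow_zero hX.posSemidef

lemma mpow_inv_half_sq (hX : X.PosDef) : mpow X (-(1/2)) * mpow X (-(1/2)) = X⁻¹ := by
  rw [mpow_add hX]
  norm_num
  exact mpow_neg_one hX

lemma sandwich_inv (hX : X.PosDef) : mpow X (1/2) * X⁻¹ * mpow X (1/2) = 1 := by
  rw [← mpow_neg_one hX, Matrix.mul_assoc, mpow_add hX, mpow_add hX]
  norm_num
  exact mpow_zero hX.posSemidef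

/-! ### spectral sums -/

/-- rank-one diagonal pieces -/
def Ei (i : Fin k) : MM k := Matrix.diagonal (fun j => if j = i then (1:ℂ) else 0)

lemma sum_Ei : (∑ i : Fin k, Ei i) = (1 : MM k) := by
  ext a b
  rw [Matrix.sum_apply]
  by_cases h : a = b
  · subst h; simp [Ei, Matrix.diagonal_apply, Matrix.one_apply]
  · simp [Ei, Matrix.diagonal_apply, Matrix.one_apply, h]

lemma Ei_psd (i : Fin k) : (Ei i).PosSemidef := by
  refine Matrix.posSemidef_diagonal_iff.mpr fun j => ?_
  by_cases h : j = i <;> simp [h]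

lemma diagonal_eq_sum_Ei (w : Fin k → ℝ) :
    Matrix.diagonal (fun i => (w i : ℂ)) = ∑ i, (w i : ℂ) • Ei i := by
  have : ∀ i : Fin k, (w i : ℂ) • Ei i
      = Matrix.diagonal (fun j => if j = i then (w i : ℂ) else 0) := by
    intro i
    ext a b
    by_cases h : a = b
    · subst h; by_cases h2 : a = i <;> simp [Ei, Matrix.diagonal_apply, h2]
    · simp [Ei, Matrix.diagonal_apply, h]
  rw [Finset.sum_congr rfl (fun i _ => this i)]
  ext a b
  rw [Matrix.sum_apply]
  by_cases h : a = b
  · subst h; simp [Matrix.diagonal_apply]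
  · simp [Matrix.diagonal_apply, h]

lemma IsRep.eq_sum {V : MM k} {w : Fin k → ℝ} {Y : MM k} (h : IsRep V w Y) :
    Y = ∑ i, (w i : ℂ) • (V * Ei i * Vᴴ) := by
  rw [h.eq, diagonal_eq_sum_Ei, Finset.mul_sum, Finset.sum_mul]
  refine Finset.sum_congr rfl fun i _ => ?_
  rw [Matrix.mul_smul, Matrix.smul_mul]

lemma psd_sum {ι : Type*} (s : Finset ι) (f : ι → MM k) (h : ∀ i ∈ s, (f i).PosSemidef) :
    (∑ i ∈ s, f i).PosSemidef :=
  Finset.sum_induction f Matrix.PosSemidef (fun _ _ ha hb => ha.add hb) Matrix.PosSemidef.zero h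

/-! ### Kadison–Schwarz inequality for positive maps -/

theorem kadison_schwarz {n l : ℕ} (Λ : MM n →ₗ[ℂ] MM l)
    (hΛ : ∀ Z : MM n, Z.PosSemidef → (Λ Z).PosSemidef)
    {X K : MM n} (hX : X.PosDef) (hK : K.PosSemidef) (hLX : (Λ X).PosDef) :
    lee (Λ K * (Λ X)⁻¹ * Λ K) (Λ (K * X⁻¹ * K)) := by
  set S := mpow X (1/2) with hSdef
  set Si := mpow X (-(1/2)) with hSidef
  have hSherm : S.IsHermitian := mpow_herm hX.posSemidef _
  have hSiherm : Si.IsHermitian := mpow_herm hX.posSemidef _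
  have hSSi : S * Si = 1 := mpow_half_inv_half hX
  have hSiS : Si * S = 1 := mpow_inv_half_half hX
  set Y := Si * K * Si with hYdef
  have hYherm : Y.IsHermitian := herm_conj hK.1 hSiherm
  obtain ⟨V, lam, hrY⟩ : ∃ (V : MM n) (lam : Fin n → ℝ), IsRep V lam Y :=
    ⟨_, _, isRep_self hYherm⟩
  have hKdec : K = S * Y * S := by
    rw [hYdef]
    calc K = 1 * K * 1 := by rw [Matrix.one_mul, Matrix.mul_one]
      _ = (S * Si) * K * (Si * S) := by rw [hSSi, hSiS]
      _ = S * (Si * K * Si) * S := by simp only [Matrix.mul_assoc]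
  have hKXK : K * X⁻¹ * K = S * (Y * Y) * S := by
    have hmid : S * X⁻¹ * S = 1 := sandwich_inv hX
    calc K * X⁻¹ * K = (S * Y * S) * X⁻¹ * (S * Y * S) := by rw [← hKdec]
      _ = S * Y * (S * X⁻¹ * S) * Y * S := by simp only [Matrix.mul_assoc]
      _ = S * (Y * Y) * S := by rw [hmid, Matrix.mul_one]; simp only [Matrix.mul_assoc]
  -- pieces
  set Q : Fin n → MM l := fun i => Λ (S * (V * Ei i * Vᴴ) * S) with hQdef
  have hQpsd : ∀ i, (Q i).PosSemidef := by
    intro i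
    refine hΛ _ ?_
    have h1 : (V * Ei i * Vᴴ).PosSemidef := (Ei_psd i).mul_mul_conjTranspose_same V
    have := h1.mul_mul_conjTranspose_same S
    rwa [show Sᴴ = S from hSherm] at this
  set W := Λ X with hWdef
  set R := Λ K with hRdef
  have hWinv : W * W⁻¹ = 1 := Matrix.mul_nonsing_inv _ (isUnit_iff_ne_zero.mpr (ne_of_gt hLX.det_pos))
  have hWinv' : W⁻¹ * W = 1 := Matrix.nonsing_inv_mul _ (isUnit_iff_ne_zero.mpr (ne_of_gt hLX.det_pos))
  have hWherm : W⁻¹.IsHermitian := (hLX.isHermitian).inv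
  have hRherm : R.IsHermitian := (hΛ _ hK).1
  -- decompositions
  have hXsum : X = ∑ i, S * (V * Ei i * Vᴴ) * S := by
    have h1 : X = S * S := (sqrt_mul_self' hX.posSemidef).symm
    have h2 : (1 : MM n) = ∑ i, V * Ei i * Vᴴ := by
      have := hrY.hUU  -- V * Vᴴ = 1
      rw [← this, ← Finset.sum_mul, ← Finset.mul_sum, sum_Ei, Matrix.mul_one]
    calc X = S * 1 * S := by rw [Matrix.mul_one, h1]
      _ = S * (∑ i, V * Ei i * Vᴴ) * S := by rw [← h2]
      _ = ∑ i, S * (V * Ei i * Vᴴ) * S := by rw [Finset.mul_sum, Finset.sum_mul]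
  have hWsum : W = ∑ i, Q i := by rw [hWdef, hXsum, map_sum]
  have hKsum : K = ∑ i, (lam i : ℂ) • (S * (V * Ei i * Vᴴ) * S) := by
    rw [hKdec, hrY.eq_sum, Finset.mul_sum, Finset.sum_mul]
    refine Finset.sum_congr rfl fun i _ => ?_
    rw [Matrix.mul_smul, Matrix.smul_mul]
  have hRsum : R = ∑ i, (lam i : ℂ) • Q i := by
    rw [hRdef, hKsum, map_sum]
    refine Finset.sum_congr rfl fun i _ => ?_
    rw [LinearMap.map_smul]
  have hKXKsum : Λ (K * X⁻¹ * K) = ∑ i, ((lam i : ℂ) * (lam i : ℂ)) • Q i := by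
    have hYY := (hrY.mul hrY).eq_sum
    rw [hKXK, hYY, Finset.mul_sum, Finset.sum_mul, map_sum]
    refine Finset.sum_congr rfl fun i _ => ?_
    rw [Matrix.mul_smul, Matrix.smul_mul, LinearMap.map_smul, Complex.ofReal_mul]
  -- the sum-of-squares identity
  set Mi : Fin n → MM l := fun i => (lam i : ℂ) • 1 - R * W⁻¹ with hMidef
  have hMiH : ∀ i, (Mi i)ᴴ = (lam i : ℂ) • 1 - W⁻¹ * R := by
    intro i
    rw [hMidef]
    rw [Matrix.conjTranspose_sub, Matrix.conjTranspose_smul, Matrix.conjTranspose_one,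
      Matrix.conjTranspose_mul, hWherm, hRherm, Complex.star_def, Complex.conj_ofReal]
  have key : Λ (K * X⁻¹ * K) - R * W⁻¹ * R = ∑ i, Mi i * Q i * (Mi i)ᴴ := by
    have expand : ∀ i, Mi i * Q i * (Mi i)ᴴ
        = ((lam i : ℂ) * (lam i : ℂ)) • Q i
          - (lam i : ℂ) • (Q i * (W⁻¹ * R))
          - (lam i : ℂ) • (R * W⁻¹ * Q i)
          + R * W⁻¹ * Q i * (W⁻¹ * R) := by
      intro i
      rw [hMiH, hMidef]
      simp only [Matrix.sub_mul, Matrix.mul_sub, Matrix.smul_mul, Matrix.mul_smul,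
        smul_smul, Matrix.one_mul, Matrix.mul_one, smul_sub]
      abel_nf
    rw [Finset.sum_congr rfl (fun i _ => expand i)]
    rw [Finset.sum_add_distrib, Finset.sum_sub_distrib, Finset.sum_sub_distrib]
    have e1 : (∑ i, (lam i : ℂ) • (Q i * (W⁻¹ * R))) = R * W⁻¹ * R := by
      have : ∀ i, (lam i : ℂ) • (Q i * (W⁻¹ * R)) = ((lam i : ℂ) • Q i) * (W⁻¹ * R) := by
        intro i; rw [Matrix.smul_mul]
      rw [Finset.sum_congr rfl (fun i _ => this i), ← Finset.sum_mul, ← hRsum,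
        ← Matrix.mul_assoc]
    have e2 : (∑ i, (lam i : ℂ) • (R * W⁻¹ * Q i)) = R * W⁻¹ * R := by
      have : ∀ i, (lam i : ℂ) • (R * W⁻¹ * Q i) = (R * W⁻¹) * ((lam i : ℂ) • Q i) := by
        intro i; rw [Matrix.mul_smul]
      rw [Finset.sum_congr rfl (fun i _ => this i), ← Finset.mul_sum, ← hRsum]
    have e3 : (∑ i, R * W⁻¹ * Q i * (W⁻¹ * R)) = R * W⁻¹ * R := by
      have : ∀ i, R * W⁻¹ * Q i * (W⁻¹ * R) = (R * W⁻¹) * Q i * (W⁻¹ * R) := fun i => rfl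
      rw [show (∑ i, R * W⁻¹ * Q i * (W⁻¹ * R)) = (R * W⁻¹) * (∑ i, Q i) * (W⁻¹ * R) by
        rw [Finset.mul_sum, Finset.sum_mul]]
      rw [← hWsum]
      calc R * W⁻¹ * W * (W⁻¹ * R) = R * (W⁻¹ * W) * (W⁻¹ * R) := by
            simp only [Matrix.mul_assoc]
        _ = R * W⁻¹ * R := by rw [hWinv', Matrix.mul_one, ← Matrix.mul_assoc]
    rw [e1, e2, e3, ← hKXKsum]
    abel
  -- conclude
  rw [lee, key]
  exact psd_sum _ _ fun i _ => (hQpsd i).mul_mul_conjTranspose_same (Mi i)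

/-! ### eigenvector access and operator monotonicity of sqrt -/

lemma exists_eigvec (hM : M.IsHermitian) (i : Fin k) :
    ∃ v : Fin k → ℂ, v ≠ 0 ∧ M *ᵥ v = ((hM.eigenvalues i : ℝ) : ℂ) • v := by
  refine ⟨(WithLp.equiv 2 _) (hM.eigenvectorBasis i), ?_, ?_⟩
  · intro h0
    have h1 := hM.eigenvectorBasis.orthonormal.1 i
    have h2 : hM.eigenvectorBasis i = 0 := by
      apply (WithLp.equiv 2 _).injective
      simpa using h0
    rw [h2] at h1
    simp at h1
  · have h3 := hM.mulVec_eigenvectorBasis i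
    change M *ᵥ ⇑(hM.eigenvectorBasis i) = _
    rw [h3]
    funext j
    simp [Pi.smul_apply, Complex.real_smul]

lemma psd_of_eigen_nonneg (hM : M.IsHermitian)
    (h : ∀ (t : ℝ) (v : Fin k → ℂ), v ≠ 0 → M *ᵥ v = (t:ℂ) • v → 0 ≤ t) : M.PosSemidef :=
  hM.posSemidef_iff_eigenvalues_nonneg.mpr fun i => by
    obtain ⟨v, hv0, hv⟩ := exists_eigvec hM i
    exact h _ v hv0 hv

lemma le_sqrt_of_sq_le {H T : MM k} (hH : H.PosSemidef) (hT : T.PosDef)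
    (h : lee (H * H) T) : lee H (mpow T (1/2)) := by
  set St := mpow T (1/2) with hStdef
  have hStpos : St.PosDef := mpow_posdef hT _
  have hStherm : St.IsHermitian := hStpos.isHermitian
  have hSS : St * St = T := sqrt_mul_self' hT.posSemidef
  set Md := St - H with hMddef
  have hMdherm : Md.IsHermitian := hStherm.sub hH.1
  set Yt := St + H with hYtdef
  have hYtpos : Yt.PosDef := hStpos.add_posSemidef hH
  have hanti : Md * Yt + Yt * Md = (T - H * H) + (T - H * H) := by
    rw [hMddef, hYtdef, ← hSS]
    rw [Matrix.sub_mul, Matrix.mul_add, Matrix.mul_add, Matrix.add_mul, Matrix.mul_sub,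
      Matrix.mul_sub]
    abel
  have hpsd2 : ((T - H * H) + (T - H * H)).PosSemidef := h.add h
  refine psd_of_eigen_nonneg hMdherm fun t v hv0 hv => ?_
  have hq := hpsd2.dotProduct_mulVec_nonneg v
  rw [← hanti] at hq
  have hYq : 0 < (star v ⬝ᵥ (Yt *ᵥ v)).re := hYtpos.re_dotProduct_pos hv0
  have hMv : star v ᵥ* Md = (t:ℂ) • star v := by
    have h4 : star (Md *ᵥ v) = star v ᵥ* Mdᴴ := Matrix.star_mulVec Md v
    rw [show Mdᴴ = Md from hMdherm] at h4
    rw [← h4, hv, star_smul]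
    congr 1
    rw [Complex.star_def, Complex.conj_ofReal]
  have e1 : star v ⬝ᵥ ((Md * Yt) *ᵥ v) = (t:ℂ) * (star v ⬝ᵥ (Yt *ᵥ v)) := by
    rw [← Matrix.mulVec_mulVec, Matrix.dotProduct_mulVec, hMv, smul_dotProduct,
      smul_eq_mul, Matrix.dotProduct_mulVec]
  have e2 : star v ⬝ᵥ ((Yt * Md) *ᵥ v) = (t:ℂ) * (star v ⬝ᵥ (Yt *ᵥ v)) := by
    rw [← Matrix.mulVec_mulVec, hv, Matrix.mulVec_smul, dotProduct_smul, smul_eq_mul]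
  rw [Matrix.add_mulVec, dotProduct_add, e1, e2] at hq
  have hre := (Complex.le_def.mp hq).1
  have hre2 : ((t:ℂ) * (star v ⬝ᵥ (Yt *ᵥ v))).re = t * (star v ⬝ᵥ (Yt *ᵥ v)).re := by
    simp [Complex.mul_re]
  rw [Complex.add_re, hre2, Complex.zero_re] at hre
  nlinarith

/-! ### posdef conjugation -/

lemma posdef_conj {S : MM k} (hY : Y.PosDef) (hS : S.PosDef) : (S * Y * S).PosDef := by
  refine .of_dotProduct_mulVec_pos (herm_conj hY.isHermitian hS.isHermitian) fun x hx => ?_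
  have hx' : S *ᵥ x ≠ 0 := by
    intro hc
    apply hx
    have h1 : S⁻¹ *ᵥ (S *ᵥ x) = x := by
      rw [Matrix.mulVec_mulVec, Matrix.nonsing_inv_mul _ (isUnit_iff_ne_zero.mpr
        (ne_of_gt hS.det_pos)), Matrix.one_mulVec]
    rw [← h1, hc, Matrix.mulVec_zero]
  have h2 : star x ⬝ᵥ ((S * Y * S) *ᵥ x) = star (S *ᵥ x) ⬝ᵥ (Y *ᵥ (S *ᵥ x)) := by
    rw [Matrix.star_mulVec, show Sᴴ = S from hS.isHermitian]
    rw [← Matrix.mulVec_mulVec, ← Matrix.mulVec_mulVec, Matrix.dotProduct_mulVec]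
  rw [h2]
  exact hY.dotProduct_mulVec_pos hx'

/-! ### the geometric mean -/

noncomputable def mm (X Y : MM k) : MM k :=
  mpow X (1/2) * mpow (mpow X (-(1/2)) * Y * mpow X (-(1/2))) (1/2) * mpow X (1/2)

lemma tmid_posdef (hX : X.PosDef) (hY : Y.PosDef) :
    (mpow X (-(1/2)) * Y * mpow X (-(1/2))).PosDef :=
  posdef_conj hY (mpow_posdef hX _)

lemma mm_posdef (hX : X.PosDef) (hY : Y.PosDef) : (mm X Y).PosDef :=
  posdef_conj (mpow_posdef (tmid_posdef hX hY) _) (mpow_posdef hX _)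

lemma mm_sq (hX : X.PosDef) (hY : Y.PosDef) : mm X Y * X⁻¹ * mm X Y = Y := by
  set S := mpow X (1/2) with hS
  set Si := mpow X (-(1/2)) with hSi
  set T := Si * Y * Si with hT
  set Th := mpow T (1/2) with hTh
  have h1 : S * X⁻¹ * S = 1 := sandwich_inv hX
  have h2 : Th * Th = T := sqrt_mul_self' (tmid_posdef hX hY).posSemidef
  have h3 : S * Si = 1 := mpow_half_inv_half hX
  calc (S * Th * S) * X⁻¹ * (S * Th * S)
      = S * Th * (S * X⁻¹ * S) * Th * S := by simp only [Matrix.mul_assoc]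
    _ = S * (Th * Th) * S := by rw [h1, Matrix.mul_one]; simp only [Matrix.mul_assoc]
    _ = S * (Si * Y * Si) * S := by rw [h2, hT]
    _ = (S * Si) * Y * (Si * S) := by simp only [Matrix.mul_assoc]
    _ = Y := by rw [h3, mpow_inv_half_half hX, Matrix.one_mul, Matrix.mul_one]

lemma gmax {G : MM k} (hX : X.PosDef) (hY : Y.PosDef) (hG : G.PosSemidef)
    (h : lee (G * X⁻¹ * G) Y) : lee G (mm X Y) := by
  set S := mpow X (1/2) with hS
  set Si := mpow X (-(1/2)) with hSi
  have hSherm : S.IsHermitian := mpow_herm hX.posSemidef _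
  have hSiherm : Si.IsHermitian := mpow_herm hX.posSemidef _
  set T := Si * Y * Si with hT
  have hTpos : T.PosDef := tmid_posdef hX hY
  set H := Si * G * Si with hH
  have hHpsd : H.PosSemidef := by
    have := hG.mul_mul_conjTranspose_same Si
    rwa [show Siᴴ = Si from hSiherm] at this
  have hHH : H * H = Si * (G * X⁻¹ * G) * Si := by
    have hss : Si * Si = X⁻¹ := mpow_inv_half_sq hX
    calc (Si * G * Si) * (Si * G * Si) = Si * G * (Si * Si) * G * Si := by
          simp only [Matrix.mul_assoc]
      _ = Si * (G * X⁻¹ * G) * Si := by rw [hss]; simp only [Matrix.mul_assoc]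
  have hlee : lee (H * H) T := by
    rw [hHH, hT]
    have := lee_conj h Si
    rwa [show Siᴴ = Si from hSiherm] at this
  have hHle := le_sqrt_of_sq_le hHpsd hTpos hlee
  have := lee_conj hHle S
  rw [show Sᴴ = S from hSherm] at this
  have hG2 : S * H * S = G := by
    rw [hH]
    have h3 : S * Si = 1 := mpow_half_inv_half hX
    have h4 : Si * S = 1 := mpow_inv_half_half hX
    calc S * (Si * G * Si) * S = (S * Si) * G * (Si * S) := by simp only [Matrix.mul_assoc]
      _ = G := by rw [h3, h4, Matrix.one_mul, Matrix.mul_one]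
  rw [hG2] at this
  exact this

/-! ### inverse is antitone -/

lemma psd_diag_entry {P : MM k} (hP : P.PosSemidef) (i : Fin k) : 0 ≤ P i i := by
  have := hP.dotProduct_mulVec_nonneg (Pi.single i 1)
  simpa [dotProduct, Matrix.mulVec, Pi.single_apply, Finset.sum_ite_eq] using this

lemma IsRep.sub (h1 : IsRep U d A) (h2 : IsRep U e B) :
    IsRep U (fun i => d i - e i) (A - B) := by
  refine ⟨h1.hUU, h1.hUU', ?_⟩
  have : Matrix.diagonal (fun i => ((d i - e i : ℝ) : ℂ))
      = Matrix.diagonal (fun i => (d i : ℂ)) - Matrix.diagonal (fun i => (e i : ℂ)) := by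
    rw [Matrix.diagonal_sub]
    congr 1
    funext i
    push_cast
    rfl
  rw [h1.eq, h2.eq, this, Matrix.mul_sub, Matrix.sub_mul]

lemma one_le_inv_of_le_one (hM : M.PosDef) (h : lee M 1) : lee 1 M⁻¹ := by
  obtain ⟨U, d, hrep, hd⟩ := posdef_rep hM
  have hNpsd : ((1 : MM k) - M).PosSemidef := h
  have hconj := hNpsd.mul_mul_conjTranspose_same Uᴴ
  rw [Matrix.conjTranspose_conjTranspose] at hconj
  have hdiag : Uᴴ * (1 - M) * U = 1 - Matrix.diagonal (fun i => (d i : ℂ)) := by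
    rw [Matrix.mul_sub, Matrix.sub_mul, Matrix.mul_one, hrep.hUU', hrep.eq]
    congr 1
    calc Uᴴ * (U * Matrix.diagonal (fun i => (d i:ℂ)) * Uᴴ) * U
        = (Uᴴ * U) * Matrix.diagonal (fun i => (d i:ℂ)) * (Uᴴ * U) := by
          simp only [Matrix.mul_assoc]
      _ = Matrix.diagonal (fun i => (d i:ℂ)) := by
          rw [hrep.hUU', Matrix.one_mul, Matrix.mul_one]
  rw [hdiag] at hconj
  have hd1 : ∀ i, d i ≤ 1 := by
    intro i
    have := psd_diag_entry hconj i
    have h5 : ((1 : MM k) - Matrix.diagonal (fun i => (d i : ℂ))) i i = 1 - (d i : ℂ) := by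
      simp [Matrix.sub_apply, Matrix.one_apply, Matrix.diagonal_apply]
    rw [h5] at this
    have := (Complex.le_def.mp this).1
    simp at this
    linarith
  have hrepinv := hrep.inv fun i => ne_of_gt (hd i)
  have : IsRep U (fun i => (d i)⁻¹ - 1) (M⁻¹ - 1) := hrepinv.sub (isRep_one hrep)
  exact this.posSemidef fun i => by
    have h6 : 1 ≤ (d i)⁻¹ := by
      rw [le_inv_comm₀ one_pos (hd i)]
      simpa using hd1 i
    linarith

lemma inv_antitone (hX : X.PosDef) (hY : Y.PosDef) (h : lee X Y) : lee Y⁻¹ X⁻¹ := by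
  set Yi := mpow Y (-(1/2)) with hYi
  set Yh := mpow Y (1/2) with hYh
  have hYiherm : Yi.IsHermitian := mpow_herm hY.posSemidef _
  set Mc := Yi * X * Yi with hMc
  have hMcpos : Mc.PosDef := posdef_conj hX (mpow_posdef hY _)
  have hMc1 : lee Mc 1 := by
    have h1 := lee_conj h Yi
    rw [show Yiᴴ = Yi from hYiherm] at h1
    have h2 : Yi * Y * Yi = 1 := by
      rw [show Yi * Y = Yi * mpow Y 1 from by rw [mpow_one' hY.posSemidef], hYi,
        mpow_add hY, show (-(1/2) + 1 : ℝ) = 1/2 from by norm_num, mpow_half_inv_half hY]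
    rwa [h2] at h1
  have hinv := one_le_inv_of_le_one hMcpos hMc1
  have hMcinv : Mc⁻¹ = Yh * X⁻¹ * Yh := by
    apply Matrix.inv_eq_right_inv
    have h3 : Yi * Yh = 1 := mpow_inv_half_half hY
    have h4 : X * X⁻¹ = 1 := Matrix.mul_nonsing_inv _ (isUnit_iff_ne_zero.mpr
      (ne_of_gt hX.det_pos))
    calc (Yi * X * Yi) * (Yh * X⁻¹ * Yh) = Yi * X * (Yi * Yh) * X⁻¹ * Yh := by
          simp only [Matrix.mul_assoc]
      _ = Yi * (X * X⁻¹) * Yh := by rw [h3, Matrix.mul_one]; simp only [Matrix.mul_assoc]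
      _ = Yi * Yh := by rw [h4, Matrix.mul_one]
      _ = 1 := h3
  rw [hMcinv] at hinv
  have h5 := lee_conj hinv Yi
  rw [show Yiᴴ = Yi from hYiherm] at h5
  have h6 : Yi * 1 * Yi = Y⁻¹ := by rw [Matrix.mul_one]; exact mpow_inv_half_sq hY
  have h7 : Yi * (Yh * X⁻¹ * Yh) * Yi = X⁻¹ := by
    have h3 : Yi * Yh = 1 := mpow_inv_half_half hY
    have h8 : Yh * Yi = 1 := mpow_half_inv_half hY
    calc Yi * (Yh * X⁻¹ * Yh) * Yi = (Yi * Yh) * X⁻¹ * (Yh * Yi) := by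
          simp only [Matrix.mul_assoc]
      _ = X⁻¹ := by rw [h3, h8, Matrix.one_mul, Matrix.mul_one]
  rw [h6, h7] at h5
  exact h5

/-! ### monotonicity / inversion / commuting powers of the mean, and Ando's inequality -/

lemma mm_mono {X' Y' : MM k} (hX : X.PosDef) (hY : Y.PosDef) (hX' : X'.PosDef)
    (hY' : Y'.PosDef) (h1 : lee X X') (h2 : lee Y Y') : lee (mm X Y) (mm X' Y') := by
  set G := mm X Y with hG
  have hGpos : G.PosDef := mm_posdef hX hY
  have hGherm : G.IsHermitian := hGpos.isHermitian
  have hsq : G * X⁻¹ * G = Y := mm_sq hX hY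
  have hinv : lee X'⁻¹ X⁻¹ := inv_antitone hX hX' h1
  have h3 := lee_conj hinv G
  rw [show Gᴴ = G from hGherm] at h3
  have h4 : lee (G * X'⁻¹ * G) Y' := lee_trans h3 (by rw [hsq]; exact h2)
  exact gmax hX' hY' hGpos.posSemidef h4

lemma unique_pos_solution {Z₁ Z₂ : MM k} (hX : X.PosDef) (h1 : Z₁.PosDef) (h2 : Z₂.PosDef)
    (h : Z₁ * X * Z₁ = Z₂ * X * Z₂) : Z₁ = Z₂ := by
  set S := mpow X (1/2) with hS
  have hSherm : S.IsHermitian := mpow_herm hX.posSemidef _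
  have hSS : S * S = X := sqrt_mul_self' hX.posSemidef
  have key : ∀ Z : MM k, (S * Z * S) * (S * Z * S) = S * (Z * X * Z) * S := by
    intro Z
    calc (S * Z * S) * (S * Z * S) = S * Z * (S * S) * Z * S := by
          simp only [Matrix.mul_assoc]
      _ = S * (Z * X * Z) * S := by rw [hSS]; simp only [Matrix.mul_assoc]
  have hpsd1 : (S * Z₁ * S).PosSemidef := (posdef_conj h1 (mpow_posdef hX _)).posSemidef
  have hpsd2 : (S * Z₂ * S).PosSemidef := (posdef_conj h2 (mpow_posdef hX _)).posSemidef
  have heq : S * Z₁ * S = S * Z₂ * S := by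
    open scoped MatrixOrder Matrix.Norms.L2Operator in
    refine (CFC.sq_eq_sq_iff _ _ hpsd1.nonneg hpsd2.nonneg).mp ?_
    rw [pow_two, pow_two, key, key, h]
  set Si := mpow X (-(1/2)) with hSi
  have h3 : Si * S = 1 := mpow_inv_half_half hX
  have h4 : S * Si = 1 := mpow_half_inv_half hX
  have cancel : ∀ Z : MM k, Si * (S * Z * S) * Si = Z := by
    intro Z
    calc Si * (S * Z * S) * Si = (Si * S) * Z * (S * Si) := by simp only [Matrix.mul_assoc]
      _ = Z := by rw [h3, h4, Matrix.one_mul, Matrix.mul_one]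
  calc Z₁ = Si * (S * Z₁ * S) * Si := (cancel Z₁).symm
    _ = Si * (S * Z₂ * S) * Si := by rw [heq]
    _ = Z₂ := cancel Z₂

lemma mm_inv (hX : X.PosDef) (hY : Y.PosDef) : (mm X Y)⁻¹ = mm X⁻¹ Y⁻¹ := by
  have hG : (mm X Y).PosDef := mm_posdef hX hY
  have hGinv : (mm X Y)⁻¹.PosDef := hG.inv
  have hG' : (mm X⁻¹ Y⁻¹).PosDef := mm_posdef hX.inv hY.inv
  refine unique_pos_solution hX hGinv hG' ?_
  have h1 : (mm X Y)⁻¹ * X * (mm X Y)⁻¹ = Y⁻¹ := by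
    have h2 : mm X Y * X⁻¹ * mm X Y = Y := mm_sq hX hY
    have := congrArg (·⁻¹) h2
    rw [Matrix.mul_inv_rev, Matrix.mul_inv_rev, Matrix.nonsing_inv_nonsing_inv _
      (isUnit_iff_ne_zero.mpr (ne_of_gt hX.det_pos))] at this
    rw [← this, Matrix.mul_assoc]
  have h3 : mm X⁻¹ Y⁻¹ * X * mm X⁻¹ Y⁻¹ = Y⁻¹ := by
    have := mm_sq hX.inv hY.inv
    rwa [Matrix.nonsing_inv_nonsing_inv _
      (isUnit_iff_ne_zero.mpr (ne_of_gt hX.det_pos))] at this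
  rw [h1, h3]

lemma mpow_mpow (hX : X.PosDef) (a p : ℝ) : mpow (mpow X a) p = mpow X (a * p) := by
  obtain ⟨U, d, hrep, hd⟩ := posdef_rep hX
  refine IsRep.ext_funval ((hrep.mpow_rep a).mpow_rep p) (hrep.mpow_rep (a * p)) fun i => ?_
  rw [← Real.rpow_mul (le_of_lt (hd i))]

lemma mm_comm_pow {B : MM k} (hB : B.PosDef) (a b : ℝ) :
    mm (mpow B a) (mpow B b) = mpow B ((a + b) / 2) := by
  have hBa : (mpow B a).PosDef := mpow_posdef hB _
  have e1 : mpow (mpow B a) (-(1/2)) = mpow B (-(a/2)) := by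
    rw [mpow_mpow hB]; ring_nf
  have e2 : mpow (mpow B a) (1/2) = mpow B (a/2) := by
    rw [mpow_mpow hB]; ring_nf
  have e3 : mpow B (-(a/2)) * mpow B b * mpow B (-(a/2)) = mpow B (b - a) := by
    rw [mpow_add hB, mpow_add hB]; ring_nf
  have e4 : mpow (mpow B (b - a)) (1/2) = mpow B ((b - a)/2) := by
    rw [mpow_mpow hB]; ring_nf
  rw [mm, e1, e2, e3, e4, mpow_add hB, mpow_add hB]
  ring_nf

/-- Ando's inequality for positive linear maps -/
theorem ando {n l : ℕ} (Λ : MM n →ₗ[ℂ] MM l)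
    (hΛ : ∀ Z : MM n, Z.PosSemidef → (Λ Z).PosSemidef)
    {X Y : MM n} (hX : X.PosDef) (hY : Y.PosDef)
    (hLX : (Λ X).PosDef) (hLY : (Λ Y).PosDef) :
    lee (Λ (mm X Y)) (mm (Λ X) (Λ Y)) := by
  have hG : (mm X Y).PosDef := mm_posdef hX hY
  have hKS := kadison_schwarz Λ hΛ hX hG.posSemidef hLX
  rw [show mm X Y * X⁻¹ * mm X Y = Y from mm_sq hX hY] at hKS
  exact gmax hLX hLY (hΛ _ hG.posSemidef) hKS

/-! ### limits of psd matrices and continuity of mpow -/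

lemma psd_lim {f : ℕ → MM k} {L : MM k} (h : ∀ j, (f j).PosSemidef)
    (hf : Filter.Tendsto f Filter.atTop (nhds L)) : L.PosSemidef := by
  have hermC : Continuous (fun M : MM k => Mᴴ) := Continuous.matrix_conjTranspose continuous_id
  have hherm : L.IsHermitian := by
    have h1 : Filter.Tendsto (fun j => (f j)ᴴ) Filter.atTop (nhds Lᴴ) :=
      (hermC.continuousAt.tendsto).comp hf
    have h2 : (fun j => (f j)ᴴ) = f := funext fun j => (h j).1
    rw [h2] at h1
    exact tendsto_nhds_unique h1 hf
  refine psd_of_herm_re hherm fun x => ?_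
  have gC : Continuous (fun M : MM k => star x ⬝ᵥ (M *ᵥ x)) :=
    Continuous.dotProduct continuous_const
      (Continuous.matrix_mulVec continuous_id continuous_const)
  have h3 : Filter.Tendsto (fun j => (star x ⬝ᵥ ((f j) *ᵥ x)).re) Filter.atTop
      (nhds ((star x ⬝ᵥ (L *ᵥ x)).re)) :=
    ((Complex.continuous_re.comp gC).continuousAt.tendsto).comp hf
  exact ge_of_tendsto' h3 fun j => (h j).re_dotProduct_nonneg x

lemma mpow_cont (hX : X.PosDef) : Continuous fun a : ℝ => mpow X a := by
  obtain ⟨U, d, hrep, hd⟩ := posdef_rep hX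
  have heq : (fun a : ℝ => mpow X a)
      = fun a => U * Matrix.diagonal (fun i => ((d i ^ a : ℝ) : ℂ)) * Uᴴ :=
    funext fun a => (hrep.mpow_rep a).eq
  rw [heq]
  refine Continuous.matrix_mul (Continuous.matrix_mul continuous_const ?_) continuous_const
  refine Continuous.matrix_diagonal ?_
  refine continuous_pi fun i => ?_
  have : (fun a : ℝ => ((d i ^ a : ℝ) : ℂ))
      = fun a => ((Real.exp (Real.log (d i) * a) : ℝ) : ℂ) := by
    funext a
    rw [Real.rpow_def_of_pos (hd i)]
  rw [this]
  exact Complex.continuous_ofReal.comp (Real.continuous_exp.comp (continuous_const.mul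
    continuous_id))

/-! ### inverse form ↔ conjugated form -/

lemma lee_inv_iff_conj {W Z : MM k} (hW : W.PosDef) :
    lee Z W⁻¹ ↔ lee (W * Z * W) W := by
  have hWherm : W.IsHermitian := hW.isHermitian
  have hWW : W * W⁻¹ = 1 := Matrix.mul_nonsing_inv _ (isUnit_iff_ne_zero.mpr
    (ne_of_gt hW.det_pos))
  have hWW' : W⁻¹ * W = 1 := Matrix.nonsing_inv_mul _ (isUnit_iff_ne_zero.mpr
    (ne_of_gt hW.det_pos))
  have hWiherm : W⁻¹.IsHermitian := hWherm.inv
  constructor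
  · intro h
    have h1 := lee_conj h W
    rw [show Wᴴ = W from hWherm] at h1
    have h2 : W * W⁻¹ * W = W := by rw [hWW, Matrix.one_mul]
    rwa [h2] at h1
  · intro h
    have h1 := lee_conj h W⁻¹
    rw [show (W⁻¹)ᴴ = W⁻¹ from hWiherm] at h1
    have h2 : W⁻¹ * (W * Z * W) * W⁻¹ = Z := by
      calc W⁻¹ * (W * Z * W) * W⁻¹ = (W⁻¹ * W) * Z * (W * W⁻¹) := by
            simp only [Matrix.mul_assoc]
        _ = Z := by rw [hWW, hWW', Matrix.one_mul, Matrix.mul_one]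
    have h3 : W⁻¹ * W * W⁻¹ = W⁻¹ := by rw [hWW', Matrix.one_mul]
    rwa [h2, h3] at h1

/-! ### the core theorem (invertible case) -/

theorem core {n m l : ℕ} (Φ : MM n →ₗ[ℂ] MM l) (Ψ : MM m →ₗ[ℂ] MM l)
    (hΦ : ∀ Z, Z.PosSemidef → (Φ Z).PosSemidef) (hΨ : ∀ Z, Z.PosSemidef → (Ψ Z).PosSemidef)
    (hΦs : ∀ Z, Z.PosDef → (Φ Z).PosDef) (hΨs : ∀ Z, Z.PosDef → (Ψ Z).PosDef)
    {A : MM n} {B : MM m} (hA : A.PosDef) (hB : B.PosDef)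
    (h1 : lee (Ψ 1) (Φ 1)⁻¹) (hAB : lee (Ψ B) (Φ A)⁻¹)
    (α : ℝ) (hα0 : 0 ≤ α) (hα1 : α ≤ 1) : lee (Ψ (mpow B α)) (Φ (mpow A α))⁻¹ := by
  set P : ℝ → Prop := fun a => lee (Ψ (mpow B a)) (Φ (mpow A a))⁻¹ with hPdef
  have hP0 : P 0 := by
    rw [hPdef]
    simp only []
    rw [mpow_zero hA.posSemidef, mpow_zero hB.posSemidef]
    exact h1
  have hP1 : P 1 := by
    rw [hPdef]
    simp only []
    rw [mpow_one' hA.posSemidef, mpow_one' hB.posSemidef]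
    exact hAB
  have hMID : ∀ a b : ℝ, P a → P b → P ((a + b) / 2) := by
    intro a b ha hb
    have hAa : (mpow A a).PosDef := mpow_posdef hA _
    have hAb : (mpow A b).PosDef := mpow_posdef hA _
    have hBa : (mpow B a).PosDef := mpow_posdef hB _
    have hBb : (mpow B b).PosDef := mpow_posdef hB _
    have hPa : (Φ (mpow A a)).PosDef := hΦs _ hAa
    have hPb : (Φ (mpow A b)).PosDef := hΦs _ hAb
    have hQa : (Ψ (mpow B a)).PosDef := hΨs _ hBa
    have hQb : (Ψ (mpow B b)).PosDef := hΨs _ hBb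
    have step1 : Ψ (mpow B ((a + b)/2)) = Ψ (mm (mpow B a) (mpow B b)) := by
      rw [mm_comm_pow hB]
    have step2 : lee (Ψ (mm (mpow B a) (mpow B b))) (mm (Ψ (mpow B a)) (Ψ (mpow B b))) :=
      ando Ψ hΨ hBa hBb hQa hQb
    have step3 : lee (mm (Ψ (mpow B a)) (Ψ (mpow B b))) (mm (Φ (mpow A a))⁻¹ (Φ (mpow A b))⁻¹) :=
      mm_mono hQa hQb hPa.inv hPb.inv ha hb
    have step4 : mm (Φ (mpow A a))⁻¹ (Φ (mpow A b))⁻¹ = (mm (Φ (mpow A a)) (Φ (mpow A b)))⁻¹ :=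
      (mm_inv hPa hPb).symm
    have step5 : lee (Φ (mpow A ((a + b)/2))) (mm (Φ (mpow A a)) (Φ (mpow A b))) := by
      rw [show mpow A ((a + b)/2) = mm (mpow A a) (mpow A b) from (mm_comm_pow hA a b).symm]
      exact ando Φ hΦ hAa hAb hPa hPb
    have step6 : lee (mm (Φ (mpow A a)) (Φ (mpow A b)))⁻¹ (Φ (mpow A ((a + b)/2)))⁻¹ :=
      inv_antitone (hΦs _ (mpow_posdef hA _)) (mm_posdef hPa hPb) step5
    rw [hPdef]
    simp only []
    rw [step1]
    exact lee_trans step2 (lee_trans step3 (step4 ▸ step6))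
  have hdyadic : ∀ (K : ℕ) (j : ℕ), j ≤ 2^K → P ((j : ℝ) / 2^K) := by
    intro K
    induction K with
    | zero =>
      intro j hj
      interval_cases j
      · simpa using hP0
      · simpa using hP1
    | succ K ih =>
      intro j hj
      rcases Nat.even_or_odd j with ⟨i, hi⟩ | ⟨i, hi⟩
      · have hij : i ≤ 2^K := by omega
        have := ih i hij
        have heq : ((j : ℝ)) / 2^(K+1) = (i : ℝ) / 2^K := by
          subst hi
          push_cast
          rw [pow_succ]
          field_simp
          ring
        rwa [heq]
      · have hi1 : i ≤ 2^K := by omega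
        have hi2 : i + 1 ≤ 2^K := by omega
        have ha := ih i hi1
        have hb := ih (i+1) hi2
        have := hMID _ _ ha hb
        have heq : (((i:ℝ)/2^K) + ((i+1:ℕ):ℝ)/2^K) / 2 = (j : ℝ) / 2^(K+1) := by
          subst hi
          push_cast
          rw [pow_succ]
          field_simp
          ring
        rwa [heq] at this
  -- approximation
  set x : ℕ → ℝ := fun K => ((⌊α * 2^K⌋₊ : ℕ) : ℝ) / 2^K with hxdef
  have hxP : ∀ K, P (x K) := by
    intro K
    refine hdyadic K _ ?_
    have h2 : α * 2^K ≤ ((2^K : ℕ) : ℝ) := by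
      push_cast
      nlinarith [pow_pos (show (0:ℝ) < 2 by norm_num) K]
    have := Nat.floor_le_floor h2
    rwa [Nat.floor_natCast] at this
  have hxtend : Filter.Tendsto x Filter.atTop (nhds α) := by
    have hup : ∀ K, x K ≤ α := by
      intro K
      rw [hxdef]
      have h3 : ((⌊α * 2^K⌋₊ : ℕ) : ℝ) ≤ α * 2^K := Nat.floor_le (by positivity)
      have h4 : (0:ℝ) < 2^K := by positivity
      rw [div_le_iff₀ h4]
      linarith
    have hlo : ∀ K, α - (1/2)^K ≤ x K := by
      intro K
      rw [hxdef]
      have h3 : α * 2^K < ((⌊α * 2^K⌋₊ : ℕ) : ℝ) + 1 := Nat.lt_floor_add_one _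
      have h4 : (0:ℝ) < 2^K := by positivity
      rw [sub_le_iff_le_add, div_add' _ _ _ (ne_of_gt h4), le_div_iff₀ h4]
      have h5 : (1/2:ℝ)^K * 2^K = 1 := by
        rw [← mul_pow]
        norm_num
      nlinarith
    have hlow : Filter.Tendsto (fun K => α - (1/2:ℝ)^K) Filter.atTop (nhds α) := by
      have := Filter.Tendsto.const_sub α (tendsto_pow_atTop_nhds_zero_of_lt_one
        (by norm_num) (by norm_num : (1/2:ℝ) < 1))
      simpa using this
    exact tendsto_of_tendsto_of_tendsto_of_le_of_le' hlow tendsto_const_nhds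
      (Filter.Eventually.of_forall fun K => hlo K)
      (Filter.Eventually.of_forall fun K => hup K)
  -- convert to conjugated form and take limits
  set D : ℝ → MM l := fun a =>
    Φ (mpow A a) - Φ (mpow A a) * Ψ (mpow B a) * Φ (mpow A a) with hDdef
  have hDpsd : ∀ K, (D (x K)).PosSemidef := by
    intro K
    have := (lee_inv_iff_conj (hΦs _ (mpow_posdef hA _))).mp (hxP K)
    exact this
  have hDcont : Continuous D := by
    have hΦc : Continuous (fun M : MM n => Φ M) := LinearMap.continuous_of_finiteDimensional _
    have hΨc : Continuous (fun M : MM m => Ψ M) := LinearMap.continuous_of_finiteDimensional _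
    have c1 : Continuous fun a : ℝ => Φ (mpow A a) := hΦc.comp (mpow_cont hA)
    have c2 : Continuous fun a : ℝ => Ψ (mpow B a) := hΨc.comp (mpow_cont hB)
    exact c1.sub ((c1.matrix_mul c2).matrix_mul c1)
  have hlim : (D α).PosSemidef :=
    psd_lim hDpsd ((hDcont.continuousAt.tendsto).comp hxtend)
  exact (lee_inv_iff_conj (hΦs _ (mpow_posdef hA _))).mpr hlim

/-! ### trace bounds and misc -/

lemma trace_coe (hX : X.PosSemidef) : ∃ c : ℝ, 0 ≤ c ∧ X.trace = (c : ℂ) := by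
  obtain ⟨U, d, hrep, hd⟩ := psd_rep hX
  exact ⟨∑ i, d i, Finset.sum_nonneg fun i _ => hd i, hrep.trace_eq⟩

lemma trace_pos_coe (hk : 0 < k) (hX : X.PosDef) : ∃ c : ℝ, 0 < c ∧ X.trace = (c : ℂ) := by
  obtain ⟨U, d, hrep, hd⟩ := posdef_rep hX
  refine ⟨∑ i, d i, Finset.sum_pos (fun i _ => hd i) ?_, hrep.trace_eq⟩
  have : Nonempty (Fin k) := ⟨⟨0, hk⟩⟩
  exact Finset.univ_nonempty

lemma lee_trace_smul_one (hX : X.PosSemidef) : lee X ((X.trace.re : ℂ) • 1) := by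
  obtain ⟨U, d, hrep, hd⟩ := psd_rep hX
  have htr : X.trace.re = ∑ i, d i := by rw [hrep.trace_eq, Complex.ofReal_re]
  rw [htr]
  have hsub := (isRep_smul_one hrep (∑ i, d i)).sub hrep
  exact hsub.posSemidef fun i => by
    have := Finset.single_le_sum (fun j (_ : j ∈ Finset.univ) => hd j) (Finset.mem_univ i)
    linarith

lemma trace_re_nonneg (hX : X.PosSemidef) : 0 ≤ X.trace.re := by
  obtain ⟨c, hc, htr⟩ := trace_coe hX
  rw [htr, Complex.ofReal_re]
  exact hc

lemma lee_smul_one_mono {c c' : ℝ} (h : c' ≤ c) : lee ((c':ℂ) • (1 : MM k)) ((c:ℂ) • 1) := by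
  have : ((c:ℂ) • (1 : MM k)) - ((c':ℂ) • 1) = (((c - c' : ℝ)):ℂ) • 1 := by
    rw [← sub_smul]
    congr 1
    push_cast
    ring
  rw [lee, this]
  exact psd_smul (by linarith) Matrix.PosSemidef.one

lemma lee_inv_iff_sqrt {W Z : MM k} (hW : W.PosDef) :
    lee Z W⁻¹ ↔ lee (mpow W (1/2) * Z * mpow W (1/2)) 1 := by
  set S := mpow W (1/2) with hS
  set Si := mpow W (-(1/2)) with hSi
  have hSherm : S.IsHermitian := mpow_herm hW.posSemidef _
  have hSiherm : Si.IsHermitian := mpow_herm hW.posSemidef _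
  have h3 : S * Si = 1 := mpow_half_inv_half hW
  have h4 : Si * S = 1 := mpow_inv_half_half hW
  constructor
  · intro h
    have h1 := lee_conj h S
    rw [show Sᴴ = S from hSherm] at h1
    rwa [sandwich_inv hW] at h1
  · intro h
    have h1 := lee_conj h Si
    rw [show Siᴴ = Si from hSiherm] at h1
    have h2 : Si * (S * Z * S) * Si = Z := by
      calc Si * (S * Z * S) * Si = (Si * S) * Z * (S * Si) := by simp only [Matrix.mul_assoc]
        _ = Z := by rw [h3, h4, Matrix.one_mul, Matrix.mul_one]
    have h5 : Si * 1 * Si = W⁻¹ := by rw [Matrix.mul_one]; exact mpow_inv_half_sq hW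
    rwa [h2, h5] at h1

lemma isRep_id : IsRep (1 : MM k) (fun _ => (1:ℝ)) (1 : MM k) := by
  refine ⟨by simp, by simp, ?_⟩
  simp [diag_const]

lemma mpow_one_matrix (p : ℝ) : mpow (1 : MM k) p = 1 := by
  refine IsRep.ext_funval (isRep_id.mpow_rep p) isRep_id fun i => Real.one_rpow _

lemma unitary_dot {a b : Fin k → ℂ} (hUU' : Uᴴ * U = 1) :
    star (U *ᵥ a) ⬝ᵥ (U *ᵥ b) = star a ⬝ᵥ b := by
  rw [Matrix.star_mulVec, Matrix.dotProduct_mulVec, Matrix.vecMul_vecMul, hUU',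
    Matrix.vecMul_one]

lemma diag_mulVec (f : Fin k → ℂ) (x : Fin k → ℂ) (i : Fin k) :
    (Matrix.diagonal f *ᵥ x) i = f i * x i := by
  simp [Matrix.mulVec, Matrix.diagonal_apply, dotProduct, ite_mul, zero_mul,
    Finset.sum_ite_eq]

/-! ### singular reverse direction of the sandwich lemma -/

lemma qf_herm_conj {S Z : MM k} (hS : S.IsHermitian) (x : Fin k → ℂ) :
    star x ⬝ᵥ ((S * Z * S) *ᵥ x) = star (S *ᵥ x) ⬝ᵥ (Z *ᵥ (S *ᵥ x)) := by
  rw [Matrix.star_mulVec, show Sᴴ = S from hS, ← Matrix.mulVec_mulVec,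
    ← Matrix.mulVec_mulVec, Matrix.dotProduct_mulVec]

lemma sqrt_sandwich_of_conj {W Z : MM k} (hW : W.PosSemidef) (hZ : Z.PosSemidef)
    (h : lee (W * Z * W) W) : lee (mpow W (1/2) * Z * mpow W (1/2)) 1 := by
  obtain ⟨U, d, hrep, hd⟩ := psd_rep hW
  have hSwrep : IsRep U (fun i => d i ^ (1/2:ℝ)) (mpow W (1/2)) := hrep.mpow_rep _
  have hSwherm : (mpow W (1/2)).IsHermitian := mpow_herm hW _
  refine lee_of_herm_re (herm_conj hZ.1 hSwherm) (Matrix.PosSemidef.one).1 fun u => ?_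
  set w : Fin k → ℂ := Uᴴ *ᵥ u with hw
  set v' : Fin k → ℂ := fun i => if d i = 0 then 0 else w i / ((Real.sqrt (d i) : ℝ) : ℂ)
    with hv'
  have sqrt_ne : ∀ i, d i ≠ 0 → ((Real.sqrt (d i) : ℝ) : ℂ) ≠ 0 := by
    intro i h0
    simp only [ne_eq, Complex.ofReal_eq_zero]
    exact fun hc => h0 (by nlinarith [Real.sq_sqrt (hd i), Real.sqrt_nonneg (d i)])
  have hdv : ∀ i, (d i : ℂ) * v' i = ((Real.sqrt (d i) : ℝ) : ℂ) * w i := by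
    intro i
    rw [hv']
    by_cases h0 : d i = 0
    · simp [h0]
    · have h9 : (d i : ℂ) = ((Real.sqrt (d i) : ℝ) : ℂ) * ((Real.sqrt (d i) : ℝ) : ℂ) := by
        rw [← Complex.ofReal_mul, Real.mul_self_sqrt (hd i)]
      simp only [h0, if_false]
      rw [h9, mul_assoc, ← mul_div_assoc, mul_div_cancel_left₀ _ (sqrt_ne i h0)]
  have hUv : Uᴴ *ᵥ (U *ᵥ v') = v' := by
    rw [Matrix.mulVec_mulVec, hrep.hUU', Matrix.one_mulVec]
  have hWv : W *ᵥ (U *ᵥ v') = mpow W (1/2) *ᵥ u := by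
    have e1 : W *ᵥ (U *ᵥ v') = U *ᵥ (Matrix.diagonal (fun i => (d i : ℂ)) *ᵥ v') := by
      rw [hrep.eq, ← Matrix.mulVec_mulVec, ← Matrix.mulVec_mulVec, hUv]
    have e2 : mpow W (1/2) *ᵥ u
        = U *ᵥ (Matrix.diagonal (fun i => ((d i ^ (1/2:ℝ) : ℝ) : ℂ)) *ᵥ w) := by
      rw [hw, hSwrep.eq, ← Matrix.mulVec_mulVec, ← Matrix.mulVec_mulVec]
    rw [e1, e2]
    have e7 : (Matrix.diagonal (fun i => (d i : ℂ)) *ᵥ v')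
        = (Matrix.diagonal (fun i => ((d i ^ (1/2:ℝ) : ℝ) : ℂ)) *ᵥ w) := by
      funext i
      rw [diag_mulVec, diag_mulVec, hdv i, ← Real.sqrt_eq_rpow]
    rw [e7]
  have hle := qf_re_le h (U *ᵥ v')
  rw [qf_herm_conj (hW.1) (U *ᵥ v')] at hle
  rw [qf_herm_conj hSwherm u]
  -- bound the right side of hle
  have key3 : (star (U *ᵥ v') ⬝ᵥ (W *ᵥ (U *ᵥ v'))).re ≤ nsq u := by
    have e3 : star (U *ᵥ v') ⬝ᵥ (W *ᵥ (U *ᵥ v'))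
        = star v' ⬝ᵥ (Matrix.diagonal (fun i => (d i : ℂ)) *ᵥ v') := by
      rw [hrep.eq, ← Matrix.mulVec_mulVec, ← Matrix.mulVec_mulVec, hUv,
        unitary_dot hrep.hUU']
    rw [e3]
    have e4 : ∀ i, (star v' i * (Matrix.diagonal (fun i => (d i : ℂ)) *ᵥ v') i).re
        ≤ (star w i * w i).re := by
      intro i
      rw [diag_mulVec]
      by_cases h0 : d i = 0
      · simp only [hv', h0, if_true, Pi.star_apply]
        simp only [Pi.star_apply, Complex.star_def, ← Complex.normSq_eq_conj_mul_self]
        simp [Complex.normSq_nonneg]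
      · have e8 : star v' i * ((d i : ℂ) * v' i) = star w i * w i := by
          rw [Pi.star_apply, Pi.star_apply, hdv i, hv']
          simp only [h0, if_false]
          rw [star_div₀, Complex.star_def, Complex.conj_ofReal]
          field_simp [sqrt_ne i h0]
        rw [e8]
    have e5 : (star v' ⬝ᵥ (Matrix.diagonal (fun i => (d i : ℂ)) *ᵥ v')).re
        ≤ (star w ⬝ᵥ w).re := by
      rw [dotProduct, dotProduct, Complex.re_sum, Complex.re_sum]
      exact Finset.sum_le_sum fun i _ => e4 i
    have e6 : (star w ⬝ᵥ w) = star u ⬝ᵥ u := by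
      rw [hw]
      refine unitary_dot ?_
      rw [Matrix.conjTranspose_conjTranspose]
      exact hrep.hUU
    calc (star v' ⬝ᵥ (Matrix.diagonal (fun i => (d i : ℂ)) *ᵥ v')).re
        ≤ (star w ⬝ᵥ w).re := e5
      _ = nsq u := by rw [e6]; rfl
  calc (star (mpow W (1/2) *ᵥ u) ⬝ᵥ (Z *ᵥ (mpow W (1/2) *ᵥ u))).re
      = (star (W *ᵥ (U *ᵥ v')) ⬝ᵥ (Z *ᵥ (W *ᵥ (U *ᵥ v')))).re := by rw [hWv]
    _ ≤ (star (U *ᵥ v') ⬝ᵥ (W *ᵥ (U *ᵥ v'))).re := hle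
    _ ≤ nsq u := key3
    _ = (star u ⬝ᵥ ((1 : MM k) *ᵥ u)).re := by rw [Matrix.one_mulVec]; rfl

/-! ### small scalar lemmas -/

lemma posdef_smul_one {c : ℝ} (hc : 0 < c) : (((c:ℂ)) • (1 : MM k)).PosDef := by
  rw [← diag_const]
  exact Matrix.posDef_diagonal_iff.mpr fun i => Complex.zero_lt_real.mpr hc

lemma posdef_smul {c : ℝ} (hc : 0 < c) (h : M.PosDef) : ((c:ℂ) • M).PosDef := by
  refine .of_dotProduct_mulVec_pos (psd_smul hc.le h.posSemidef).1 fun x hx => ?_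
  rw [Matrix.smul_mulVec, dotProduct_smul]
  exact mul_pos (Complex.zero_lt_real.mpr hc) (h.dotProduct_mulVec_pos hx)

lemma smul_one_add_smul_one (a b : ℝ) :
    ((a:ℂ)) • (1 : MM k) + ((b:ℂ)) • 1 = (((a + b : ℝ)):ℂ) • 1 := by
  rw [← add_smul]
  congr 1
  push_cast
  ring

lemma one_add_smul_one (c : ℝ) :
    (1 : MM k) + ((c:ℂ)) • 1 = (((1 + c : ℝ)):ℂ) • 1 := by
  nth_rewrite 1 [← one_smul ℂ (1 : MM k)]
  rw [← add_smul]
  congr 1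
  push_cast
  ring


lemma trace_cyc_sqrt {Q' R' : MM k} (hQ' : Q'.PosSemidef) :
    (mpow Q' (1/2) * R' * mpow Q' (1/2)).trace = (Q' * R').trace := by
  rw [Matrix.trace_mul_cycle (mpow Q' (1/2)) R' (mpow Q' (1/2)), sqrt_mul_self' hQ']

lemma mpow_pert {α : ℝ} (hA : A.PosSemidef) (hα : 0 ≤ α) {e : ℕ → ℝ}
    (he : Filter.Tendsto e Filter.atTop (nhds 0)) :
    Filter.Tendsto (fun j => mpow (A + ((e j : ℝ):ℂ) • 1) α) Filter.atTop (nhds (mpow A α)) := by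
  obtain ⟨U, d, hrep, hd⟩ := psd_rep hA
  have hrepj : ∀ j, IsRep U (fun i => d i + e j) (A + ((e j : ℝ):ℂ) • 1) := fun j =>
    hrep.add (isRep_smul_one hrep (e j))
  have heq : (fun j => mpow (A + ((e j : ℝ):ℂ) • 1) α)
      = fun j => U * Matrix.diagonal (fun i => (((d i + e j)^α : ℝ) : ℂ)) * Uᴴ :=
    funext fun j => ((hrepj j).mpow_rep α).eq
  have heqA : mpow A α = U * Matrix.diagonal (fun i => ((d i ^ α : ℝ) : ℂ)) * Uᴴ :=
    (hrep.mpow_rep α).eq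
  rw [heq, heqA]
  have hG : Continuous (fun v : Fin k → ℝ =>
      U * Matrix.diagonal (fun i => ((v i : ℝ) : ℂ)) * Uᴴ) := by
    refine Continuous.matrix_mul (Continuous.matrix_mul continuous_const ?_) continuous_const
    exact Continuous.matrix_diagonal (continuous_pi fun i =>
      Complex.continuous_ofReal.comp (continuous_apply i))
  have hv : Filter.Tendsto (fun j => (fun i => (d i + e j)^α)) Filter.atTop
      (nhds (fun i => d i ^ α)) := by
    rw [tendsto_pi_nhds]
    intro i
    have hbase : Filter.Tendsto (fun j => d i + e j) Filter.atTop (nhds (d i)) := by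
      have := (tendsto_const_nhds (x := d i) (f := Filter.atTop (α := ℕ))).add he
      simpa using this
    exact ((Real.continuousAt_rpow_const (d i) α (Or.inr hα)).tendsto).comp hbase
  exact (hG.continuousAt.tendsto).comp hv

/-! ### the main theorem modulo dimension-zero degeneracies -/

theorem main' {n m l : ℕ} (hn : 0 < n) (hm : 0 < m)
    (Φ : MM n →ₗ[ℂ] MM l) (Ψ : MM m →ₗ[ℂ] MM l)
    (hΦ : ∀ X, X.PosSemidef → (Φ X).PosSemidef)
    (hΨ : ∀ X, X.PosSemidef → (Ψ X).PosSemidef)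
    (h1 : lee (mpow (Φ 1) (1/2) * Ψ 1 * mpow (Φ 1) (1/2)) 1)
    {A : MM n} {B : MM m} (hA : A.PosSemidef) (hB : B.PosSemidef)
    (hAB : lee (mpow (Φ A) (1/2) * Ψ B * mpow (Φ A) (1/2)) 1)
    (α : ℝ) (hα0 : 0 ≤ α) (hα1 : α ≤ 1) :
    lee (mpow (Φ (mpow A α)) (1/2) * Ψ (mpow B α) * mpow (Φ (mpow A α)) (1/2)) 1 := by
  classical
  -- perturbed objects
  set At : ℝ → MM n := fun t => A + ((t:ℝ):ℂ) • 1 with hAtdef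
  set Bt : ℝ → MM m := fun t => B + ((t:ℝ):ℂ) • 1 with hBtdef
  set TrΦ : MM n →ₗ[ℂ] MM l := (Matrix.traceLinearMap (Fin n) ℂ ℂ).smulRight 1 with hTrΦ
  set TrΨ : MM m →ₗ[ℂ] MM l := (Matrix.traceLinearMap (Fin m) ℂ ℂ).smulRight 1 with hTrΨ
  set Φt : ℝ → (MM n →ₗ[ℂ] MM l) := fun t => Φ + (t:ℂ) • TrΦ with hΦtdef
  set Ψt : ℝ → (MM m →ₗ[ℂ] MM l) := fun t => Ψ + (t:ℂ) • TrΨ with hΨtdef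
  have hΦtapp : ∀ t X, Φt t X = Φ X + (t:ℂ) • (X.trace • (1 : MM l)) := by
    intro t X
    simp [hΦtdef, hTrΦ]
  have hΨtapp : ∀ t X, Ψt t X = Ψ X + (t:ℂ) • (X.trace • (1 : MM l)) := by
    intro t X
    simp [hΨtdef, hTrΨ]
  -- positivity of the perturbed maps
  have keypos : ∀ {p q : ℕ} (Θ : MM p →ₗ[ℂ] MM q), (∀ X, X.PosSemidef → (Θ X).PosSemidef) →
      ∀ {t : ℝ}, 0 ≤ t → ∀ X : MM p, X.PosSemidef →
      (Θ X + (t:ℂ) • (X.trace • (1 : MM q))).PosSemidef := by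
    intro p q Θ hΘ t ht X hX
    obtain ⟨c, hc, htr⟩ := trace_coe hX
    have : (t:ℂ) • (X.trace • (1 : MM q)) = (((t * c : ℝ)):ℂ) • 1 := by
      rw [htr, smul_smul, ← Complex.ofReal_mul]
    rw [this]
    exact (hΘ X hX).add (psd_smul (mul_nonneg ht hc) Matrix.PosSemidef.one)
  have keystrict : ∀ {p q : ℕ}, 0 < p → ∀ (Θ : MM p →ₗ[ℂ] MM q),
      (∀ X, X.PosSemidef → (Θ X).PosSemidef) →
      ∀ {t : ℝ}, 0 < t → ∀ X : MM p, X.PosDef →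
      (Θ X + (t:ℂ) • (X.trace • (1 : MM q))).PosDef := by
    intro p q hp Θ hΘ t ht X hX
    obtain ⟨c, hc, htr⟩ := trace_pos_coe hp hX
    have heq : (t:ℂ) • (X.trace • (1 : MM q)) = (((t * c : ℝ)):ℂ) • 1 := by
      rw [htr, smul_smul, ← Complex.ofReal_mul]
    rw [add_comm, heq]
    exact (posdef_smul_one (mul_pos ht hc)).add_posSemidef (hΘ X hX.posSemidef)
  have hΦtpos : ∀ {t : ℝ}, 0 ≤ t → ∀ X, X.PosSemidef → ((Φt t) X).PosSemidef := by
    intro t ht X hX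
    rw [hΦtapp]
    exact keypos Φ hΦ ht X hX
  have hΨtpos : ∀ {t : ℝ}, 0 ≤ t → ∀ X, X.PosSemidef → ((Ψt t) X).PosSemidef := by
    intro t ht X hX
    rw [hΨtapp]
    exact keypos Ψ hΨ ht X hX
  have hΦtstrict : ∀ {t : ℝ}, 0 < t → ∀ X, X.PosDef → ((Φt t) X).PosDef := by
    intro t ht X hX
    rw [hΦtapp]
    exact keystrict hn Φ hΦ ht X hX
  have hΨtstrict : ∀ {t : ℝ}, 0 < t → ∀ X, X.PosDef → ((Ψt t) X).PosDef := by
    intro t ht X hX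
    rw [hΨtapp]
    exact keystrict hm Ψ hΨ ht X hX
  have hAtpos : ∀ {t : ℝ}, 0 < t → (At t).PosDef := by
    intro t ht
    rw [hAtdef]
    simp only []
    rw [add_comm]
    exact (posdef_smul_one ht).add_posSemidef hA
  have hBtpos : ∀ {t : ℝ}, 0 < t → (Bt t).PosDef := by
    intro t ht
    rw [hBtdef]
    simp only []
    rw [add_comm]
    exact (posdef_smul_one ht).add_posSemidef hB
  -- the remainders
  set Pm := Φ A with hPm
  set Qm := Ψ B with hQm
  set P1 := Φ (1 : MM n) with hP1
  set Q1 := Ψ (1 : MM m) with hQ1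
  have hPmpsd : Pm.PosSemidef := hΦ _ hA
  have hQmpsd : Qm.PosSemidef := hΨ _ hB
  have hP1psd : P1.PosSemidef := hΦ _ Matrix.PosSemidef.one
  have hQ1psd : Q1.PosSemidef := hΨ _ Matrix.PosSemidef.one
  have hRPpsd : ∀ {t : ℝ}, 0 < t → (Φt t (At t) - Pm).PosSemidef := by
    intro t ht
    have e1 : Φt t (At t) - Pm = Φ ((t:ℂ) • 1) + (t:ℂ) • ((At t).trace • 1) := by
      rw [hΦtapp, hAtdef]
      simp only [map_add]
      abel
    rw [e1]
    obtain ⟨c, hc, htr⟩ := trace_coe (hAtpos ht).posSemidef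
    have e2 : (t:ℂ) • ((At t).trace • (1 : MM l)) = (((t*c : ℝ)):ℂ) • 1 := by
      rw [htr, smul_smul, ← Complex.ofReal_mul]
    rw [e2]
    exact (hΦ _ (psd_smul ht.le Matrix.PosSemidef.one)).add
      (psd_smul (mul_nonneg ht.le hc) Matrix.PosSemidef.one)
  have hRQpsd : ∀ {t : ℝ}, 0 < t → (Ψt t (Bt t) - Qm).PosSemidef := by
    intro t ht
    have e1 : Ψt t (Bt t) - Qm = Ψ ((t:ℂ) • 1) + (t:ℂ) • ((Bt t).trace • 1) := by
      rw [hΨtapp, hBtdef]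
      simp only [map_add]
      abel
    rw [e1]
    obtain ⟨c, hc, htr⟩ := trace_coe (hBtpos ht).posSemidef
    have e2 : (t:ℂ) • ((Bt t).trace • (1 : MM l)) = (((t*c : ℝ)):ℂ) • 1 := by
      rw [htr, smul_smul, ← Complex.ofReal_mul]
    rw [e2]
    exact (hΨ _ (psd_smul ht.le Matrix.PosSemidef.one)).add
      (psd_smul (mul_nonneg ht.le hc) Matrix.PosSemidef.one)
  have hRP1psd : ∀ {t : ℝ}, 0 < t → (Φt t 1 - P1).PosSemidef := by
    intro t ht
    have e1 : Φt t 1 - P1 = (t:ℂ) • ((1 : MM n).trace • (1 : MM l)) := by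
      rw [hΦtapp]
      abel
    rw [e1, Matrix.trace_one]
    rw [show ((Fintype.card (Fin n)) : ℂ) • (1 : MM l) = (((Fintype.card (Fin n) : ℝ)):ℂ) • 1
      from by push_cast; rfl]
    rw [smul_smul, ← Complex.ofReal_mul]
    exact psd_smul (by positivity) Matrix.PosSemidef.one
  have hRQ1psd : ∀ {t : ℝ}, 0 < t → (Ψt t 1 - Q1).PosSemidef := by
    intro t ht
    have e1 : Ψt t 1 - Q1 = (t:ℂ) • ((1 : MM m).trace • (1 : MM l)) := by
      rw [hΨtapp]
      abel
    rw [e1, Matrix.trace_one]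
    rw [show ((Fintype.card (Fin m)) : ℂ) • (1 : MM l) = (((Fintype.card (Fin m) : ℝ)):ℂ) • 1
      from by push_cast; rfl]
    rw [smul_smul, ← Complex.ofReal_mul]
    exact psd_smul (by positivity) Matrix.PosSemidef.one
  -- sqrt matrices of the unperturbed images
  set Sp := mpow Pm (1/2) with hSp
  set Sp1 := mpow P1 (1/2) with hSp1
  -- the general two-step bound
  have bound : ∀ (P' Q' P'' Q'' : MM l), P'.PosSemidef → Q'.PosSemidef → P''.PosDef →
      Q''.PosSemidef → (P'' - P').PosSemidef → (Q'' - Q').PosSemidef →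
      lee (mpow P' (1/2) * Q' * mpow P' (1/2)) 1 →
      lee (mpow P'' (1/2) * Q'' * mpow P'' (1/2))
        ((((1 + (mpow P' (1/2) * (Q'' - Q') * mpow P' (1/2)).trace.re
          + (Q'' * (P'' - P')).trace.re : ℝ)):ℂ) • 1) := by
    intro P' Q' P'' Q'' hP' hQ' hP'' hQ'' hdP hdQ hsand
    set a := (mpow P' (1/2) * (Q'' - Q') * mpow P' (1/2)).trace.re with ha
    set b := (Q'' * (P'' - P')).trace.re with hb
    have hSpherm : (mpow P' (1/2)).IsHermitian := mpow_herm hP' _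
    have hdQc : (mpow P' (1/2) * (Q'' - Q') * mpow P' (1/2)).PosSemidef := by
      have := hdQ.mul_mul_conjTranspose_same (mpow P' (1/2))
      rwa [show (mpow P' (1/2))ᴴ = mpow P' (1/2) from hSpherm] at this
    have hann : 0 ≤ a := trace_re_nonneg hdQc
    have step_i : lee (mpow P' (1/2) * Q'' * mpow P' (1/2)) ((((1 + a : ℝ)):ℂ) • 1) := by
      have hsplit : mpow P' (1/2) * Q'' * mpow P' (1/2)
          = mpow P' (1/2) * Q' * mpow P' (1/2)
            + mpow P' (1/2) * (Q'' - Q') * mpow P' (1/2) := by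
        rw [← Matrix.add_mul, ← Matrix.mul_add, add_sub_cancel]
      rw [hsplit, ← one_add_smul_one]
      exact lee_add hsand (lee_trace_smul_one hdQc)
    have step_ii := flip hP' hQ'' (by linarith) step_i
    set Sq := mpow Q'' (1/2) with hSq
    have hSqherm : Sq.IsHermitian := mpow_herm hQ'' _
    have hdPc : (Sq * (P'' - P') * Sq).PosSemidef := by
      have := hdP.mul_mul_conjTranspose_same Sq
      rwa [show Sqᴴ = Sq from hSqherm] at this
    have hbeq : (Sq * (P'' - P') * Sq).trace.re = b := by
      rw [hSq, trace_cyc_sqrt hQ'']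
    have hbnn : 0 ≤ b := by rw [← hbeq]; exact trace_re_nonneg hdPc
    have step_iii : lee (Sq * P'' * Sq) ((((1 + a + b : ℝ)):ℂ) • 1) := by
      have hsplit : Sq * P'' * Sq = Sq * P' * Sq + Sq * (P'' - P') * Sq := by
        rw [← Matrix.add_mul, ← Matrix.mul_add, add_sub_cancel]
      rw [hsplit]
      have h2 := lee_add step_ii (lee_trace_smul_one hdPc)
      rw [hbeq, smul_one_add_smul_one] at h2
      exact h2
    exact flip hQ'' hP''.posSemidef (by linarith) step_iii
  -- instantiate for both pairs, for t > 0
  set c1 : ℝ → ℝ := fun t => (Sp * (Ψt t (Bt t) - Qm) * Sp).trace.re with hc1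
  set c2 : ℝ → ℝ := fun t => (Ψt t (Bt t) * (Φt t (At t) - Pm)).trace.re with hc2
  set c3 : ℝ → ℝ := fun t => (Sp1 * (Ψt t 1 - Q1) * Sp1).trace.re with hc3
  set c4 : ℝ → ℝ := fun t => (Ψt t 1 * (Φt t 1 - P1)).trace.re with hc4
  set Kt : ℝ → ℝ := fun t => 1 + (c1 t + c2 t + c3 t + c4 t) with hKtdef
  have hc1nn : ∀ {t : ℝ}, 0 < t → 0 ≤ c1 t := by
    intro t ht
    refine trace_re_nonneg ?_
    have := (hRQpsd ht).mul_mul_conjTranspose_same Sp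
    rwa [show Spᴴ = Sp from mpow_herm hPmpsd _] at this
  have hc2nn : ∀ {t : ℝ}, 0 < t → 0 ≤ c2 t := by
    intro t ht
    have hQt : (Ψt t (Bt t)).PosSemidef := hΨtpos ht.le _ (hBtpos ht).posSemidef
    have h2 : (mpow (Ψt t (Bt t)) (1/2) * (Φt t (At t) - Pm)
        * mpow (Ψt t (Bt t)) (1/2)).PosSemidef := by
      have := (hRPpsd ht).mul_mul_conjTranspose_same (mpow (Ψt t (Bt t)) (1/2))
      rwa [show (mpow (Ψt t (Bt t)) (1/2))ᴴ = mpow (Ψt t (Bt t)) (1/2)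
        from mpow_herm hQt _] at this
    have := trace_re_nonneg h2
    rwa [trace_cyc_sqrt hQt] at this
  have hc3nn : ∀ {t : ℝ}, 0 < t → 0 ≤ c3 t := by
    intro t ht
    refine trace_re_nonneg ?_
    have := (hRQ1psd ht).mul_mul_conjTranspose_same Sp1
    rwa [show Sp1ᴴ = Sp1 from mpow_herm hP1psd _] at this
  have hc4nn : ∀ {t : ℝ}, 0 < t → 0 ≤ c4 t := by
    intro t ht
    have hQt : (Ψt t 1).PosSemidef := hΨtpos ht.le _ Matrix.PosSemidef.one
    have h2 : (mpow (Ψt t 1) (1/2) * (Φt t 1 - P1) * mpow (Ψt t 1) (1/2)).PosSemidef := by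
      have := (hRP1psd ht).mul_mul_conjTranspose_same (mpow (Ψt t 1) (1/2))
      rwa [show (mpow (Ψt t 1) (1/2))ᴴ = mpow (Ψt t 1) (1/2) from mpow_herm hQt _] at this
    have := trace_re_nonneg h2
    rwa [trace_cyc_sqrt hQt] at this
  have hKt1 : ∀ {t : ℝ}, 0 < t → 1 ≤ Kt t := by
    intro t ht
    have := hc1nn ht; have := hc2nn ht; have := hc3nn ht; have := hc4nn ht
    rw [hKtdef]
    simp only []
    linarith
  have mainbound : ∀ {t : ℝ}, 0 < t →
      lee (mpow (Φt t (At t)) (1/2) * Ψt t (Bt t) * mpow (Φt t (At t)) (1/2))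
        (((Kt t : ℝ):ℂ) • 1) := by
    intro t ht
    have hb := bound Pm Qm (Φt t (At t)) (Ψt t (Bt t)) hPmpsd hQmpsd
      (hΦtstrict ht _ (hAtpos ht)) (hΨtpos ht.le _ (hBtpos ht).posSemidef)
      (hRPpsd ht) (hRQpsd ht) hAB
    refine lee_trans hb (lee_smul_one_mono ?_)
    have := hc3nn ht; have := hc4nn ht
    rw [hKtdef]
    simp only []
    rw [hc1, hc2]
    simp only []
    linarith
  have onebound : ∀ {t : ℝ}, 0 < t →
      lee (mpow (Φt t 1) (1/2) * Ψt t 1 * mpow (Φt t 1) (1/2)) (((Kt t : ℝ):ℂ) • 1) := by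
    intro t ht
    have hb := bound P1 Q1 (Φt t 1) (Ψt t 1) hP1psd hQ1psd
      (hΦtstrict ht _ Matrix.PosDef.one) (hΨtpos ht.le _ Matrix.PosSemidef.one)
      (hRP1psd ht) (hRQ1psd ht) h1
    refine lee_trans hb (lee_smul_one_mono ?_)
    have := hc1nn ht; have := hc2nn ht
    rw [hKtdef]
    simp only []
    rw [hc3, hc4]
    simp only []
    linarith
  -- apply the core theorem
  have hDpsd : ∀ {t : ℝ}, 0 < t →
      lee (Φt t (mpow (At t) α) * ((((Kt t)⁻¹ : ℝ):ℂ) • Ψt t (mpow (Bt t) α))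
        * Φt t (mpow (At t) α)) (Φt t (mpow (At t) α)) := by
    intro t ht
    have hKpos : 0 < Kt t := lt_of_lt_of_le one_pos (hKt1 ht)
    set Ψ' : MM m →ₗ[ℂ] MM l := (((Kt t)⁻¹ : ℝ):ℂ) • Ψt t with hΨ'
    have hΨ'app : ∀ X, Ψ' X = (((Kt t)⁻¹ : ℝ):ℂ) • Ψt t X := fun X => rfl
    have hΨ'pos : ∀ X, X.PosSemidef → (Ψ' X).PosSemidef := by
      intro X hX
      rw [hΨ'app]
      exact psd_smul (by positivity) (hΨtpos ht.le _ hX)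
    have hΨ'strict : ∀ X, X.PosDef → (Ψ' X).PosDef := by
      intro X hX
      rw [hΨ'app]
      exact posdef_smul (by positivity) (hΨtstrict ht _ hX)
    have scale : ∀ {Z W : MM l}, W.PosDef → lee (mpow W (1/2) * Z * mpow W (1/2))
        (((Kt t : ℝ):ℂ) • 1) →
        lee ((((Kt t)⁻¹ : ℝ):ℂ) • Z) W⁻¹ := by
      intro Z W hW hlee
      refine (lee_inv_iff_sqrt hW).mpr ?_
      have h2 := lee_smul (c := (Kt t)⁻¹) (by positivity) hlee
      have e1 : (((Kt t)⁻¹ : ℝ):ℂ) • (((Kt t : ℝ):ℂ) • (1 : MM l)) = 1 := by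
        rw [smul_smul, ← Complex.ofReal_mul, inv_mul_cancel₀ (ne_of_gt hKpos)]
        simp
      have e2 : (((Kt t)⁻¹ : ℝ):ℂ) • (mpow W (1/2) * Z * mpow W (1/2))
          = mpow W (1/2) * ((((Kt t)⁻¹ : ℝ):ℂ) • Z) * mpow W (1/2) := by
        rw [Matrix.mul_smul, Matrix.smul_mul]
      rw [e1, e2] at h2
      exact h2
    have hcore := core (Φt t) Ψ' (hΦtpos ht.le) hΨ'pos (hΦtstrict ht) hΨ'strict
      (hAtpos ht) (hBtpos ht)
      (by
        rw [hΨ'app]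
        exact scale (hΦtstrict ht _ Matrix.PosDef.one) (onebound ht))
      (by
        rw [hΨ'app]
        exact scale (hΦtstrict ht _ (hAtpos ht)) (mainbound ht))
      α hα0 hα1
    have := (lee_inv_iff_conj (hΦtstrict ht _ (mpow_posdef (hAtpos ht) α))).mp hcore
    rwa [hΨ'app] at this
  -- pass to the limit
  set e : ℕ → ℝ := fun j => 1 / ((j:ℝ) + 1) with hedef
  have hepos : ∀ j, 0 < e j := fun j => by rw [hedef]; positivity
  have he0 : Filter.Tendsto e Filter.atTop (nhds 0) := tendsto_one_div_add_atTop_nhds_zero_nat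
  have he0C : Filter.Tendsto (fun j => ((e j : ℝ):ℂ)) Filter.atTop (nhds 0) := by
    have := Complex.continuous_ofReal.continuousAt.tendsto.comp he0
    exact this
  have TA : Filter.Tendsto (fun j => mpow (At (e j)) α) Filter.atTop (nhds (mpow A α)) :=
    mpow_pert hA hα0 he0
  have TB : Filter.Tendsto (fun j => mpow (Bt (e j)) α) Filter.atTop (nhds (mpow B α)) :=
    mpow_pert hB hα0 he0
  have Tmap : ∀ {p q : ℕ} (Θ : MM p →ₗ[ℂ] MM q) (C : MM p) (MT : ℕ → MM p),
      Filter.Tendsto MT Filter.atTop (nhds C) →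
      Filter.Tendsto (fun j => Θ (MT j) + ((e j : ℝ):ℂ) • ((MT j).trace • (1 : MM q)))
        Filter.atTop (nhds (Θ C)) := by
    intro p q Θ C MT hMT
    have hΘc : Continuous (fun M : MM p => Θ M) := LinearMap.continuous_of_finiteDimensional _
    have t1 : Filter.Tendsto (fun j => Θ (MT j)) Filter.atTop (nhds (Θ C)) :=
      (hΘc.continuousAt.tendsto).comp hMT
    have t2 : Filter.Tendsto (fun j => (MT j).trace • (1 : MM q)) Filter.atTop
        (nhds (C.trace • 1)) := by
      have htr : Continuous (fun M : MM p => M.trace) := Continuous.matrix_trace continuous_id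
      exact ((htr.continuousAt.tendsto).comp hMT).smul tendsto_const_nhds
    have t3 := he0C.smul t2
    rw [zero_smul] at t3
    have := t1.add t3
    rwa [add_zero] at this
  have TAt : Filter.Tendsto (fun j => At (e j)) Filter.atTop (nhds A) := by
    have := (tendsto_const_nhds (x := A) (f := Filter.atTop (α := ℕ))).add (he0C.smul
      (tendsto_const_nhds (x := (1 : MM n))))
    rwa [zero_smul, add_zero] at this
  have TBt : Filter.Tendsto (fun j => Bt (e j)) Filter.atTop (nhds B) := by
    have := (tendsto_const_nhds (x := B) (f := Filter.atTop (α := ℕ))).add (he0C.smul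
      (tendsto_const_nhds (x := (1 : MM m))))
    rwa [zero_smul, add_zero] at this
  have TΦα : Filter.Tendsto (fun j => Φt (e j) (mpow (At (e j)) α)) Filter.atTop
      (nhds (Φ (mpow A α))) := by
    have := Tmap Φ (mpow A α) (fun j => mpow (At (e j)) α) TA
    refine this.congr fun j => ?_
    rw [hΦtapp]
  have TΨα : Filter.Tendsto (fun j => Ψt (e j) (mpow (Bt (e j)) α)) Filter.atTop
      (nhds (Ψ (mpow B α))) := by
    have := Tmap Ψ (mpow B α) (fun j => mpow (Bt (e j)) α) TB
    refine this.congr fun j => ?_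
    rw [hΨtapp]
  have TQt : Filter.Tendsto (fun j => Ψt (e j) (Bt (e j))) Filter.atTop (nhds Qm) := by
    have := Tmap Ψ B (fun j => Bt (e j)) TBt
    refine this.congr fun j => ?_
    rw [hΨtapp]
  have TPt : Filter.Tendsto (fun j => Φt (e j) (At (e j))) Filter.atTop (nhds Pm) := by
    have := Tmap Φ A (fun j => At (e j)) TAt
    refine this.congr fun j => ?_
    rw [hΦtapp]
  have TQ1t : Filter.Tendsto (fun j => Ψt (e j) 1) Filter.atTop (nhds Q1) := by
    have := Tmap Ψ 1 (fun _ => 1) tendsto_const_nhds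
    refine this.congr fun j => ?_
    rw [hΨtapp]
  have TP1t : Filter.Tendsto (fun j => Φt (e j) 1) Filter.atTop (nhds P1) := by
    have := Tmap Φ 1 (fun _ => 1) tendsto_const_nhds
    refine this.congr fun j => ?_
    rw [hΦtapp]
  have mul_tendsto : ∀ {q : ℕ} {F G : ℕ → MM q} {Lf Lg : MM q},
      Filter.Tendsto F Filter.atTop (nhds Lf) → Filter.Tendsto G Filter.atTop (nhds Lg) →
      Filter.Tendsto (fun j => F j * G j) Filter.atTop (nhds (Lf * Lg)) := by
    intro q F G Lf Lg hF hG
    have hcont : Continuous (fun pa : MM q × MM q => pa.1 * pa.2) :=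
      Continuous.matrix_mul continuous_fst continuous_snd
    exact (hcont.continuousAt.tendsto).comp (hF.prodMk_nhds hG)
  have Ttrre : ∀ {q : ℕ} {F : ℕ → MM q} {Lf : MM q},
      Filter.Tendsto F Filter.atTop (nhds Lf) →
      Filter.Tendsto (fun j => (F j).trace.re) Filter.atTop (nhds Lf.trace.re) := by
    intro q F Lf hF
    have : Continuous (fun M : MM q => M.trace.re) :=
      Complex.continuous_re.comp (Continuous.matrix_trace continuous_id)
    exact (this.continuousAt.tendsto).comp hF
  have TK : Filter.Tendsto (fun j => Kt (e j)) Filter.atTop (nhds 1) := by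
    have tc1 : Filter.Tendsto (fun j => c1 (e j)) Filter.atTop (nhds 0) := by
      have hsub := TQt.sub (tendsto_const_nhds (x := Qm))
      rw [sub_self] at hsub
      have := Ttrre (mul_tendsto (mul_tendsto (tendsto_const_nhds (x := Sp)) hsub)
        (tendsto_const_nhds (x := Sp)))
      simpa using this
    have tc2 : Filter.Tendsto (fun j => c2 (e j)) Filter.atTop (nhds 0) := by
      have hsub := TPt.sub (tendsto_const_nhds (x := Pm))
      rw [sub_self] at hsub
      have := Ttrre (mul_tendsto TQt hsub)
      simpa using this
    have tc3 : Filter.Tendsto (fun j => c3 (e j)) Filter.atTop (nhds 0) := by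
      have hsub := TQ1t.sub (tendsto_const_nhds (x := Q1))
      rw [sub_self] at hsub
      have := Ttrre (mul_tendsto (mul_tendsto (tendsto_const_nhds (x := Sp1)) hsub)
        (tendsto_const_nhds (x := Sp1)))
      simpa using this
    have tc4 : Filter.Tendsto (fun j => c4 (e j)) Filter.atTop (nhds 0) := by
      have hsub := TP1t.sub (tendsto_const_nhds (x := P1))
      rw [sub_self] at hsub
      have := Ttrre (mul_tendsto TQ1t hsub)
      simpa using this
    have := (tendsto_const_nhds (x := (1:ℝ)) (f := Filter.atTop (α := ℕ))).add
      (((tc1.add tc2).add tc3).add tc4)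
    simp only [add_zero] at this
    refine this.congr fun j => ?_
    rw [hKtdef]
  have TKinv : Filter.Tendsto (fun j => (((Kt (e j))⁻¹ : ℝ):ℂ)) Filter.atTop (nhds 1) := by
    have h2 := TK.inv₀ one_ne_zero
    rw [inv_one] at h2
    have h3 := Complex.continuous_ofReal.continuousAt.tendsto.comp h2
    have h4 : Filter.Tendsto (fun j => (((Kt (e j))⁻¹ : ℝ):ℂ)) Filter.atTop
        (nhds ((1:ℝ):ℂ)) := h3
    simpa using h4
  -- the limit matrix
  have TD : Filter.Tendsto (fun j =>
      Φt (e j) (mpow (At (e j)) α) - Φt (e j) (mpow (At (e j)) α)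
        * ((((Kt (e j))⁻¹ : ℝ):ℂ) • Ψt (e j) (mpow (Bt (e j)) α))
        * Φt (e j) (mpow (At (e j)) α)) Filter.atTop
      (nhds (Φ (mpow A α) - Φ (mpow A α) * Ψ (mpow B α) * Φ (mpow A α))) := by
    have tmid := TKinv.smul TΨα
    rw [one_smul] at tmid
    exact TΦα.sub (mul_tendsto (mul_tendsto TΦα tmid) TΦα)
  have hconc : (Φ (mpow A α) - Φ (mpow A α) * Ψ (mpow B α) * Φ (mpow A α)).PosSemidef :=
    psd_lim (fun j => hDpsd (hepos j)) TD
  exact sqrt_sandwich_of_conj (hΦ _ (mpow_psd hA α)) (hΨ _ (mpow_psd hB α)) hconc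


/-! ### removing the dimension hypotheses -/

theorem mainB {n m l : ℕ} (hm : 0 < m)
    (Φ : MM n →ₗ[ℂ] MM l) (Ψ : MM m →ₗ[ℂ] MM l)
    (hΦ : ∀ X, X.PosSemidef → (Φ X).PosSemidef)
    (hΨ : ∀ X, X.PosSemidef → (Ψ X).PosSemidef)
    (h1 : lee (mpow (Φ 1) (1/2) * Ψ 1 * mpow (Φ 1) (1/2)) 1)
    {A : MM n} {B : MM m} (hA : A.PosSemidef) (hB : B.PosSemidef)
    (hAB : lee (mpow (Φ A) (1/2) * Ψ B * mpow (Φ A) (1/2)) 1)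
    (α : ℝ) (hα0 : 0 ≤ α) (hα1 : α ≤ 1) :
    lee (mpow (Φ (mpow A α)) (1/2) * Ψ (mpow B α) * mpow (Φ (mpow A α)) (1/2)) 1 := by
  rcases Nat.eq_zero_or_pos n with hn | hn
  · subst hn
    set Φ' : MM 1 →ₗ[ℂ] MM l := (Matrix.traceLinearMap (Fin 1) ℂ ℂ).smulRight (Φ 1) with hΦ'
    have hΦ'app : ∀ X : MM 1, Φ' X = X.trace • Φ 1 := fun X => rfl
    have hΦ'pos : ∀ X, X.PosSemidef → (Φ' X).PosSemidef := by
      intro X hX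
      rw [hΦ'app]
      obtain ⟨c, hc, htr⟩ := trace_coe hX
      rw [htr]
      exact psd_smul hc (hΦ _ Matrix.PosSemidef.one)
    have hΦ'1 : Φ' 1 = Φ 1 := by
      rw [hΦ'app, Matrix.trace_one]
      simp
    have hAone : A = 1 := Subsingleton.elim A 1
    have hconc := main' one_pos hm Φ' Ψ hΦ'pos hΨ
      (by rw [hΦ'1]; exact h1)
      (Matrix.PosSemidef.one) hB
      (by
        rw [hΦ'1]
        rw [hAone] at hAB
        exact hAB)
      α hα0 hα1
    rw [mpow_one_matrix, hΦ'1] at hconc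
    rw [show mpow A α = (1 : MM 0) from Subsingleton.elim _ _]
    exact hconc
  · exact main' hn hm Φ Ψ hΦ hΨ h1 hA hB hAB α hα0 hα1

theorem mainAll {n m l : ℕ}
    (Φ : MM n →ₗ[ℂ] MM l) (Ψ : MM m →ₗ[ℂ] MM l)
    (hΦ : ∀ X, X.PosSemidef → (Φ X).PosSemidef)
    (hΨ : ∀ X, X.PosSemidef → (Ψ X).PosSemidef)
    (h1 : lee (mpow (Φ 1) (1/2) * Ψ 1 * mpow (Φ 1) (1/2)) 1)
    {A : MM n} {B : MM m} (hA : A.PosSemidef) (hB : B.PosSemidef)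
    (hAB : lee (mpow (Φ A) (1/2) * Ψ B * mpow (Φ A) (1/2)) 1)
    (α : ℝ) (hα0 : 0 ≤ α) (hα1 : α ≤ 1) :
    lee (mpow (Φ (mpow A α)) (1/2) * Ψ (mpow B α) * mpow (Φ (mpow A α)) (1/2)) 1 := by
  rcases Nat.eq_zero_or_pos m with hm | hm
  · subst hm
    set Ψ' : MM 1 →ₗ[ℂ] MM l := (Matrix.traceLinearMap (Fin 1) ℂ ℂ).smulRight (Ψ 1) with hΨ'
    have hΨ'app : ∀ X : MM 1, Ψ' X = X.trace • Ψ 1 := fun X => rfl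
    have hΨ'pos : ∀ X, X.PosSemidef → (Ψ' X).PosSemidef := by
      intro X hX
      rw [hΨ'app]
      obtain ⟨c, hc, htr⟩ := trace_coe hX
      rw [htr]
      exact psd_smul hc (hΨ _ Matrix.PosSemidef.one)
    have hΨ'1 : Ψ' 1 = Ψ 1 := by
      rw [hΨ'app, Matrix.trace_one]
      simp
    have hBone : B = 1 := Subsingleton.elim B 1
    have hconc := mainB one_pos Φ Ψ' hΦ hΨ'pos
      (by rw [hΨ'1]; exact h1)
      hA (Matrix.PosSemidef.one)
      (by
        rw [hΨ'1]
        rw [hBone] at hAB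
        exact hAB)
      α hα0 hα1
    rw [mpow_one_matrix, hΨ'1] at hconc
    rw [show mpow B α = (1 : MM 0) from Subsingleton.elim _ _]
    exact hconc
  · exact mainB hm Φ Ψ hΦ hΨ h1 hA hB hAB α hα0 hα1

end PowerContraction

/-- If `Φ(I)^{1/2} Ψ(I) Φ(I)^{1/2} ≤ I` and `Φ(A)^{1/2} Ψ(B) Φ(A)^{1/2} ≤ I`, then
`Φ(A^α)^{1/2} Ψ(B^α) Φ(A^α)^{1/2} ≤ I` for all `0 ≤ α ≤ 1`. -/
theorem power_contraction_of_positive_maps {n m l : ℕ}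
    (Φ : Matrix (Fin n) (Fin n) ℂ →ₗ[ℂ] Matrix (Fin l) (Fin l) ℂ)
    (Ψ : Matrix (Fin m) (Fin m) ℂ →ₗ[ℂ] Matrix (Fin l) (Fin l) ℂ)
    (hΦ : ∀ X, X.PosSemidef → (Φ X).PosSemidef)
    (hΨ : ∀ X, X.PosSemidef → (Ψ X).PosSemidef)
    (h1 : ((1 : Matrix (Fin l) (Fin l) ℂ) -
      mpow (Φ 1) (1/2) * Ψ 1 * mpow (Φ 1) (1/2)).PosSemidef)
    (A : Matrix (Fin n) (Fin n) ℂ) (B : Matrix (Fin m) (Fin m) ℂ)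
    (hA : A.PosSemidef) (hB : B.PosSemidef)
    (hAB : ((1 : Matrix (Fin l) (Fin l) ℂ) -
      mpow (Φ A) (1/2) * Ψ B * mpow (Φ A) (1/2)).PosSemidef)
    (α : ℝ) (hα0 : 0 ≤ α) (hα1 : α ≤ 1) :
    ((1 : Matrix (Fin l) (Fin l) ℂ) -
      mpow (Φ (mpow A α)) (1/2) * Ψ (mpow B α) * mpow (Φ (mpow A α)) (1/2)).PosSemidef :=
  PowerContraction.mainAll Φ Ψ hΦ hΨ h1 hA hB hAB α hα0 hα1
end

section
/- Let a, b ∈ [0,∞)^n be decreasing sequences with a weakly log-majorized by b (i.e., ∏_{i=1}^k a_i ≤ ∏_{i=1}^k b_i for all k). Then a is weakly majorized by b, i.e., ∑_{i=1}^k a_i ≤ ∑_{i=1}^k b_i for all k = 1,…,n. -/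
open Finset

private lemma my_filter_range (n k : ℕ) (hk : k ≤ n) :
    (Finset.range n).filter (fun i => i < k) = Finset.range k := by
  ext i; simp only [Finset.mem_filter, Finset.mem_range]; omega

private lemma my_sum_conv {n k : ℕ} (hk : k ≤ n) (f : Fin n → ℝ) (F : ℕ → ℝ)
    (hF : ∀ i : Fin n, F (i : ℕ) = f i) :
    ∑ i ∈ Finset.univ.filter (fun i : Fin n => (i : ℕ) < k), f i =
      ∑ i ∈ Finset.range k, F i := by
  rw [Finset.sum_filter]
  have h1 : ∑ i : Fin n, (if (i : ℕ) < k then f i else 0)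
      = ∑ i : Fin n, (fun j : ℕ => if j < k then F j else 0) (i : ℕ) := by
    refine Finset.sum_congr rfl fun i _ => ?_
    simp [hF i]
  refine h1.trans ((Fin.sum_univ_eq_sum_range (fun j : ℕ => if j < k then F j else 0) n).trans ?_)
  rw [← Finset.sum_filter, my_filter_range n k hk]

private lemma my_prod_conv {n k : ℕ} (hk : k ≤ n) (f : Fin n → ℝ) (F : ℕ → ℝ)
    (hF : ∀ i : Fin n, F (i : ℕ) = f i) :
    ∏ i ∈ Finset.univ.filter (fun i : Fin n => (i : ℕ) < k), f i =
      ∏ i ∈ Finset.range k, F i := by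
  rw [Finset.prod_filter]
  have h1 : ∏ i : Fin n, (if (i : ℕ) < k then f i else 1)
      = ∏ i : Fin n, (fun j : ℕ => if j < k then F j else 1) (i : ℕ) := by
    refine Finset.prod_congr rfl fun i _ => ?_
    simp [hF i]
  refine h1.trans ((Fin.prod_univ_eq_prod_range (fun j : ℕ => if j < k then F j else 1) n).trans ?_)
  rw [← Finset.prod_filter, my_filter_range n k hk]

private lemma my_abel (c d : ℕ → ℝ) (hc : Antitone c) (hc0 : ∀ i, 0 ≤ c i) :
    ∀ k : ℕ, (∀ j ≤ k, ∑ i ∈ Finset.range j, d i ≤ 0) →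
      ∑ i ∈ Finset.range k, c i * d i ≤ c k * ∑ i ∈ Finset.range k, d i := by
  intro k
  induction k with
  | zero => simp
  | succ k ih =>
    intro hD
    have h1 := ih fun j hj => hD j (Nat.le_succ_of_le hj)
    have hDk1 : ∑ i ∈ Finset.range (k + 1), d i ≤ 0 := hD (k + 1) le_rfl
    have h3 : c k * ∑ i ∈ Finset.range (k + 1), d i ≤
        c (k + 1) * ∑ i ∈ Finset.range (k + 1), d i :=
      mul_le_mul_of_nonpos_right (hc (Nat.le_succ k)) hDk1
    rw [Finset.sum_range_succ] at h3 ⊢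
    rw [Finset.sum_range_succ (f := d)]
    nlinarith [h1, h3]

private lemma my_pos_case (A B : ℕ → ℝ) (hA : Antitone A) (hA0 : ∀ i, 0 ≤ A i) (k : ℕ)
    (hpos : ∀ i < k, 0 < A i ∧ 0 < B i)
    (hlog : ∀ j ≤ k, ∏ i ∈ Finset.range j, A i ≤ ∏ i ∈ Finset.range j, B i) :
    ∑ i ∈ Finset.range k, A i ≤ ∑ i ∈ Finset.range k, B i := by
  set d : ℕ → ℝ := fun i => Real.log (A i) - Real.log (B i) with hd
  have hD : ∀ j ≤ k, ∑ i ∈ Finset.range j, d i ≤ 0 := by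
    intro j hj
    have hApos : ∀ i ∈ Finset.range j, 0 < A i :=
      fun i hi => (hpos i (lt_of_lt_of_le (Finset.mem_range.mp hi) hj)).1
    have hBpos : ∀ i ∈ Finset.range j, 0 < B i :=
      fun i hi => (hpos i (lt_of_lt_of_le (Finset.mem_range.mp hi) hj)).2
    have heq : ∑ i ∈ Finset.range j, d i =
        Real.log (∏ i ∈ Finset.range j, A i) - Real.log (∏ i ∈ Finset.range j, B i) := by
      rw [Real.log_prod fun i hi => ne_of_gt (hApos i hi),
        Real.log_prod fun i hi => ne_of_gt (hBpos i hi), ← Finset.sum_sub_distrib]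
    rw [heq, sub_nonpos]
    exact Real.log_le_log (Finset.prod_pos hApos) (hlog j hj)
  have habel := my_abel A d hA hA0 k hD
  have hsum : ∑ i ∈ Finset.range k, A i * d i ≤ 0 :=
    le_trans habel (mul_nonpos_of_nonneg_of_nonpos (hA0 k) (hD k le_rfl))
  have hpt : ∀ i ∈ Finset.range k, A i - B i ≤ A i * d i := by
    intro i hi
    obtain ⟨hAp, hBp⟩ := hpos i (Finset.mem_range.mp hi)
    have h1 : Real.log (B i / A i) ≤ B i / A i - 1 :=
      Real.log_le_sub_one_of_pos (div_pos hBp hAp)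
    rw [Real.log_div (ne_of_gt hBp) (ne_of_gt hAp)] at h1
    have h2 : A i * (Real.log (B i) - Real.log (A i)) ≤ A i * (B i / A i - 1) :=
      mul_le_mul_of_nonneg_left h1 hAp.le
    have h3 : A i * (B i / A i - 1) = B i - A i := by field_simp
    simp only [hd]
    nlinarith [h2, h3]
  have hle := Finset.sum_le_sum hpt
  rw [Finset.sum_sub_distrib] at hle
  linarith

private lemma my_key (A B : ℕ → ℝ) (hA : Antitone A) (hA0 : ∀ i, 0 ≤ A i)
    (hB0 : ∀ i, 0 ≤ B i) (k : ℕ)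
    (hlog : ∀ j ≤ k, ∏ i ∈ Finset.range j, A i ≤ ∏ i ∈ Finset.range j, B i) :
    ∑ i ∈ Finset.range k, A i ≤ ∑ i ∈ Finset.range k, B i := by
  by_cases hpos : ∀ i < k, 0 < A i ∧ 0 < B i
  · exact my_pos_case A B hA hA0 k hpos hlog
  · push_neg at hpos
    obtain ⟨i0, hi0k, hi0⟩ := hpos
    have hex : ∃ i, i < k ∧ ¬(0 < A i ∧ 0 < B i) :=
      ⟨i0, hi0k, fun h => by exact absurd (hi0 h.1) (not_le.mpr h.2)⟩
    classical
    obtain ⟨hmk, hmP⟩ := Nat.find_spec hex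
    set m := Nat.find hex with hm
    have hmin : ∀ i < m, 0 < A i ∧ 0 < B i := by
      intro i hi
      by_contra hcon
      exact Nat.find_min hex hi ⟨lt_trans hi hmk, hcon⟩
    have hAm : A m = 0 := by
      rcases not_and_or.mp hmP with h | h
      · exact le_antisymm (not_lt.mp h) (hA0 m)
      · have hBm : B m = 0 := le_antisymm (not_lt.mp h) (hB0 m)
        have hprod := hlog (m + 1) hmk
        rw [Finset.prod_range_succ, Finset.prod_range_succ, hBm, mul_zero] at hprod
        have hApos : 0 < ∏ i ∈ Finset.range m, A i :=
          Finset.prod_pos fun i hi => (hmin i (Finset.mem_range.mp hi)).1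
        by_contra hne
        have hApm : 0 < A m := lt_of_le_of_ne (hA0 m) (Ne.symm hne)
        nlinarith [mul_pos hApos hApm]
    have hzero : ∀ i, m ≤ i → A i = 0 :=
      fun i hi => le_antisymm (hAm ▸ hA hi) (hA0 i)
    have hsplit : ∑ i ∈ Finset.range k, A i = ∑ i ∈ Finset.range m, A i := by
      rw [← Finset.sum_range_add_sum_Ico A hmk.le,
        Finset.sum_eq_zero fun i hi => hzero i (Finset.mem_Ico.mp hi).1, add_zero]
    calc ∑ i ∈ Finset.range k, A i = ∑ i ∈ Finset.range m, A i := hsplit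
      _ ≤ ∑ i ∈ Finset.range m, B i :=
          my_pos_case A B hA hA0 m hmin fun j hj => hlog j (hj.trans hmk.le)
      _ ≤ ∑ i ∈ Finset.range k, B i :=
          Finset.sum_le_sum_of_subset_of_nonneg (Finset.range_subset_range.mpr hmk.le)
            fun i _ _ => hB0 i

/-- Weak log-majorization implies weak majorization for non-negative decreasing vectors. -/
theorem weak_majorization_of_weak_log_majorization {n : ℕ}
    (a b : Fin n → ℝ) (ha : Antitone a) (hb : Antitone b)
    (ha0 : ∀ i, 0 ≤ a i) (hb0 : ∀ i, 0 ≤ b i)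
    (hlog : ∀ k : ℕ, k ≤ n →
      ∏ i ∈ Finset.univ.filter (fun i : Fin n => (i : ℕ) < k), a i ≤
        ∏ i ∈ Finset.univ.filter (fun i : Fin n => (i : ℕ) < k), b i) :
    ∀ k : ℕ, k ≤ n →
      ∑ i ∈ Finset.univ.filter (fun i : Fin n => (i : ℕ) < k), a i ≤
        ∑ i ∈ Finset.univ.filter (fun i : Fin n => (i : ℕ) < k), b i := by
  classical
  intro k hk
  set A : ℕ → ℝ := fun i => if h : i < n then a ⟨i, h⟩ else 0 with hAdef
  set B : ℕ → ℝ := fun i => if h : i < n then b ⟨i, h⟩ else 0 with hBdef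
  have hFa : ∀ i : Fin n, A (i : ℕ) = a i := by
    intro i; simp only [hAdef, dif_pos i.isLt, Fin.eta]
  have hFb : ∀ i : Fin n, B (i : ℕ) = b i := by
    intro i; simp only [hBdef, dif_pos i.isLt, Fin.eta]
  have hA0 : ∀ i, 0 ≤ A i := by
    intro i; simp only [hAdef]; split
    · exact ha0 _
    · exact le_refl 0
  have hB0 : ∀ i, 0 ≤ B i := by
    intro i; simp only [hBdef]; split
    · exact hb0 _
    · exact le_refl 0
  have hAanti : Antitone A := by
    intro i j hij
    by_cases hj : j < n
    · have hi : i < n := lt_of_le_of_lt hij hj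
      simp only [hAdef, dif_pos hj, dif_pos hi]
      exact ha hij
    · have : A j = 0 := by simp only [hAdef, dif_neg hj]
      rw [this]; exact hA0 i
  have hlog' : ∀ j ≤ k, ∏ i ∈ Finset.range j, A i ≤ ∏ i ∈ Finset.range j, B i := by
    intro j hj
    rw [← my_prod_conv (hj.trans hk) a A hFa, ← my_prod_conv (hj.trans hk) b B hFb]
    exact hlog j (hj.trans hk)
  rw [my_sum_conv hk a A hFa, my_sum_conv hk b B hFb]
  exact my_key A B hAanti hA0 hB0 k hlog'
end

section
/- Let ψ be a symmetric gauge function on ℝ^n and 0 < α < 1. Then for all a, b ∈ [0,∞)^n, ψ(a₁b₁,…,a_nb_n) ≤ ψ(a₁^{1/(1−α)},…,a_n^{1/(1−α)})^{1−α} · ψ(b₁^{1/α},…,b_n^{1/α})^α. (Hölder inequality for symmetric gauge functions.) -/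
open Finset

section Aux

variable {n : ℕ} (ψ : (Fin n → ℝ) → ℝ)
  (ψ_add : ∀ x y, ψ (x + y) ≤ ψ x + ψ y)
  (ψ_smul : ∀ (c : ℝ) x, ψ (c • x) = |c| * ψ x)
  (ψ_sign : ∀ (ε x : Fin n → ℝ), (∀ i, ε i = 1 ∨ ε i = -1) →
      ψ (fun i => ε i * x i) = ψ x)

include ψ_smul in
theorem sg_zero : ψ 0 = 0 := by
  have := ψ_smul 0 0
  simpa using this

include ψ_add ψ_smul in
theorem sg_convex {lam mu : ℝ} (hl : 0 ≤ lam) (hm : 0 ≤ mu) (u v : Fin n → ℝ) :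
    ψ (lam • u + mu • v) ≤ lam * ψ u + mu * ψ v := by
  calc ψ (lam • u + mu • v) ≤ ψ (lam • u) + ψ (mu • v) := ψ_add _ _
  _ = lam * ψ u + mu * ψ v := by rw [ψ_smul, ψ_smul, abs_of_nonneg hl, abs_of_nonneg hm]

include ψ_add ψ_smul ψ_sign in
theorem sg_update_le (y : Fin n → ℝ) (j : Fin n) (c : ℝ) (hc0 : 0 ≤ c) (hcy : c ≤ y j) :
    ψ (Function.update y j c) ≤ ψ y := by
  rcases eq_or_lt_of_le (hc0.trans hcy) with h0 | hpos
  · have : c = y j := le_antisymm hcy (h0 ▸ hc0)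
    rw [this, Function.update_eq_self]
  · obtain ⟨lam, hl0, hl1, hlc⟩ :
        ∃ lam : ℝ, 0 ≤ lam ∧ lam ≤ 1 ∧ lam * (y j) + (1 - lam) * (-(y j)) = c := by
      refine ⟨(y j + c)/(2*(y j)), by positivity, ?_, ?_⟩
      · rw [div_le_one (by positivity)]; nlinarith
      · field_simp; ring
    set ε : Fin n → ℝ := fun i => if i = j then (-1 : ℝ) else 1 with hε
    have hεs : ∀ i, ε i = 1 ∨ ε i = -1 := by
      intro i; by_cases h : i = j <;> simp [hε, h]
    have key : Function.update y j c = lam • y + (1 - lam) • (fun i => ε i * y i) := by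
      funext i
      by_cases h : i = j
      · subst h
        have hεi : ε i = -1 := by simp [hε]
        simp only [Function.update_self, Pi.add_apply, Pi.smul_apply, smul_eq_mul, hεi]
        linear_combination -hlc
      · simp only [Function.update_of_ne h, Pi.add_apply, Pi.smul_apply, smul_eq_mul, hε,
          if_neg h]
        ring
    calc ψ (Function.update y j c) ≤ lam * ψ y + (1 - lam) * ψ (fun i => ε i * y i) := by
          rw [key]; exact sg_convex ψ ψ_add ψ_smul hl0 (by linarith) _ _
    _ = ψ y := by rw [ψ_sign ε y hεs]; ring

include ψ_add ψ_smul ψ_sign in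
theorem sg_mono (x y : Fin n → ℝ) (hx : ∀ i, 0 ≤ x i) (hxy : ∀ i, x i ≤ y i) :
    ψ x ≤ ψ y := by
  classical
  suffices H : ∀ (S : Finset (Fin n)) (x : Fin n → ℝ), (∀ i, 0 ≤ x i) → (∀ i, x i ≤ y i) →
      (∀ i ∉ S, x i = y i) → ψ x ≤ ψ y by
    exact H Finset.univ x hx hxy (fun i hi => absurd (Finset.mem_univ i) hi)
  intro S
  induction S using Finset.induction_on with
  | empty =>
    intro x hx hxy hout
    have : x = y := funext fun i => hout i (Finset.notMem_empty i)
    rw [this]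
  | @insert j S hj IH =>
    intro x hx hxy hout
    set z := Function.update x j (y j) with hz
    have hxz : x = Function.update z j (x j) := by
      funext i
      by_cases h : i = j
      · subst h; simp [hz]
      · simp [hz, Function.update_of_ne h]
    have h1 : ψ x ≤ ψ z := by
      rw [hxz]
      exact sg_update_le ψ ψ_add ψ_smul ψ_sign z j (x j) (hx j) (by simp [hz, hxy j])
    refine h1.trans (IH z (fun i => ?_) (fun i => ?_) (fun i hi => ?_))
    · by_cases h : i = j
      · simp only [hz, h, Function.update_self]; exact (hx j).trans (hxy j)
      · simpa [hz, Function.update_of_ne h] using hx i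
    · by_cases h : i = j
      · simp [hz, h]
      · simpa [hz, Function.update_of_ne h] using hxy i
    · by_cases h : i = j
      · simp [hz, h]
      · have hout' : x i = y i := hout i (by simp [h, hi])
        simp [hz, Function.update_of_ne h, hout']

end Aux

/-- Hölder inequality for symmetric gauge functions:
`ψ(a·b) ≤ ψ(a^{1/(1-α)})^{1-α} ψ(b^{1/α})^α`. -/
theorem symmetric_gauge_holder {n : ℕ}
    (ψ : (Fin n → ℝ) → ℝ)
    (ψ_add : ∀ x y, ψ (x + y) ≤ ψ x + ψ y)
    (ψ_smul : ∀ (c : ℝ) x, ψ (c • x) = |c| * ψ x)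
    (ψ_pos : ∀ x, x ≠ 0 → 0 < ψ x)
    (ψ_perm : ∀ (σ : Equiv.Perm (Fin n)) x, ψ (x ∘ σ) = ψ x)
    (ψ_sign : ∀ (ε x : Fin n → ℝ), (∀ i, ε i = 1 ∨ ε i = -1) →
      ψ (fun i => ε i * x i) = ψ x)
    (α : ℝ) (hα0 : 0 < α) (hα1 : α < 1)
    (a b : Fin n → ℝ) (ha : ∀ i, 0 ≤ a i) (hb : ∀ i, 0 ≤ b i) :
    ψ (fun i => a i * b i) ≤
      (ψ (fun i => a i ^ (1/(1-α)))) ^ (1-α) * (ψ (fun i => b i ^ (1/α))) ^ α := by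
  have h1α : (0:ℝ) < 1 - α := by linarith
  set p : ℝ := 1 / (1 - α) with hp
  set q : ℝ := 1 / α with hq
  have hp1 : 1 < p := by
    rw [hp, lt_div_iff₀ h1α]; linarith
  have hpq : p.HolderConjugate q := by
    rw [Real.holderConjugate_iff]; constructor
    · exact hp1
    · rw [hp, hq]; field_simp; ring
  have hppos : 0 < p := by linarith
  have hqpos : 0 < q := by rw [hq]; positivity
  set A := ψ (fun i => a i ^ p) with hA
  set B := ψ (fun i => b i ^ q) with hB
  have hψnonneg : ∀ x, 0 ≤ ψ x := by
    intro x
    have h0 : ψ 0 = 0 := sg_zero ψ ψ_smul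
    have := ψ_add x (-x)
    have hneg : ψ (-x) = ψ x := by
      have := ψ_smul (-1) x
      simpa using this
    have hsum : x + (-x) = 0 := by ring
    rw [hsum, h0, hneg] at this
    linarith
  have hA0 : 0 ≤ A := hψnonneg _
  have hB0 : 0 ≤ B := hψnonneg _
  -- degenerate cases
  by_cases hAz : A = 0
  · have haz : (fun i => a i ^ p) = 0 := by
      by_contra h
      exact absurd hAz (ne_of_gt (ψ_pos _ h))
    have ha0 : ∀ i, a i = 0 := by
      intro i
      have := congrFun haz i
      simp only [Pi.zero_apply] at this
      exact (Real.rpow_eq_zero (ha i) (ne_of_gt hppos)).mp this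
    have : (fun i => a i * b i) = 0 := by
      funext i; simp [ha0 i]
    rw [this, sg_zero ψ ψ_smul, hAz, Real.zero_rpow (ne_of_gt h1α), zero_mul]
  by_cases hBz : B = 0
  · have hbz : (fun i => b i ^ q) = 0 := by
      by_contra h
      exact absurd hBz (ne_of_gt (ψ_pos _ h))
    have hb0 : ∀ i, b i = 0 := by
      intro i
      have := congrFun hbz i
      simp only [Pi.zero_apply] at this
      exact (Real.rpow_eq_zero (hb i) (ne_of_gt hqpos)).mp this
    have : (fun i => a i * b i) = 0 := by
      funext i; simp [hb0 i]
    rw [this, sg_zero ψ ψ_smul, hBz, Real.zero_rpow (ne_of_gt hα0), mul_zero]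
  have hApos : 0 < A := lt_of_le_of_ne hA0 (Ne.symm hAz)
  have hBpos : 0 < B := lt_of_le_of_ne hB0 (Ne.symm hBz)
  -- general bound with scaling parameter s
  have key : ∀ s : ℝ, 0 < s →
      ψ (fun i => a i * b i) ≤ (1-α) * s^p * A + α * s^(-q) * B := by
    intro s hs
    have pointwise : ∀ i, a i * b i ≤
        (1-α) * s^p * (a i ^ p) + α * s^(-q) * (b i ^ q) := by
      intro i
      have hsinv : (0:ℝ) ≤ s⁻¹ := (inv_pos.mpr hs).le
      have heq : (s * a i) * (s⁻¹ * b i) = a i * b i := by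
        field_simp
      have hY2 : a i * b i ≤ (s * a i)^p / p + (s⁻¹ * b i)^q / q := by
        calc a i * b i = (s * a i) * (s⁻¹ * b i) := heq.symm
        _ ≤ _ := Real.young_inequality_of_nonneg (mul_nonneg hs.le (ha i))
            (mul_nonneg hsinv (hb i)) hpq
      have e1 : (s * a i)^p / p = (1-α) * s^p * (a i ^ p) := by
        rw [Real.mul_rpow hs.le (ha i), hp]
        have h1ne : (1:ℝ) - α ≠ 0 := ne_of_gt h1α
        field_simp
      have e2 : (s⁻¹ * b i)^q / q = α * s^(-q) * (b i ^ q) := by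
        rw [Real.mul_rpow hsinv (hb i), Real.inv_rpow hs.le, ← Real.rpow_neg hs.le, hq]
        have hαne : α ≠ 0 := ne_of_gt hα0
        field_simp
      rw [e1, e2] at hY2
      exact hY2
    have hmono := sg_mono ψ ψ_add ψ_smul ψ_sign (fun i => a i * b i)
      (fun i => (1-α) * s^p * (a i ^ p) + α * s^(-q) * (b i ^ q))
      (fun i => mul_nonneg (ha i) (hb i)) pointwise
    refine hmono.trans ?_
    have : (fun i => (1-α) * s^p * (a i ^ p) + α * s^(-q) * (b i ^ q)) =
        ((1-α) * s^p) • (fun i => a i ^ p) + (α * s^(-q)) • (fun i => b i ^ q) := by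
      funext i; simp [mul_comm]
    rw [this]
    calc ψ _ ≤ ((1-α) * s^p) * A + (α * s^(-q)) * B :=
      sg_convex ψ ψ_add ψ_smul (by positivity) (by positivity) _ _
    _ = (1-α) * s^p * A + α * s^(-q) * B := by ring
  -- choose optimal s
  set s : ℝ := (B / A) ^ (α * (1 - α)) with hs
  have hspos : 0 < s := Real.rpow_pos_of_pos (div_pos hBpos hApos) _
  have hsp : s ^ p * A = A ^ (1 - α) * B ^ α := by
    have hexp : α * (1 - α) * p = α := by
      rw [hp]
      field_simp
    rw [hs, ← Real.rpow_mul (div_pos hBpos hApos).le, hexp, Real.div_rpow hB0 hA0,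
      Real.rpow_sub hApos, Real.rpow_one]
    ring
  have hsq : s ^ (-q) * B = A ^ (1 - α) * B ^ α := by
    have hexp2 : α * (1 - α) * (-q) = -(1 - α) := by
      rw [hq]
      field_simp
    have hBα : B / B ^ (1 - α) = B ^ α := by
      rw [eq_comm, eq_div_iff (ne_of_gt (Real.rpow_pos_of_pos hBpos _)),
        ← Real.rpow_add hBpos]
      norm_num
    rw [hs, ← Real.rpow_mul (div_pos hBpos hApos).le, hexp2,
      Real.rpow_neg (div_pos hBpos hApos).le, Real.div_rpow hB0 hA0, inv_div,
      div_mul_eq_mul_div, mul_div_assoc, hBα]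
  have := key s hspos
  calc ψ (fun i => a i * b i) ≤ (1-α) * s^p * A + α * s^(-q) * B := this
  _ = (1-α) * (A ^ (1-α) * B ^ α) + α * (A ^ (1-α) * B ^ α) := by
      rw [mul_assoc, mul_assoc, hsp, hsq]
  _ = A ^ (1-α) * B ^ α := by ring
end

section
/- Let E be an orthogonal projection in M_n, A ∈ M_n⁺ positive definite, 0 < α < 1, and p ≥ 0. Then A^p #_α E = (E A^{−p} E)^{α−1}, where the power (α−1) is taken of the compression E A^{−p} E restricted to the range of E (generalized inverse sense). -/
open Matrix Finset
open scoped ComplexOrder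

section helpers
open Polynomial

lemma continuousOn_of_finite (f : ℝ → ℝ) {s : Set ℝ} (hs : s.Finite) : ContinuousOn f s := by
  rw [continuousOn_iff_continuous_restrict]
  have := hs.to_subtype
  exact continuous_of_discreteTopology

lemma contOnSpec {n : ℕ} (f : ℝ → ℝ) (M : Matrix (Fin n) (Fin n) ℂ) :
    ContinuousOn f (spectrum ℝ M) :=
  continuousOn_of_finite f (finite_real_spectrum (A := M))

lemma exists_interp (s : Finset ℝ) (f : ℝ → ℝ) :
    ∃ q : ℝ[X], ∀ x ∈ s, q.eval x = f x :=
  ⟨Lagrange.interpolate s id f, fun x hx =>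
    Lagrange.eval_interpolate_at_node f (Set.injOn_id _) hx⟩

lemma aeval_semiconj {R A : Type*} [CommSemiring R] [Semiring A] [Algebra R A]
    {a b x : A} (h : x * a = b * x) (q : R[X]) :
    x * Polynomial.aeval a q = Polynomial.aeval b q * x := by
  induction q using Polynomial.induction_on' with
  | add p q hp hq => simp only [map_add, mul_add, add_mul, hp, hq]
  | monomial k c =>
    have hpow : ∀ m : ℕ, x * a ^ m = b ^ m * x := by
      intro m; induction m with
      | zero => simp
      | succ m ih => rw [pow_succ, ← mul_assoc, ih, mul_assoc, h, ← mul_assoc, ← pow_succ]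
    simp only [Polynomial.aeval_monomial]
    rw [← mul_assoc, ← Algebra.commutes c x, mul_assoc, hpow, ← mul_assoc, mul_assoc]

lemma isHerm_of_sa {n : ℕ} {M : Matrix (Fin n) (Fin n) ℂ} (h : IsSelfAdjoint M) :
    M.IsHermitian := h

lemma cfc_eq_aeval {n : ℕ} {M : Matrix (Fin n) (Fin n) ℂ} (hM : IsSelfAdjoint M)
    (f : ℝ → ℝ) (q : ℝ[X]) (h : ∀ x ∈ spectrum ℝ M, f x = q.eval x) :
    cfc f M = Polynomial.aeval M q := by
  rw [cfc_congr h, cfc_polynomial q M hM]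

/-- Intertwining: `Cᴴ g(C Cᴴ) C = (fun x => g x * x)(Cᴴ C)`. -/
lemma conjTranspose_cfc_mul {n : ℕ} (C : Matrix (Fin n) (Fin n) ℂ) (g : ℝ → ℝ) :
    Cᴴ * cfc g (C * Cᴴ) * C = cfc (fun x => g x * x) (Cᴴ * C) := by
  have h1 : IsSelfAdjoint (C * Cᴴ) := (posSemidef_self_mul_conjTranspose C).1.isSelfAdjoint
  have h2 : IsSelfAdjoint (Cᴴ * C) := (posSemidef_conjTranspose_mul_self C).1.isSelfAdjoint
  obtain ⟨q, hq⟩ := exists_interp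
    ((finite_real_spectrum (A := C * Cᴴ)).toFinset ∪
      (finite_real_spectrum (A := Cᴴ * C)).toFinset) g
  rw [cfc_eq_aeval h1 g q (fun x hx => (hq x (Finset.mem_union_left _
    ((Set.Finite.mem_toFinset _).2 hx))).symm)]
  rw [cfc_eq_aeval h2 _ (q * X) (fun x hx => by
    rw [Polynomial.eval_mul, eval_X, hq x (Finset.mem_union_right _ ((Set.Finite.mem_toFinset _).2 hx))])]
  have hsc : Cᴴ * (C * Cᴴ) = (Cᴴ * C) * Cᴴ := by rw [mul_assoc]
  rw [aeval_semiconj hsc q, _root_.map_mul, Polynomial.aeval_X, mul_assoc]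

/-- Range lemma: if `f 0 = 0` and `E N = N E = N` then `E f(N) E = f(N)`. -/
lemma proj_cfc_proj {n : ℕ} {E N : Matrix (Fin n) (Fin n) ℂ} (hN : IsSelfAdjoint N)
    (hEN : E * N = N) (hNE : N * E = N) (f : ℝ → ℝ) (hf : f 0 = 0) :
    E * cfc f N * E = cfc f N := by
  obtain ⟨q, hq⟩ := exists_interp (insert 0 (finite_real_spectrum (A := N)).toFinset) f
  have h0 : q.coeff 0 = 0 := by
    rw [Polynomial.coeff_zero_eq_eval_zero, hq 0 (Finset.mem_insert_self _ _), hf]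
  obtain ⟨r, hr⟩ := Polynomial.X_dvd_iff.mpr h0
  rw [cfc_eq_aeval hN f q (fun x hx => (hq x (Finset.mem_insert_of_mem
    ((Set.Finite.mem_toFinset _).2 hx))).symm)]
  have e1 : Polynomial.aeval N q = N * Polynomial.aeval N r := by
    rw [hr, _root_.map_mul, Polynomial.aeval_X]
  have e2 : Polynomial.aeval N q = Polynomial.aeval N r * N := by
    rw [hr, mul_comm X r, _root_.map_mul, Polynomial.aeval_X]
  calc E * Polynomial.aeval N q * E = (E * N) * Polynomial.aeval N r * E := by
        rw [e1, mul_assoc E N _]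
    _ = Polynomial.aeval N r * N * E := by rw [hEN, ← e1, e2]
    _ = Polynomial.aeval N q := by rw [mul_assoc, hNE, ← e2]

lemma cfcH_eq {n : ℕ} {M : Matrix (Fin n) (Fin n) ℂ} (hM : M.IsHermitian) (f : ℝ → ℝ) :
    cfcH f M = cfc f M := by
  rw [cfcH, dif_pos hM]; exact (hM.cfc_eq f).symm

end helpers

/-- `A^p #_α E = (E A^{-p} E)^{α-1}` where the power `α-1` is taken on the range of `E`
(zero on the kernel, as given by the functional calculus with `0^{α-1} = 0`). -/
theorem gmean_projection_power {n : ℕ}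
    (A E : Matrix (Fin n) (Fin n) ℂ) (hA : A.PosDef)
    (hE : E.IsHermitian) (hE2 : E * E = E)
    (α : ℝ) (hα0 : 0 < α) (hα1 : α < 1) (p : ℝ) (hp : 0 ≤ p) :
    gmean α (mpow A p) E = cfcH (fun x : ℝ => x ^ (α - 1)) (E * mpow A (-p) * E) := by
  have hAH : A.IsHermitian := hA.isHermitian
  have hASA : IsSelfAdjoint A := hAH.isSelfAdjoint
  have hspecA : ∀ x ∈ spectrum ℝ A, (0:ℝ) < x := by
    intro x hx
    rw [hAH.spectrum_real_eq_range_eigenvalues] at hx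
    obtain ⟨i, rfl⟩ := hx
    exact hA.eigenvalues_pos i
  set B := cfc (fun x : ℝ => x ^ p) A with hBdef
  have hmpowp : mpow A p = B := by unfold mpow; exact cfcH_eq hAH _
  have hBsa : IsSelfAdjoint B := cfc_predicate _ A
  have hBH : B.IsHermitian := hBsa
  have hspecB : ∀ x ∈ spectrum ℝ B, (0:ℝ) < x := by
    intro x hx
    rw [hBdef, cfc_map_spectrum _ _ hASA (contOnSpec _ A)] at hx
    obtain ⟨y, hy, rfl⟩ := hx
    exact Real.rpow_pos_of_pos (hspecA y hy) p
  set S := cfc (fun x : ℝ => x ^ (-(1/2) : ℝ)) B with hSdef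
  set T := cfc (fun x : ℝ => x ^ (1/2 : ℝ)) B with hTdef
  have hSsa : IsSelfAdjoint S := cfc_predicate _ B
  have hS' : mpow B (-(1/2)) = S := by
    unfold mpow; exact (cfcH_eq hBH _).trans hSdef.symm
  have hT' : mpow B (1/2) = T := by
    unfold mpow; exact (cfcH_eq hBH _).trans hTdef.symm
  have hST : S * T = 1 := by
    rw [hSdef, hTdef, ← cfc_mul _ _ B (contOnSpec _ B) (contOnSpec _ B),
      cfc_congr (g := fun _ : ℝ => 1) (fun x hx => by
        rw [← Real.rpow_add (hspecB x hx)]; norm_num),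
      cfc_const_one ℝ B]
  have hTS : T * S = 1 := by
    rw [hSdef, hTdef, ← cfc_mul _ _ B (contOnSpec _ B) (contOnSpec _ B),
      cfc_congr (g := fun _ : ℝ => 1) (fun x hx => by
        rw [← Real.rpow_add (hspecB x hx)]; norm_num),
      cfc_const_one ℝ B]
  have hM' : mpow A (-p) = cfc (fun x : ℝ => x ^ (-p)) A := by
    unfold mpow; exact cfcH_eq hAH _
  have hSS : S * S = cfc (fun x : ℝ => x ^ (-p)) A := by
    rw [hSdef, ← cfc_mul _ _ B (contOnSpec _ B) (contOnSpec _ B),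
      cfc_congr (g := fun x : ℝ => x ^ (-1 : ℝ)) (fun x hx => by
        rw [← Real.rpow_add (hspecB x hx)]; norm_num),
      hBdef, ← cfc_comp (fun x : ℝ => x ^ (-1 : ℝ)) (fun x : ℝ => x ^ p) A hASA
        (continuousOn_of_finite _ ((finite_real_spectrum (A := A)).image _)) (contOnSpec _ A)]
    exact cfc_congr fun x hx => by
      show ((x : ℝ) ^ p) ^ (-1 : ℝ) = x ^ (-p)
      rw [← Real.rpow_mul (hspecA x hx).le, mul_neg_one]
  set C := E * S with hCdef
  have hCH : Cᴴ = S * E := by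
    rw [hCdef, conjTranspose_mul, (isHerm_of_sa hSsa).eq, hE.eq]
  have hX : Cᴴ * C = S * E * S := by
    rw [hCH, hCdef, mul_assoc S E (E * S), ← mul_assoc E E S, hE2, ← mul_assoc]
  have hY : C * Cᴴ = E * cfc (fun x : ℝ => x ^ (-p)) A * E := by
    rw [hCH, hCdef, mul_assoc E S (S * E), ← mul_assoc S S E, hSS, ← mul_assoc]
  have hXsa : IsSelfAdjoint (Cᴴ * C) := (posSemidef_conjTranspose_mul_self C).1.isSelfAdjoint
  have hYsa : IsSelfAdjoint (C * Cᴴ) := (posSemidef_self_mul_conjTranspose C).1.isSelfAdjoint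
  have hEY : E * (C * Cᴴ) = C * Cᴴ := by
    rw [hY]; simp only [← mul_assoc, hE2]
  have hYE : (C * Cᴴ) * E = C * Cᴴ := by
    rw [hY]; simp only [mul_assoc, hE2]
  have hspecX : ∀ x ∈ spectrum ℝ (Cᴴ * C), (0:ℝ) ≤ x := by
    intro x hx
    rw [(isHerm_of_sa hXsa).spectrum_real_eq_range_eigenvalues] at hx
    obtain ⟨i, rfl⟩ := hx
    exact (posSemidef_conjTranspose_mul_self C).eigenvalues_nonneg i
  have key : cfc (fun x : ℝ => x ^ α) (Cᴴ * C) =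
      Cᴴ * cfc (fun x : ℝ => x ^ (α - 1)) (C * Cᴴ) * C := by
    rw [conjTranspose_cfc_mul C (fun x : ℝ => x ^ (α - 1))]
    exact cfc_congr fun x hx => by
      rcases eq_or_lt_of_le (hspecX x hx) with h | h
      · simp only [← h, Real.zero_rpow hα0.ne',
          Real.zero_rpow (ne_of_lt (by linarith : α - 1 < 0)), mul_zero]
      · show x ^ α = x ^ (α - 1) * x
        rw [show α = α - 1 + 1 by ring, Real.rpow_add h, Real.rpow_one]
        ring_nf
  have hTC : T * Cᴴ = E := by rw [hCH, ← mul_assoc, hTS, one_mul]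
  have hCT : C * T = E := by rw [hCdef, mul_assoc, hST, mul_one]
  have hf0 : (0:ℝ) ^ (α - 1) = 0 := Real.zero_rpow (ne_of_lt (by linarith : α - 1 < 0))
  unfold gmean
  rw [hmpowp, hS', hT', cfcH_eq (isHerm_of_sa (hX ▸ hXsa)) _, hM',
    cfcH_eq (isHerm_of_sa (hY ▸ hYsa)) _, ← hX, ← hY, key]
  calc T * (Cᴴ * cfc (fun x : ℝ => x ^ (α - 1)) (C * Cᴴ) * C) * T
      = (T * Cᴴ) * cfc (fun x : ℝ => x ^ (α - 1)) (C * Cᴴ) * (C * T) := by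
        simp only [mul_assoc]
    _ = E * cfc (fun x : ℝ => x ^ (α - 1)) (C * Cᴴ) * E := by rw [hTC, hCT]
    _ = cfc (fun x : ℝ => x ^ (α - 1)) (C * Cᴴ) := proj_cfc_proj hYsa hEY hYE _ hf0
end
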